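/- arXiv:2312.11963 — 14 statements merged into one kernel-verified Lean document; each statement's English description precedes it below -/
import Mathlib

section
/- Let G = (V,E) be a finite simple graph and let A ⊆ V be a globally minimal defensive alliance of G. Then the subgraph of G induced by A is connected. -/
/-- `degIn G X v` is the number of neighbors of `v` lying in the set `X`
(denoted `deg_X(v)` in the paper). -/
noncomputable def degIn {V : Type*} (G : SimpleGraph V) (X : Set V) (v : V) : ℕ :=
  {u | u ∈ X ∧ G.Adj v u}.ncard

/-- `A` is a defensive alliance of `G`: every `v ∈ A` satisfies
`deg_A(v) + 1 ≥ deg_{V∖A}(v)`. -/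
def IsDefensiveAlliance {V : Type*} (G : SimpleGraph V) (A : Set V) : Prop :=
  ∀ v ∈ A, degIn G A v + 1 ≥ degIn G Aᶜ v

/-- A nonempty defensive alliance is globally minimal if no nonempty proper
subset is a defensive alliance. -/
def IsGloballyMinimalDA {V : Type*} (G : SimpleGraph V) (A : Set V) : Prop :=
  A.Nonempty ∧ IsDefensiveAlliance G A ∧
    ∀ B : Set V, B ⊂ A → B.Nonempty → ¬ IsDefensiveAlliance G B

/-- A nonempty defensive alliance is locally minimal if for every `v ∈ A`,
the set `A ∖ {v}` is not a nonempty defensive alliance. -/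
def IsLocallyMinimalDA {V : Type*} (G : SimpleGraph V) (A : Set V) : Prop :=
  A.Nonempty ∧ IsDefensiveAlliance G A ∧
    ∀ v ∈ A, ¬ ((A \ {v}).Nonempty ∧ IsDefensiveAlliance G (A \ {v}))

/-- Every globally minimal defensive alliance of a finite simple
graph induces a connected subgraph. -/
theorem globallyMinimalDA_induce_connected {V : Type*} [Fintype V]
    (G : SimpleGraph V) (A : Set V) (hA : IsGloballyMinimalDA G A) :
    (G.induce A).Connected := by
  obtain ⟨hne, hDA, hmin⟩ := hA
  rw [SimpleGraph.connected_iff]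
  refine ⟨?_, hne.to_subtype⟩
  intro x y
  by_contra hxy
  set B : Set V := Subtype.val '' {u : A | (G.induce A).Reachable x u} with hB
  have hBA : B ⊆ A := by rintro _ ⟨u, _, rfl⟩; exact u.2
  have hxB : (x : V) ∈ B := ⟨x, SimpleGraph.Reachable.refl x, rfl⟩
  have hyB : (y : V) ∉ B := by
    rintro ⟨u, hu, huv⟩
    exact hxy (Subtype.ext huv ▸ hu)
  have hclose : ∀ w ∈ B, ∀ u, u ∈ A → G.Adj w u → u ∈ B := by
    rintro _ ⟨w, hw, rfl⟩ u hu hadj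
    exact ⟨⟨u, hu⟩, hw.trans (SimpleGraph.Adj.reachable hadj), rfl⟩
  have hdeg : ∀ w ∈ B, {u | u ∈ B ∧ G.Adj w u} = {u | u ∈ A ∧ G.Adj w u} := by
    intro w hw
    ext u
    exact ⟨fun ⟨h1, h2⟩ => ⟨hBA h1, h2⟩, fun ⟨h1, h2⟩ => ⟨hclose w hw u h1 h2, h2⟩⟩
  have hdegc : ∀ w ∈ B, {u | u ∈ Bᶜ ∧ G.Adj w u} = {u | u ∈ Aᶜ ∧ G.Adj w u} := by
    intro w hw
    ext u
    constructor
    · rintro ⟨h1, h2⟩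
      refine ⟨fun hu => h1 (hclose w hw u hu h2), h2⟩
    · rintro ⟨h1, h2⟩
      exact ⟨fun hu => h1 (hBA hu), h2⟩
  have hBDA : IsDefensiveAlliance G B := by
    intro w hw
    unfold degIn
    rw [hdeg w hw, hdegc w hw]
    exact hDA w (hBA hw)
  exact hmin B ⟨hBA, fun h => hyB (h y.2)⟩ ⟨x, hxB⟩ hBDA
end

section
/- For every n ≥ 3, the path P_n has exactly n − 1 globally minimal defensive alliances. -/
open SimpleGraph Set

namespace PathGM

variable {n : ℕ}

lemma mk_eq_mk {a b : ℕ} (h : a < n) (h' : b < n) (hab : a = b) :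
    (⟨a, h⟩ : Fin n) = ⟨b, h'⟩ := Fin.ext hab

lemma mk_eq {a : ℕ} (h : a < n) (v : Fin n) (hab : a = v.val) :
    (⟨a, h⟩ : Fin n) = v := Fin.ext hab

lemma mk_eq_val {a : ℕ} {h : a < n} {v : Fin n} (he : (⟨a, h⟩ : Fin n) = v) : a = v.val :=
  congrArg Fin.val he

/-- degree into a set at an endpoint is at most 1. -/
lemma deg_endpoint_le (hn : 3 ≤ n) (X : Set (Fin n)) (v : Fin n)
    (hv : v.val = 0 ∨ v.val = n - 1) : degIn (pathGraph n) X v ≤ 1 := by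
  rcases hv with hv | hv
  · have hsub : {u : Fin n | u ∈ X ∧ (pathGraph n).Adj v u} ⊆ {(⟨1, by omega⟩ : Fin n)} := by
      rintro u ⟨-, hadj⟩
      rw [pathGraph_adj] at hadj
      have : u.val = 1 := by omega
      simp only [Set.mem_singleton_iff]
      exact Fin.ext this
    calc degIn (pathGraph n) X v ≤ ({(⟨1, by omega⟩ : Fin n)} : Set (Fin n)).ncard :=
          Set.ncard_le_ncard hsub (Set.toFinite _)
      _ = 1 := Set.ncard_singleton _
  · have hsub : {u : Fin n | u ∈ X ∧ (pathGraph n).Adj v u} ⊆ {(⟨n - 2, by omega⟩ : Fin n)} := by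
      rintro u ⟨-, hadj⟩
      rw [pathGraph_adj] at hadj
      have hu : u.val < n := u.isLt
      have : u.val = n - 2 := by omega
      simp only [Set.mem_singleton_iff]
      exact Fin.ext this
    calc degIn (pathGraph n) X v ≤ ({(⟨n - 2, by omega⟩ : Fin n)} : Set (Fin n)).ncard :=
          Set.ncard_le_ncard hsub (Set.toFinite _)
      _ = 1 := Set.ncard_singleton _

/-- the defensive condition at an internal vertex. -/
lemma internal_cond (A : Set (Fin n)) (v : Fin n) (ha : 0 < v.val) (hb : v.val + 1 < n) :
    (degIn (pathGraph n) A v + 1 ≥ degIn (pathGraph n) Aᶜ v) ↔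
      ((⟨v.val - 1, by omega⟩ : Fin n) ∈ A ∨ (⟨v.val + 1, hb⟩ : Fin n) ∈ A) := by
  set a : Fin n := ⟨v.val - 1, by omega⟩ with ha'
  set b : Fin n := ⟨v.val + 1, hb⟩ with hb'
  have hab : a ≠ b := by
    simp only [ha', hb', Ne, Fin.mk.injEq]
    omega
  have hav : a.val = v.val - 1 := rfl
  have hbv : b.val = v.val + 1 := rfl
  have hadj : ∀ u : Fin n, (pathGraph n).Adj v u ↔ u = a ∨ u = b := by
    intro u
    rw [pathGraph_adj]
    constructor
    · rintro (h | h)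
      · right; exact Fin.ext (by omega)
      · left; exact Fin.ext (by omega)
    · rintro (rfl | rfl)
      · right; omega
      · left; omega
  have hadja : (pathGraph n).Adj v a := (hadj a).2 (Or.inl rfl)
  have hadjb : (pathGraph n).Adj v b := (hadj b).2 (Or.inr rfl)
  constructor
  · intro h
    by_contra hcon
    push_neg at hcon
    obtain ⟨hna, hnb⟩ := hcon
    have h1 : {u : Fin n | u ∈ A ∧ (pathGraph n).Adj v u} = ∅ := by
      ext u
      simp only [Set.mem_setOf_eq, Set.mem_empty_iff_false, iff_false, not_and]
      intro hu hadju
      rcases (hadj u).1 hadju with rfl | rfl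
      · exact hna hu
      · exact hnb hu
    have h2 : {u : Fin n | u ∈ Aᶜ ∧ (pathGraph n).Adj v u} = {a, b} := by
      ext u
      simp only [Set.mem_setOf_eq, Set.mem_insert_iff, Set.mem_singleton_iff, Set.mem_compl_iff]
      constructor
      · rintro ⟨-, hadju⟩; exact (hadj u).1 hadju
      · rintro (rfl | rfl)
        · exact ⟨hna, hadja⟩
        · exact ⟨hnb, hadjb⟩
    rw [degIn, degIn, h1, h2, Set.ncard_empty, Set.ncard_pair hab] at h
    omega
  · intro h
    have h1 : 1 ≤ degIn (pathGraph n) A v := by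
      rw [degIn]
      refine (Set.ncard_pos (Set.toFinite _)).2 ?_
      rcases h with h | h
      · exact ⟨a, h, hadja⟩
      · exact ⟨b, h, hadjb⟩
    have h2 : degIn (pathGraph n) Aᶜ v ≤ 2 := by
      have hsub : {u : Fin n | u ∈ Aᶜ ∧ (pathGraph n).Adj v u} ⊆ {a, b} := by
        rintro u ⟨-, hadju⟩
        exact (hadj u).1 hadju
      calc degIn (pathGraph n) Aᶜ v ≤ ({a, b} : Set (Fin n)).ncard :=
            Set.ncard_le_ncard hsub (Set.toFinite _)
        _ = 2 := Set.ncard_pair hab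
    omega

/-- an endpoint singleton is a globally minimal DA. -/
lemma singleton_GMDA (hn : 3 ≤ n) (v : Fin n) (hv : v.val = 0 ∨ v.val = n - 1) :
    IsGloballyMinimalDA (pathGraph n) {v} := by
  refine ⟨Set.singleton_nonempty v, ?_, ?_⟩
  · intro w hw
    rw [Set.mem_singleton_iff] at hw
    subst hw
    have := deg_endpoint_le hn ({w} : Set (Fin n))ᶜ w hv
    omega
  · intro B hB hBne _
    rw [Set.ssubset_singleton_iff] at hB
    exact hBne.ne_empty hB

/-- an internal adjacent pair is a globally minimal DA. -/
lemma pair_GMDA (i : ℕ) (h1 : 1 ≤ i) (h2 : i + 3 ≤ n) :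
    IsGloballyMinimalDA (pathGraph n)
      {(⟨i, by omega⟩ : Fin n), (⟨i + 1, by omega⟩ : Fin n)} := by
  set a : Fin n := ⟨i, by omega⟩ with ha'
  set b : Fin n := ⟨i + 1, by omega⟩ with hb'
  have hav : a.val = i := rfl
  have hbv : b.val = i + 1 := rfl
  refine ⟨⟨a, Set.mem_insert a _⟩, ?_, ?_⟩
  · rintro u hu
    rcases hu with rfl | rfl
    · rw [internal_cond _ a (by omega) (by omega)]
      refine Or.inr ?_
      have he : (⟨a.val + 1, by omega⟩ : Fin n) = b := mk_eq _ _ (by omega)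
      rw [he]
      exact Set.mem_insert_of_mem _ rfl
    · rw [internal_cond _ b (by omega) (by omega)]
      refine Or.inl ?_
      have he : (⟨b.val - 1, by omega⟩ : Fin n) = a := mk_eq _ _ (by omega)
      rw [he]
      exact Set.mem_insert a _
  · intro B hB hBne hBDA
    obtain ⟨v, hv⟩ := hBne
    have hBsub := hB.1
    have hnotboth : ¬ (a ∈ B ∧ b ∈ B) := by
      rintro ⟨haB, hbB⟩
      exact hB.2 (by rintro u (rfl | rfl) <;> assumption)
    have hvab : v = a ∨ v = b := hBsub hv
    rcases hvab with rfl | rfl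
    · have hc := hBDA a hv
      rw [internal_cond _ a (by omega) (by omega)] at hc
      rcases hc with h | h
      · rcases hBsub h with h' | h' <;>
          · have := mk_eq_val h'; omega
      · have he : (⟨a.val + 1, by omega⟩ : Fin n) = b := mk_eq _ _ (by omega)
        rw [he] at h
        exact hnotboth ⟨hv, h⟩
    · have hc := hBDA b hv
      rw [internal_cond _ b (by omega) (by omega)] at hc
      rcases hc with h | h
      · have he : (⟨b.val - 1, by omega⟩ : Fin n) = a := mk_eq _ _ (by omega)
        rw [he] at h
        exact hnotboth ⟨h, hv⟩
      · rcases hBsub h with h' | h' <;>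
          · have := mk_eq_val h'; omega

/-- the enumeration of globally minimal DAs of the path. -/
def g (n : ℕ) (hn : 3 ≤ n) (k : Fin (n - 1)) : Set (Fin n) :=
  if k.val = 0 then {(⟨0, by omega⟩ : Fin n)}
  else if k.val = n - 2 then {(⟨n - 1, by omega⟩ : Fin n)}
  else {(⟨k.val, by have := k.isLt; omega⟩ : Fin n),
        (⟨k.val + 1, by have := k.isLt; omega⟩ : Fin n)}

lemma g_inj (hn : 3 ≤ n) : Function.Injective (g n hn) := by
  intro k1 k2 h
  have hk1 := k1.isLt
  have hk2 := k2.isLt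
  unfold g at h
  apply Fin.ext
  split_ifs at h <;> rw [Set.ext_iff] at h
  · omega
  · have := (h ⟨0, by omega⟩).1 rfl
    simp only [Set.mem_singleton_iff, Fin.mk.injEq] at this
    omega
  · have := (h ⟨0, by omega⟩).1 rfl
    simp only [Set.mem_insert_iff, Set.mem_singleton_iff, Fin.mk.injEq] at this
    omega
  · have := (h ⟨n - 1, by omega⟩).1 rfl
    simp only [Set.mem_singleton_iff, Fin.mk.injEq] at this
    omega
  · omega
  · have := (h ⟨n - 1, by omega⟩).1 rfl
    simp only [Set.mem_insert_iff, Set.mem_singleton_iff, Fin.mk.injEq] at this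
    omega
  · have := (h ⟨k1.val, by omega⟩).1 (Or.inl rfl)
    simp only [Set.mem_singleton_iff, Fin.mk.injEq] at this
    omega
  · have := (h ⟨k1.val, by omega⟩).1 (Or.inl rfl)
    simp only [Set.mem_singleton_iff, Fin.mk.injEq] at this
    omega
  · have e1 := (h ⟨k1.val, by omega⟩).1 (Or.inl rfl)
    have e2 := (h ⟨k2.val, by omega⟩).2 (Or.inl rfl)
    simp only [Set.mem_insert_iff, Set.mem_singleton_iff, Fin.mk.injEq] at e1 e2
    omega

lemma classification (hn : 3 ≤ n) :
    {A : Set (Fin n) | IsGloballyMinimalDA (pathGraph n) A} = Set.range (g n hn) := by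
  ext A
  simp only [Set.mem_setOf_eq, Set.mem_range]
  constructor
  · rintro ⟨hne, hDA, hmin⟩
    have hforce : ∀ B : Set (Fin n), B ⊆ A → B.Nonempty →
        IsDefensiveAlliance (pathGraph n) B → A = B := by
      intro B hsub hBne hBDA
      by_contra hne'
      exact hmin B ⟨hsub, fun h' => hne' (Set.Subset.antisymm h' hsub)⟩ hBne hBDA
    by_cases h0 : (⟨0, by omega⟩ : Fin n) ∈ A
    · refine ⟨⟨0, by omega⟩, ?_⟩
      have hg : g n hn ⟨0, by omega⟩ = {(⟨0, by omega⟩ : Fin n)} := by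
        unfold g; simp
      rw [hg]
      exact (hforce _ (Set.singleton_subset_iff.2 h0) (Set.singleton_nonempty _)
        (singleton_GMDA hn _ (Or.inl rfl)).2.1).symm
    · by_cases hl : (⟨n - 1, by omega⟩ : Fin n) ∈ A
      · refine ⟨⟨n - 2, by omega⟩, ?_⟩
        have hg : g n hn ⟨n - 2, by omega⟩ = {(⟨n - 1, by omega⟩ : Fin n)} := by
          unfold g
          rw [if_neg (fun h => (by omega : n - 2 ≠ 0) h), if_pos rfl]
        rw [hg]
        exact (hforce _ (Set.singleton_subset_iff.2 hl) (Set.singleton_nonempty _)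
          (singleton_GMDA hn _ (Or.inr rfl)).2.1).symm
      · obtain ⟨v, hv⟩ := hne
        have hv0 : v.val ≠ 0 := by
          intro h
          apply h0
          have he : (⟨0, by omega⟩ : Fin n) = v := mk_eq _ _ h.symm
          rwa [he]
        have hvl : v.val ≠ n - 1 := by
          intro h
          apply hl
          have he : (⟨n - 1, by omega⟩ : Fin n) = v := mk_eq _ _ h.symm
          rwa [he]
        have hvlt := v.isLt
        have hcond := hDA v hv
        rw [internal_cond A v (by omega) (by omega)] at hcond
        -- produce an adjacent pair inside A
        have hpair : ∃ i : ℕ, ∃ (hi1 : i < n) (hi2 : i + 1 < n),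
            (⟨i, hi1⟩ : Fin n) ∈ A ∧ (⟨i + 1, hi2⟩ : Fin n) ∈ A := by
          rcases hcond with h | h
          · refine ⟨v.val - 1, by omega, by omega, h, ?_⟩
            have he : (⟨v.val - 1 + 1, by omega⟩ : Fin n) = v := mk_eq _ _ (by omega)
            rw [he]; exact hv
          · exact ⟨v.val, by omega, by omega, hv, h⟩
        obtain ⟨i, hi1, hi2, hiA, hi1A⟩ := hpair
        have hine0 : i ≠ 0 := by
          rintro rfl
          exact h0 hiA
        have hinel : i + 1 ≠ n - 1 := by
          intro h
          apply hl
          have he : (⟨i + 1, hi2⟩ : Fin n) = ⟨n - 1, by omega⟩ := mk_eq_mk _ _ h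
          rwa [he] at hi1A
        have hi3 : i + 3 ≤ n := by omega
        refine ⟨⟨i, by omega⟩, ?_⟩
        have hg : g n hn ⟨i, by omega⟩ =
            {(⟨i, by omega⟩ : Fin n), (⟨i + 1, by omega⟩ : Fin n)} := by
          unfold g
          rw [if_neg (fun h => hine0 h), if_neg (fun h => (by omega : i ≠ n - 2) h)]
        rw [hg]
        refine (hforce _ ?_ ⟨_, Set.mem_insert _ _⟩ (pair_GMDA i (by omega) hi3).2.1).symm
        rintro u (rfl | rfl)
        · exact hiA
        · exact hi1A
  · rintro ⟨k, rfl⟩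
    have hk := k.isLt
    unfold g
    split_ifs with h1 h2
    · exact singleton_GMDA hn _ (Or.inl rfl)
    · exact singleton_GMDA hn _ (Or.inr rfl)
    · exact pair_GMDA k.val (by omega) (by omega)

end PathGM

/-- For every `n ≥ 3`, the path `P_n` has exactly `n - 1`
globally minimal defensive alliances. -/
theorem card_globallyMinimalDA_pathGraph (n : ℕ) (hn : 3 ≤ n) :
    Nat.card {A : Set (Fin n) // IsGloballyMinimalDA (SimpleGraph.pathGraph n) A} =
      n - 1 := by
  have h1 : Nat.card {A : Set (Fin n) // IsGloballyMinimalDA (SimpleGraph.pathGraph n) A} =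
      ({A : Set (Fin n) | IsGloballyMinimalDA (SimpleGraph.pathGraph n) A}).ncard :=
    Nat.card_coe_set_eq _
  rw [h1, PathGM.classification hn, ← Set.image_univ,
    Set.ncard_image_of_injective _ (PathGM.g_inj hn), Set.ncard_univ, Nat.card_eq_fintype_card,
    Fintype.card_fin]
end

section
/- Let n > 2 and let G be the complete bipartite graph K_{2,n−2} with parts {u_1,u_2} and {v_1,…,v_{n−2}}. For every subset A′ ⊆ {v_1,…,v_{n−2}} with |A′| = ⌈(n−3)/2⌉, the set A = {u_1} ∪ A′ is a globally minimal defensive alliance of G. -/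
lemma degIn_inl {m : ℕ} (X : Set (Fin 2 ⊕ Fin m)) (a : Fin 2) :
    degIn (completeBipartiteGraph (Fin 2) (Fin m)) X (Sum.inl a) =
      (Sum.inr ⁻¹' X).ncard := by
  have h : {u | u ∈ X ∧ (completeBipartiteGraph (Fin 2) (Fin m)).Adj (Sum.inl a) u}
      = Sum.inr '' (Sum.inr ⁻¹' X) := by
    ext u
    cases u <;> simp
  rw [degIn, h, Set.ncard_image_of_injective _ Sum.inr_injective]

lemma degIn_inr {m : ℕ} (X : Set (Fin 2 ⊕ Fin m)) (b : Fin m) :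
    degIn (completeBipartiteGraph (Fin 2) (Fin m)) X (Sum.inr b) =
      (Sum.inl ⁻¹' X).ncard := by
  have h : {u | u ∈ X ∧ (completeBipartiteGraph (Fin 2) (Fin m)).Adj (Sum.inr b) u}
      = Sum.inl '' (Sum.inl ⁻¹' X) := by
    ext u
    cases u <;> simp
  rw [degIn, h, Set.ncard_image_of_injective _ Sum.inl_injective]

/-- In `K_{2,n-2}` (with parts `{u_1,u_2}` and `{v_1,…,v_{n-2}}`,
here `u_1 = Sum.inl 0` and the `v_i` are the `Sum.inr` vertices), for every
`A' ⊆ {v_1,…,v_{n-2}}` with `|A'| = ⌈(n-3)/2⌉`, the set `{u_1} ∪ A'` is a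
globally minimal defensive alliance. -/
theorem globallyMinimalDA_completeBipartite (n : ℕ) (hn : 2 < n)
    (A' : Set (Fin (n - 2))) (hcard : A'.ncard = (n - 3 + 1) / 2) :
    IsGloballyMinimalDA (completeBipartiteGraph (Fin 2) (Fin (n - 2)))
      ({Sum.inl 0} ∪ (Sum.inr '' A')) := by
  have hk : A'.ncard = (n - 2) / 2 := by rw [hcard]; omega
  have hcomplA' : A'.ncard + A'ᶜ.ncard = n - 2 := by
    rw [Set.ncard_add_ncard_compl]; simp
  have hpreR : Sum.inr ⁻¹' ({Sum.inl 0} ∪ (Sum.inr '' A') : Set (Fin 2 ⊕ Fin (n - 2))) = A' := by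
    ext b; simp
  have hpreL : Sum.inl ⁻¹' ({Sum.inl 0} ∪ (Sum.inr '' A') : Set (Fin 2 ⊕ Fin (n - 2))) = {0} := by
    ext a; simp
  refine ⟨⟨Sum.inl 0, Or.inl rfl⟩, ?_, ?_⟩
  · intro v hv
    cases v with
    | inl a =>
      rw [degIn_inl, degIn_inl, hpreR, Set.preimage_compl, hpreR]
      omega
    | inr b =>
      rw [degIn_inr, degIn_inr, hpreL, Set.preimage_compl, hpreL]
      have h1 : ({0}ᶜ : Set (Fin 2)) = {1} := by
        ext a; fin_cases a <;> simp
      rw [h1]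
      simp
  · intro B hB hBne hBall
    by_cases h0 : Sum.inl 0 ∈ B
    · have hB'sub : Sum.inr ⁻¹' B ⊆ A' := by
        intro b hb
        rcases hB.1 hb with h | ⟨x, hx, hxe⟩
        · simp at h
        · rw [Sum.inr_injective hxe] at hx; exact hx
      have hB'ne : Sum.inr ⁻¹' B ≠ A' := by
        intro heq
        apply hB.2
        intro x hx
        rcases hx with h | ⟨x', hx', hxe⟩
        · simp at h; rw [h]; exact h0
        · rw [← heq] at hx'
          rw [← hxe]; exact hx'
      have hlt : (Sum.inr ⁻¹' B).ncard < A'.ncard :=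
        Set.ncard_lt_ncard (hB'sub.ssubset_of_ne hB'ne) (Set.toFinite _)
      have hcomplB' : (Sum.inr ⁻¹' B).ncard + (Sum.inr ⁻¹' B)ᶜ.ncard = n - 2 := by
        rw [Set.ncard_add_ncard_compl]; simp
      have hfail := hBall (Sum.inl 0) h0
      rw [degIn_inl, degIn_inl, Set.preimage_compl] at hfail
      omega
    · obtain ⟨x, hx⟩ := hBne
      obtain ⟨b, hb⟩ : ∃ b, x = Sum.inr b := by
        cases x with
        | inl a =>
          exfalso
          rcases hB.1 hx with h | ⟨x', hx', hxe⟩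
          · simp at h; rw [h] at hx; exact h0 hx
          · exact Sum.inl_ne_inr hxe.symm
        | inr b => exact ⟨b, rfl⟩
      subst hb
      have hfail := hBall (Sum.inr b) hx
      rw [degIn_inr, degIn_inr, Set.preimage_compl] at hfail
      have hempty : Sum.inl ⁻¹' B = (∅ : Set (Fin 2)) := by
        ext a
        simp only [Set.mem_preimage, Set.mem_empty_iff_false, iff_false]
        intro ha
        rcases hB.1 ha with h | ⟨x', hx', hxe⟩
        · simp at h; rw [h] at ha; exact h0 ha
        · exact Sum.inl_ne_inr hxe.symm
      have h2 : ((Sum.inl ⁻¹' B)ᶜ : Set (Fin 2)).ncard = 2 := by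
        rw [hempty, Set.compl_empty, Set.ncard_univ]; simp
      have h3 : (Sum.inl ⁻¹' B : Set (Fin 2)).ncard = 0 := by rw [hempty]; simp
      omega
end

section
/- Let k ≥ 2 and let T_k be the spider tree with vertex set {r} ∪ {u_i, u′_i : 1 ≤ i ≤ k} and edges {r,u_i} and {u_i,u′_i} for 1 ≤ i ≤ k. For every subset A′ ⊆ {u_1,…,u_k} with |A′| = ⌈(k−1)/2⌉, the set {r} ∪ A′ is a globally minimal defensive alliance of T_k. -/
/-- The spider tree `T_k` with root `r = Sum.inl ()`, middle vertices
`u_i = Sum.inr (Sum.inl i)` and leaves `u'_i = Sum.inr (Sum.inr i)`;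
edges are `{r, u_i}` and `{u_i, u'_i}` for `1 ≤ i ≤ k`. -/
def spiderTree (k : ℕ) : SimpleGraph (Unit ⊕ Fin k ⊕ Fin k) :=
  SimpleGraph.fromRel (fun a b =>
    (∃ i : Fin k, a = Sum.inl () ∧ b = Sum.inr (Sum.inl i)) ∨
    (∃ i : Fin k, a = Sum.inr (Sum.inl i) ∧ b = Sum.inr (Sum.inr i)))

lemma adj_r_iff (k : ℕ) (x : Unit ⊕ Fin k ⊕ Fin k) :
    (spiderTree k).Adj (Sum.inl ()) x ↔ ∃ i : Fin k, x = Sum.inr (Sum.inl i) := by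
  simp only [spiderTree, SimpleGraph.fromRel_adj]; aesop

lemma adj_u_iff (k : ℕ) (i : Fin k) (x : Unit ⊕ Fin k ⊕ Fin k) :
    (spiderTree k).Adj (Sum.inr (Sum.inl i)) x ↔
      x = Sum.inl () ∨ x = Sum.inr (Sum.inr i) := by
  simp only [spiderTree, SimpleGraph.fromRel_adj]; aesop

lemma degIn_at_r (k : ℕ) (X : Set (Unit ⊕ Fin k ⊕ Fin k)) :
    degIn (spiderTree k) X (Sum.inl ()) =
      {i : Fin k | Sum.inr (Sum.inl i) ∈ X}.ncard := by
  have h1 : {y | y ∈ X ∧ (spiderTree k).Adj (Sum.inl ()) y}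
      = (fun i : Fin k => (Sum.inr (Sum.inl i) : Unit ⊕ Fin k ⊕ Fin k)) ''
          {i | Sum.inr (Sum.inl i) ∈ X} := by
    ext y
    simp only [Set.mem_setOf_eq, Set.mem_image, adj_r_iff]
    constructor
    · rintro ⟨hy, i, rfl⟩; exact ⟨i, hy, rfl⟩
    · rintro ⟨i, hi, rfl⟩; exact ⟨hi, i, rfl⟩
  unfold degIn
  rw [h1, Set.ncard_image_of_injective _ (fun a b h => by simpa using h)]

lemma degIn_at_u (k : ℕ) (X : Set (Unit ⊕ Fin k ⊕ Fin k)) (i : Fin k) :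
    degIn (spiderTree k) X (Sum.inr (Sum.inl i)) =
      ({y | y ∈ X ∧ (y = Sum.inl () ∨ y = Sum.inr (Sum.inr i))} : Set _).ncard := by
  unfold degIn
  congr 1
  ext y
  simp [adj_u_iff]

/-- For `k ≥ 2` and every `A' ⊆ {u_1,…,u_k}` with
`|A'| = ⌈(k-1)/2⌉`, the set `{r} ∪ A'` is a globally minimal defensive
alliance of the spider tree `T_k`. -/
theorem globallyMinimalDA_spiderTree (k : ℕ) (hk : 2 ≤ k)
    (A' : Set (Fin k)) (hcard : A'.ncard = (k - 1 + 1) / 2) :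
    IsGloballyMinimalDA (spiderTree k)
      ({Sum.inl ()} ∪ ((fun i => Sum.inr (Sum.inl i)) '' A')) := by
  set A : Set (Unit ⊕ Fin k ⊕ Fin k) :=
    {Sum.inl ()} ∪ ((fun i => Sum.inr (Sum.inl i)) '' A') with hA
  have hcard' : A'.ncard = k / 2 := by omega
  have hcompl : ∀ S : Set (Fin k), Sᶜ.ncard = k - S.ncard := by
    intro S
    have := Set.ncard_add_ncard_compl S
    simp [Nat.card_eq_fintype_card] at this
    omega
  -- membership facts
  have hrA : (Sum.inl () : Unit ⊕ Fin k ⊕ Fin k) ∈ A := Or.inl rfl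
  have huA : ∀ i : Fin k, (Sum.inr (Sum.inl i) : Unit ⊕ Fin k ⊕ Fin k) ∈ A ↔ i ∈ A' := by
    intro i; simp [hA]
  have hwA : ∀ i : Fin k, (Sum.inr (Sum.inr i) : Unit ⊕ Fin k ⊕ Fin k) ∉ A := by
    intro i; simp [hA]
  refine ⟨⟨_, hrA⟩, ?_, ?_⟩
  · -- A is a defensive alliance
    rintro v hv
    rcases hv with hv | ⟨i, hi, rfl⟩
    · -- v = r
      rcases hv with rfl
      rw [degIn_at_r, degIn_at_r]
      have h1 : {i : Fin k | Sum.inr (Sum.inl i) ∈ A} = A' := by ext i; simp [huA]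
      have h2 : {i : Fin k | Sum.inr (Sum.inl i) ∈ Aᶜ} = A'ᶜ := by
        ext i; simp [Set.mem_compl_iff, huA]
      rw [h1, h2, hcompl, hcard']
      omega
    · -- v = u i
      rw [degIn_at_u, degIn_at_u]
      have h1 : {y | y ∈ A ∧ (y = Sum.inl () ∨ y = Sum.inr (Sum.inr i))}
          = ({Sum.inl ()} : Set (Unit ⊕ Fin k ⊕ Fin k)) := by
        ext y
        constructor
        · rintro ⟨hy, (rfl | rfl)⟩
          · rfl
          · exact absurd hy (hwA i)
        · rintro rfl; exact ⟨hrA, Or.inl rfl⟩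
      have h2 : {y | y ∈ Aᶜ ∧ (y = Sum.inl () ∨ y = Sum.inr (Sum.inr i))}
          = ({Sum.inr (Sum.inr i)} : Set (Unit ⊕ Fin k ⊕ Fin k)) := by
        ext y
        constructor
        · rintro ⟨hy, (rfl | rfl)⟩
          · exact absurd hrA hy
          · rfl
        · rintro rfl; exact ⟨hwA i, Or.inr rfl⟩
      rw [h1, h2, Set.ncard_singleton, Set.ncard_singleton]
      omega
  · -- global minimality
    intro B hB hBne hdef
    by_cases hrB : (Sum.inl () : Unit ⊕ Fin k ⊕ Fin k) ∈ B
    · -- r ∈ B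
      set B' : Set (Fin k) := {i | Sum.inr (Sum.inl i) ∈ B} with hB'
      have hBsub := hB.1
      have hB'sub : B' ⊂ A' := by
        constructor
        · intro i hi
          exact (huA i).mp (hBsub hi)
        · intro hcon
          obtain ⟨x, hxA, hxB⟩ := Set.exists_of_ssubset hB
          rcases hxA with rfl | ⟨j, hj, rfl⟩
          · exact hxB hrB
          · exact hxB (hcon hj)
      have hlt : B'.ncard < A'.ncard :=
        Set.ncard_lt_ncard hB'sub (Set.toFinite A')
      have := hdef _ hrB
      rw [degIn_at_r, degIn_at_r] at this
      have h2 : {i : Fin k | Sum.inr (Sum.inl i) ∈ Bᶜ} = B'ᶜ := rfl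
      have h3 : {i : Fin k | Sum.inr (Sum.inl i) ∈ B} = B' := rfl
      rw [h2, h3, hcompl] at this
      omega
    · -- r ∉ B : pick some u i ∈ B
      obtain ⟨x, hx⟩ := hBne
      have hxA := hB.1 hx
      rcases hxA with rfl | ⟨i, hi, rfl⟩
      · exact hrB hx
      · have := hdef _ hx
        rw [degIn_at_u, degIn_at_u] at this
        have h1 : {y | y ∈ B ∧ (y = Sum.inl () ∨ y = Sum.inr (Sum.inr i))}
            = (∅ : Set (Unit ⊕ Fin k ⊕ Fin k)) := by
          ext y
          simp only [Set.mem_setOf_eq, Set.mem_empty_iff_false, iff_false]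
          rintro ⟨hy, (rfl | rfl)⟩
          · exact hrB hy
          · exact hwA i (hB.1 hy)
        have h2 : {y | y ∈ Bᶜ ∧ (y = Sum.inl () ∨ y = Sum.inr (Sum.inr i))}
            = ({Sum.inl (), Sum.inr (Sum.inr i)} : Set (Unit ⊕ Fin k ⊕ Fin k)) := by
          ext y
          constructor
          · rintro ⟨hy, (rfl | rfl)⟩
            · exact Or.inl rfl
            · exact Or.inr rfl
          · rintro (rfl | rfl)
            · exact ⟨hrB, Or.inl rfl⟩
            · exact ⟨fun hc => hwA i (hB.1 hc), Or.inr rfl⟩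
        rw [h1, h2, Set.ncard_empty, Set.ncard_pair (by simp)] at this
        omega
end

section
/- Let k ≥ 2 and let T_k be the spider tree with vertex set {r} ∪ {u_i, u′_i : 1 ≤ i ≤ k} and edges {r,u_i} and {u_i,u′_i} for 1 ≤ i ≤ k. The globally minimal defensive alliances of T_k are exactly the k singletons {u′_i} (1 ≤ i ≤ k) together with the sets {r} ∪ A′ where A′ ⊆ {u_1,…,u_k} and |A′| = ⌈(k−1)/2⌉; in particular, T_k has exactly k + binom(k, ⌈(k−1)/2⌉) globally minimal defensive alliances. -/
namespace Spider

variable {k : ℕ}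

abbrev r : Unit ⊕ Fin k ⊕ Fin k := Sum.inl ()
abbrev u (i : Fin k) : Unit ⊕ Fin k ⊕ Fin k := Sum.inr (Sum.inl i)
abbrev w (i : Fin k) : Unit ⊕ Fin k ⊕ Fin k := Sum.inr (Sum.inr i)

lemma u_inj : Function.Injective (u (k := k)) := by
  intro a b h; simpa using h

lemma adj_r_iff (v : Unit ⊕ Fin k ⊕ Fin k) :
    (spiderTree k).Adj r v ↔ ∃ i, v = u i := by
  simp only [spiderTree, SimpleGraph.fromRel_adj]
  aesop

lemma adj_u_iff (i : Fin k) (v : Unit ⊕ Fin k ⊕ Fin k) :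
    (spiderTree k).Adj (u i) v ↔ v = r ∨ v = w i := by
  simp only [spiderTree, SimpleGraph.fromRel_adj]
  aesop

lemma adj_w_iff (i : Fin k) (v : Unit ⊕ Fin k ⊕ Fin k) :
    (spiderTree k).Adj (w i) v ↔ v = u i := by
  simp only [spiderTree, SimpleGraph.fromRel_adj]
  aesop

lemma r_ne_w (i : Fin k) : (r : Unit ⊕ Fin k ⊕ Fin k) ≠ w i := by simp

lemma degIn_r (X : Set (Unit ⊕ Fin k ⊕ Fin k)) :
    degIn (spiderTree k) X r = {i : Fin k | u i ∈ X}.ncard := by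
  unfold degIn
  have h : {x | x ∈ X ∧ (spiderTree k).Adj r x} = u '' {i : Fin k | u i ∈ X} := by
    ext x
    constructor
    · rintro ⟨hx, hadj⟩
      obtain ⟨i, rfl⟩ := (adj_r_iff x).1 hadj
      exact ⟨i, hx, rfl⟩
    · rintro ⟨i, hi, rfl⟩
      exact ⟨hi, (adj_r_iff _).2 ⟨i, rfl⟩⟩
  rw [h, Set.ncard_image_of_injective _ u_inj]

lemma degIn_u (X : Set (Unit ⊕ Fin k ⊕ Fin k)) (i : Fin k) :
    degIn (spiderTree k) X (u i) = (({r, w i} : Set _) ∩ X).ncard := by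
  unfold degIn
  congr 1
  ext x
  simp only [Set.mem_setOf_eq, adj_u_iff, Set.mem_inter_iff, Set.mem_insert_iff,
    Set.mem_singleton_iff]
  tauto

lemma degIn_w_le (X : Set (Unit ⊕ Fin k ⊕ Fin k)) (i : Fin k) :
    degIn (spiderTree k) X (w i) ≤ 1 := by
  unfold degIn
  have h : {x | x ∈ X ∧ (spiderTree k).Adj (w i) x} ⊆ {u i} := by
    rintro x ⟨-, hadj⟩
    exact (adj_w_iff i x).1 hadj
  calc _ ≤ ({u i} : Set _).ncard := Set.ncard_le_ncard h (Set.finite_singleton _)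
    _ = 1 := Set.ncard_singleton _

lemma cond_w (A : Set (Unit ⊕ Fin k ⊕ Fin k)) (i : Fin k) :
    degIn (spiderTree k) A (w i) + 1 ≥ degIn (spiderTree k) Aᶜ (w i) := by
  have := degIn_w_le Aᶜ i
  omega

lemma cond_u (A : Set (Unit ⊕ Fin k ⊕ Fin k)) (i : Fin k) :
    (degIn (spiderTree k) A (u i) + 1 ≥ degIn (spiderTree k) Aᶜ (u i)) ↔
      (r ∈ A ∨ w i ∈ A) := by
  rw [degIn_u, degIn_u]
  constructor
  · intro h
    by_contra hcon
    push_neg at hcon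
    obtain ⟨hr, hw⟩ := hcon
    have h1 : ({r, w i} : Set _) ∩ A = ∅ := by
      ext x
      simp only [Set.mem_inter_iff, Set.mem_insert_iff, Set.mem_singleton_iff,
        Set.mem_empty_iff_false, iff_false, not_and]
      rintro (rfl | rfl) <;> assumption
    have h2 : ({r, w i} : Set _) ∩ Aᶜ = {r, w i} := by
      rw [Set.inter_eq_left]
      rintro x (rfl | rfl) <;> assumption
    rw [h1, h2, Set.ncard_empty, Set.ncard_pair (r_ne_w i)] at h
    omega
  · intro h
    have h1 : 1 ≤ (({r, w i} : Set _) ∩ A).ncard := by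
      rw [Nat.one_le_iff_ne_zero, ← Nat.pos_iff_ne_zero, Set.ncard_pos (Set.toFinite _)]
      rcases h with h | h
      · exact ⟨r, by simp, h⟩
      · exact ⟨w i, by simp, h⟩
    have h2 : (({r, w i} : Set _) ∩ Aᶜ).ncard ≤ 2 := by
      calc _ ≤ ({r, w i} : Set _).ncard :=
            Set.ncard_le_ncard Set.inter_subset_left (Set.toFinite _)
        _ = 2 := Set.ncard_pair (r_ne_w i)
    omega

lemma cond_r (A : Set (Unit ⊕ Fin k ⊕ Fin k)) :
    (degIn (spiderTree k) A r + 1 ≥ degIn (spiderTree k) Aᶜ r) ↔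
      k / 2 ≤ {i : Fin k | u i ∈ A}.ncard := by
  rw [degIn_r, degIn_r]
  have h1 : {i : Fin k | u i ∈ Aᶜ} = {i : Fin k | u i ∈ A}ᶜ := rfl
  have h2 := Set.ncard_add_ncard_compl {i : Fin k | u i ∈ A} (Set.toFinite _)
  rw [Nat.card_eq_fintype_card, Fintype.card_fin] at h2
  rw [h1]
  omega

lemma DA_iff (A : Set (Unit ⊕ Fin k ⊕ Fin k)) :
    IsDefensiveAlliance (spiderTree k) A ↔
      ((∀ i, u i ∈ A → (r ∈ A ∨ w i ∈ A)) ∧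
        (r ∈ A → k / 2 ≤ {i : Fin k | u i ∈ A}.ncard)) := by
  constructor
  · intro h
    exact ⟨fun i hi => (cond_u A i).1 (h _ hi), fun hr => (cond_r A).1 (h _ hr)⟩
  · rintro ⟨h1, h2⟩ v hv
    match v with
    | Sum.inl () => exact (cond_r A).2 (h2 hv)
    | Sum.inr (Sum.inl i) => exact (cond_u A i).2 (h1 i hv)
    | Sum.inr (Sum.inr i) => exact cond_w A i

end Spider

namespace Spider

lemma w_notmem_u_image (i : Fin k) (S : Set (Fin k)) :
    w i ∉ ({r} ∪ u '' S : Set (Unit ⊕ Fin k ⊕ Fin k)) := by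
  rintro (h | ⟨j, -, h⟩) <;> simp_all

lemma u_mem_union_iff (i : Fin k) (S : Set (Fin k)) :
    u i ∈ ({r} ∪ u '' S : Set (Unit ⊕ Fin k ⊕ Fin k)) ↔ i ∈ S := by
  constructor
  · rintro (h | ⟨j, hj, h⟩)
    · simp at h
    · obtain rfl : j = i := u_inj h
      exact hj
  · intro h
    exact Or.inr ⟨i, h, rfl⟩

lemma GM_leaf (i : Fin k) : IsGloballyMinimalDA (spiderTree k) {w i} := by
  refine ⟨⟨w i, rfl⟩, ?_, ?_⟩
  · rw [DA_iff]
    constructor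
    · intro j hj
      simp at hj
    · intro hr
      simp at hr
  · intro B hB hBne
    rw [Set.ssubset_singleton_iff] at hB
    subst hB
    exact absurd hBne (by simp)

lemma DA_root (A' : Set (Fin k)) (h : k / 2 ≤ A'.ncard) :
    IsDefensiveAlliance (spiderTree k) ({r} ∪ u '' A') := by
  rw [DA_iff]
  have hset : {i : Fin k | u i ∈ ({r} ∪ u '' A' : Set _)} = A' := by
    ext i; exact u_mem_union_iff i A'
  exact ⟨fun i _ => Or.inl (Or.inl rfl), fun _ => by rw [hset]; exact h⟩

lemma GM_root (A' : Set (Fin k)) (h : A'.ncard = k / 2) :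
    IsGloballyMinimalDA (spiderTree k) ({r} ∪ u '' A') := by
  refine ⟨⟨r, Or.inl rfl⟩, DA_root A' h.ge, ?_⟩
  intro B hB hBne hDA
  rw [DA_iff] at hDA
  have hBsub : B ⊆ {r} ∪ u '' A' := hB.1
  have hwB : ∀ i, w i ∉ B := fun i hi => w_notmem_u_image i A' (hBsub hi)
  have hSsub : {i : Fin k | u i ∈ B} ⊆ A' := fun i hi =>
    (u_mem_union_iff i A').1 (hBsub hi)
  by_cases hr : r ∈ B
  · have h1 : k / 2 ≤ {i : Fin k | u i ∈ B}.ncard := hDA.2 hr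
    have h2 : {i : Fin k | u i ∈ B} = A' :=
      Set.eq_of_subset_of_ncard_le hSsub (by omega) (Set.toFinite _)
    have : {r} ∪ u '' A' ⊆ B := by
      rintro x (hx | ⟨j, hj, rfl⟩)
      · rw [Set.mem_singleton_iff] at hx; subst hx; exact hr
      · rw [← h2] at hj; exact hj
    exact hB.2 this
  · obtain ⟨v, hv⟩ := hBne
    match v with
    | Sum.inl () => exact hr hv
    | Sum.inr (Sum.inl i) =>
        rcases hDA.1 i hv with h' | h'
        · exact hr h'
        · exact hwB i h'
    | Sum.inr (Sum.inr i) => exact hwB i hv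

lemma GM_forward (A : Set (Unit ⊕ Fin k ⊕ Fin k))
    (hA : IsGloballyMinimalDA (spiderTree k) A) :
    (∃ i, A = {w i}) ∨
      ∃ A' : Set (Fin k), A'.ncard = k / 2 ∧ A = {r} ∪ u '' A' := by
  obtain ⟨hne, hDA, hmin⟩ := hA
  by_cases hleaf : ∃ i, w i ∈ A
  · obtain ⟨i, hi⟩ := hleaf
    left
    refine ⟨i, ?_⟩
    by_contra hne'
    have hsub : ({w i} : Set _) ⊆ A := Set.singleton_subset_iff.2 hi
    have hss : ({w i} : Set _) ⊂ A := hsub.ssubset_of_ne (fun h => hne' h.symm)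
    exact hmin _ hss ⟨w i, rfl⟩ ((GM_leaf i).2.1)
  · push_neg at hleaf
    rw [DA_iff] at hDA
    have hur : ∀ i, u i ∈ A → r ∈ A := fun i hi => (hDA.1 i hi).resolve_right (hleaf i)
    have hr : r ∈ A := by
      obtain ⟨v, hv⟩ := hne
      match v with
      | Sum.inl () => exact hv
      | Sum.inr (Sum.inl i) => exact hur i hv
      | Sum.inr (Sum.inr i) => exact absurd hv (hleaf i)
    set A' := {i : Fin k | u i ∈ A} with hA'def
    have hAeq : A = {r} ∪ u '' A' := by
      ext v
      constructor
      · intro hv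
        match v with
        | Sum.inl () => exact Or.inl rfl
        | Sum.inr (Sum.inl i) => exact Or.inr ⟨i, hv, rfl⟩
        | Sum.inr (Sum.inr i) => exact absurd hv (hleaf i)
      · rintro (hv | ⟨i, hi, rfl⟩)
        · rw [Set.mem_singleton_iff] at hv; subst hv; exact hr
        · exact hi
    have hge : k / 2 ≤ A'.ncard := hDA.2 hr
    right
    rcases eq_or_lt_of_le hge with heq | hlt
    · exact ⟨A', heq.symm, hAeq⟩
    · exfalso
      obtain ⟨A'', hsub, hcard⟩ := Set.exists_subset_card_eq hge
      have hBsub : ({r} ∪ u '' A'' : Set _) ⊆ A := by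
        rw [hAeq]
        exact Set.union_subset_union_right _ (Set.image_mono hsub)
      obtain ⟨j, hjA', hjA''⟩ : ∃ j, j ∈ A' ∧ j ∉ A'' := by
        by_contra hcon
        push_neg at hcon
        have h' : A' = A'' := Set.Subset.antisymm hcon hsub
        rw [h', hcard] at hlt
        omega
      have hss : ({r} ∪ u '' A'' : Set _) ⊂ A := by
        refine hBsub.ssubset_of_ne ?_
        intro h
        have : u j ∈ ({r} ∪ u '' A'' : Set _) := by rw [h, hAeq]; exact Or.inr ⟨j, hjA', rfl⟩
        exact hjA'' ((u_mem_union_iff j A'').1 this)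
      exact hmin _ hss ⟨r, Or.inl rfl⟩ (DA_root A'' hcard.ge)

end Spider

namespace Spider

lemma ncard_setOf_ncard_eq (m : ℕ) :
    {A' : Set (Fin k) | A'.ncard = m}.ncard = Nat.choose k m := by
  rw [← Nat.card_coe_set_eq]
  have e : {s : Finset (Fin k) // s.card = m} ≃ {A' : Set (Fin k) // A'.ncard = m} :=
    Fintype.finsetEquivSet.subtypeEquiv fun s => by
      simp [Set.ncard_coe_finset]
  have h1 : Nat.card {A' : Set (Fin k) | A'.ncard = m} =
      Nat.card {s : Finset (Fin k) // s.card = m} := Nat.card_congr e.symm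
  rw [h1, Nat.card_eq_fintype_card, Fintype.card_subtype]
  have h2 : Finset.univ.filter (fun s : Finset (Fin k) => s.card = m) =
      Finset.powersetCard m Finset.univ := by
    rw [Finset.powersetCard_eq_filter, Finset.powerset_univ]
  rw [h2, Finset.card_powersetCard, Finset.card_univ, Fintype.card_fin]

lemma singleton_w_inj : Function.Injective (fun i : Fin k => ({w i} : Set (Unit ⊕ Fin k ⊕ Fin k))) := by
  intro a b h
  simp only [Set.singleton_eq_singleton_iff] at h
  simpa using h

lemma root_union_inj :
    Function.Injective (fun A' : Set (Fin k) => ({r} ∪ u '' A' : Set (Unit ⊕ Fin k ⊕ Fin k))) := by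
  intro A B h
  have h' : ({r} ∪ u '' A : Set (Unit ⊕ Fin k ⊕ Fin k)) = {r} ∪ u '' B := h
  ext i
  rw [← u_mem_union_iff i A, ← u_mem_union_iff i B, h']

lemma GM_setOf_eq :
    {A : Set (Unit ⊕ Fin k ⊕ Fin k) | IsGloballyMinimalDA (spiderTree k) A} =
      ((fun i : Fin k => ({w i} : Set (Unit ⊕ Fin k ⊕ Fin k))) '' Set.univ) ∪
      ((fun A' : Set (Fin k) => ({r} ∪ u '' A' : Set (Unit ⊕ Fin k ⊕ Fin k))) ''
        {A' | A'.ncard = k / 2}) := by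
  ext A
  constructor
  · intro h
    rcases GM_forward A h with ⟨i, rfl⟩ | ⟨A', hA', rfl⟩
    · exact Or.inl ⟨i, trivial, rfl⟩
    · exact Or.inr ⟨A', hA', rfl⟩
  · rintro (⟨i, -, rfl⟩ | ⟨A', hA', rfl⟩)
    · exact GM_leaf i
    · exact GM_root A' hA'

lemma GM_count :
    Nat.card {A : Set (Unit ⊕ Fin k ⊕ Fin k) //
        IsGloballyMinimalDA (spiderTree k) A} =
      k + Nat.choose k (k / 2) := by
  have h0 : Nat.card {A : Set (Unit ⊕ Fin k ⊕ Fin k) //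
        IsGloballyMinimalDA (spiderTree k) A} =
      {A : Set (Unit ⊕ Fin k ⊕ Fin k) | IsGloballyMinimalDA (spiderTree k) A}.ncard :=
    Nat.card_coe_set_eq _
  rw [h0, GM_setOf_eq]
  have hdisj : Disjoint
      ((fun i : Fin k => ({w i} : Set (Unit ⊕ Fin k ⊕ Fin k))) '' Set.univ)
      ((fun A' : Set (Fin k) => ({r} ∪ u '' A' : Set (Unit ⊕ Fin k ⊕ Fin k))) ''
        {A' | A'.ncard = k / 2}) := by
    rw [Set.disjoint_left]
    rintro A ⟨i, -, rfl⟩ ⟨B, -, hB⟩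
    have hB' : ({r} ∪ u '' B : Set (Unit ⊕ Fin k ⊕ Fin k)) = {w i} := hB
    have : (r : Unit ⊕ Fin k ⊕ Fin k) ∈ ({w i} : Set _) := by
      rw [← hB']; exact Or.inl rfl
    simp at this
  rw [Set.ncard_union_eq hdisj (Set.toFinite _) (Set.toFinite _),
    Set.ncard_image_of_injective _ singleton_w_inj,
    Set.ncard_image_of_injective _ root_union_inj,
    Set.ncard_univ, Nat.card_eq_fintype_card, Fintype.card_fin,
    ncard_setOf_ncard_eq]

end Spider

/-- For `k ≥ 2`, the globally minimal defensive alliances of the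
spider tree `T_k` are exactly the `k` singletons `{u'_i}` together with the
sets `{r} ∪ A'` where `A' ⊆ {u_1,…,u_k}` and `|A'| = ⌈(k-1)/2⌉`; in
particular there are exactly `k + binom(k, ⌈(k-1)/2⌉)` of them. -/
theorem globallyMinimalDA_spiderTree_characterization (k : ℕ) (hk : 2 ≤ k) :
    (∀ A : Set (Unit ⊕ Fin k ⊕ Fin k),
      IsGloballyMinimalDA (spiderTree k) A ↔
        ((∃ i : Fin k, A = {Sum.inr (Sum.inr i)}) ∨
         (∃ A' : Set (Fin k), A'.ncard = (k - 1 + 1) / 2 ∧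
            A = {Sum.inl ()} ∪ ((fun i => Sum.inr (Sum.inl i)) '' A')))) ∧
    Nat.card {A : Set (Unit ⊕ Fin k ⊕ Fin k) //
        IsGloballyMinimalDA (spiderTree k) A} =
      k + Nat.choose k ((k - 1 + 1) / 2) := by
  have hm : (k - 1 + 1) / 2 = k / 2 := by omega
  rw [hm]
  constructor
  · intro A
    constructor
    · intro h
      rcases Spider.GM_forward A h with ⟨i, rfl⟩ | ⟨A', hA', rfl⟩
      · exact Or.inl ⟨i, rfl⟩
      · exact Or.inr ⟨A', hA', rfl⟩
    · rintro (⟨i, rfl⟩ | ⟨A', hA', rfl⟩)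
      · exact Spider.GM_leaf i
      · exact Spider.GM_root A' hA'
  · exact Spider.GM_count
end

section
/- Let T = (V,E) be a finite tree and let A ⊆ V be a globally minimal defensive alliance of T. Then {v ∈ A : deg_A(v) = 1} = {v ∈ V : deg_V(v) ∈ {2,3}} ∩ A, where deg_V(v) denotes the degree of v in T. -/
lemma degIn_add_compl {V : Type*} [Fintype V] (G : SimpleGraph V) (X : Set V) (v : V) :
    degIn G X v + degIn G Xᶜ v = degIn G Set.univ v := by
  have hd : Disjoint {u | u ∈ X ∧ G.Adj v u} {u | u ∈ Xᶜ ∧ G.Adj v u} :=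
    Set.disjoint_left.2 (by rintro u ⟨h1, _⟩ ⟨h2, _⟩; exact h2 h1)
  have hu : {u | u ∈ X ∧ G.Adj v u} ∪ {u | u ∈ Xᶜ ∧ G.Adj v u}
      = {u | u ∈ Set.univ ∧ G.Adj v u} := by
    ext u; by_cases h : u ∈ X <;> simp [h]
  rw [degIn, degIn, degIn, ← Set.ncard_union_eq hd (Set.toFinite _) (Set.toFinite _), hu]

lemma degIn_le {V : Type*} [Fintype V] (G : SimpleGraph V) {X Y : Set V} (h : X ⊆ Y) (v : V) :
    degIn G X v ≤ degIn G Y v :=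
  Set.ncard_le_ncard (fun u hu => ⟨h hu.1, hu.2⟩) (Set.toFinite _)

/-- In a finite tree `T`, for every globally minimal defensive
alliance `A` one has
`{v ∈ A : deg_A(v) = 1} = {v ∈ V : deg_V(v) ∈ {2,3}} ∩ A`. -/
theorem globallyMinimalDA_tree_degree_one {V : Type*} [Fintype V]
    (T : SimpleGraph V) (hT : T.IsTree) (A : Set V)
    (hA : IsGloballyMinimalDA T A) :
    {v ∈ A | degIn T A v = 1} =
      {v | degIn T Set.univ v = 2 ∨ degIn T Set.univ v = 3} ∩ A := by
  obtain ⟨hne, hDA, hmin⟩ := hA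
  ext v
  simp only [Set.mem_setOf_eq, Set.mem_inter_iff]
  have htot := degIn_add_compl T A v
  constructor
  · rintro ⟨hvA, h1⟩
    refine ⟨?_, hvA⟩
    have hc := hDA v hvA
    rw [h1] at hc htot
    -- exclude degIn T Aᶜ v = 0, i.e. total degree 1
    have hcne : degIn T Aᶜ v ≠ 0 := by
      intro h0
      -- then {v} is a nonempty proper defensive alliance
      obtain ⟨u, huA, hadj⟩ : ∃ u, u ∈ A ∧ T.Adj v u := by
        have : {u | u ∈ A ∧ T.Adj v u}.Nonempty := by
          apply Set.nonempty_of_ncard_ne_zero; rw [degIn] at h1; omega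
        exact this
      have hssub : ({v} : Set V) ⊂ A := by
        refine ⟨Set.singleton_subset_iff.2 hvA, fun hsub => ?_⟩
        have := hsub huA
        simp only [Set.mem_singleton_iff] at this
        exact T.irrefl (this ▸ hadj)
      refine hmin {v} hssub ⟨v, rfl⟩ ?_
      intro w hw
      simp only [Set.mem_singleton_iff] at hw; subst hw
      have h1' : degIn T ({w} : Set V) w = 0 := by
        rw [degIn]
        convert Set.ncard_empty V using 2
        ext x; simp only [Set.mem_setOf_eq, Set.mem_singleton_iff, Set.mem_empty_iff_false,
          iff_false, not_and]
        rintro rfl h; exact T.irrefl h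
      have h2' : degIn T ({w} : Set V)ᶜ w ≤ degIn T Set.univ w :=
        degIn_le T (Set.subset_univ _) w
      rw [← htot, h0] at h2'
      omega
    omega
  · rintro ⟨hdeg, hvA⟩
    refine ⟨hvA, ?_⟩
    have hc := hDA v hvA
    set a := degIn T A v with ha
    set c := degIn T Aᶜ v with hcdef
    have hane : a ≠ 0 := by omega
    by_contra hne1
    have ha2 : 2 ≤ a := by omega
    have hac : c + 1 ≤ a := by omega
    -- pick a neighbor u of v inside A
    obtain ⟨u, huA, hadj⟩ : ∃ u, u ∈ A ∧ T.Adj v u := by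
      have : {x | x ∈ A ∧ T.Adj v x}.Nonempty := by
        apply Set.nonempty_of_ncard_ne_zero; exact hane
      exact this
    set G' := T.deleteEdges {s(v, u)} with hG'
    set S : Set V := {w | G'.Reachable u w} with hS
    have huS : u ∈ S := ⟨SimpleGraph.Walk.nil⟩
    have hvS : v ∉ S := by
      intro hv
      have hbr : T.IsBridge s(v, u) :=
        (SimpleGraph.isAcyclic_iff_forall_adj_isBridge.1 hT.IsAcyclic) hadj
      exact (SimpleGraph.isBridge_iff.1 hbr) hv.symm
    -- any edge from outside S into S must be the edge (v,u)
    have hcross : ∀ w x : V, w ∉ S → x ∈ S → T.Adj w x → w = v ∧ x = u := by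
      intro w x hw hx hadj'
      by_cases he : s(w, x) = s(v, u)
      · rw [Sym2.eq_iff] at he
        rcases he with ⟨rfl, rfl⟩ | ⟨rfl, rfl⟩
        · exact ⟨rfl, rfl⟩
        · exact absurd huS hw
      · exfalso
        have : G'.Adj x w := by
          rw [hG', SimpleGraph.deleteEdges_adj]
          refine ⟨hadj'.symm, fun h => he ?_⟩
          simpa [Sym2.eq_swap] using Set.mem_singleton_iff.1 h
        exact hw (hx.trans this.reachable)
    set B : Set V := A ∩ Sᶜ with hB
    have hvB : v ∈ B := ⟨hvA, hvS⟩
    have huB : u ∉ B := fun h => h.2 huS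
    -- B is a defensive alliance
    have hBDA : IsDefensiveAlliance T B := by
      intro w hwB
      by_cases hwv : w = v
      · subst hwv
        -- degIn B w = a - 1, degIn Bᶜ w ≤ c + 1
        have hsplit : {x | x ∈ A ∧ T.Adj w x} = {x | x ∈ B ∧ T.Adj w x} ∪ {u} := by
          ext x
          simp only [Set.mem_setOf_eq, Set.mem_union, Set.mem_singleton_iff, hB,
            Set.mem_inter_iff, Set.mem_compl_iff]
          constructor
          · rintro ⟨hxA, hx⟩
            by_cases hxS : x ∈ S
            · exact Or.inr (hcross w x hvS hxS hx).2
            · exact Or.inl ⟨⟨hxA, hxS⟩, hx⟩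
          · rintro (⟨⟨hxA, _⟩, hx⟩ | rfl)
            · exact ⟨hxA, hx⟩
            · exact ⟨huA, hadj⟩
        have hdis : Disjoint {x | x ∈ B ∧ T.Adj w x} ({u} : Set V) := by
          rw [Set.disjoint_singleton_right]; exact fun h => huB h.1
        have haB : a = degIn T B w + 1 := by
          rw [ha, degIn, hsplit, Set.ncard_union_eq hdis (Set.toFinite _) (Set.toFinite _),
            Set.ncard_singleton, degIn]
        have hsub2 : {x | x ∈ Bᶜ ∧ T.Adj w x} ⊆ {x | x ∈ Aᶜ ∧ T.Adj w x} ∪ {u} := by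
          rintro x ⟨hxB, hx⟩
          simp only [hB, Set.mem_compl_iff, Set.mem_inter_iff, not_and, not_not] at hxB
          by_cases hxA : x ∈ A
          · exact Or.inr (hcross w x hvS (hxB hxA) hx).2
          · exact Or.inl ⟨hxA, hx⟩
        have hle : degIn T Bᶜ w ≤ c + 1 := by
          calc degIn T Bᶜ w ≤ ({x | x ∈ Aᶜ ∧ T.Adj w x} ∪ {u}).ncard :=
                Set.ncard_le_ncard hsub2 (Set.toFinite _)
            _ ≤ {x | x ∈ Aᶜ ∧ T.Adj w x}.ncard + ({u} : Set V).ncard := Set.ncard_union_le _ _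
            _ = c + 1 := by rw [Set.ncard_singleton]; rfl
        omega
      · -- w ≠ v : degrees unchanged
        have hwS : w ∉ S := hwB.2
        have h1 : {x | x ∈ B ∧ T.Adj w x} = {x | x ∈ A ∧ T.Adj w x} := by
          ext x
          simp only [Set.mem_setOf_eq, hB, Set.mem_inter_iff, Set.mem_compl_iff]
          constructor
          · rintro ⟨⟨hxA, _⟩, hx⟩; exact ⟨hxA, hx⟩
          · rintro ⟨hxA, hx⟩
            refine ⟨⟨hxA, fun hxS => ?_⟩, hx⟩
            exact hwv (hcross w x hwS hxS hx).1
        have h2 : {x | x ∈ Bᶜ ∧ T.Adj w x} = {x | x ∈ Aᶜ ∧ T.Adj w x} := by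
          ext x
          simp only [Set.mem_setOf_eq, hB, Set.mem_compl_iff, Set.mem_inter_iff, not_and, not_not]
          constructor
          · rintro ⟨hxB, hx⟩
            by_cases hxA : x ∈ A
            · exact absurd (hcross w x hwS (hxB hxA) hx).1 hwv
            · exact ⟨hxA, hx⟩
          · rintro ⟨hxA, hx⟩; exact ⟨fun h => absurd h hxA, hx⟩
        have := hDA w hwB.1
        rw [degIn, degIn, h1, h2]
        exact this
    have hssub : B ⊂ A := ⟨Set.inter_subset_left, fun hsub => huB (hsub huA)⟩
    exact hmin B hssub ⟨v, hvB⟩ hBDA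
end

section
/- Let T = (V,E) be a finite tree containing an edge {u,v} with both deg_V(u) ∈ {2,3} and deg_V(v) ∈ {2,3}. Let T_v be the graph (V, E ∖ {e ∈ E : u ∈ e and v ∉ e}) and let X_v be the vertex set of the connected component of T_v containing v; define X_u analogously (with the roles of u and v swapped). Let D_g(H) denote the set of all globally minimal defensive alliances of a graph H. Then D_g(T) = ( D_g(T[X_v]) ∪ D_g(T[X_u]) ∪ {{u,v}} ) ∖ { {u}, {v} }, where T[X] denotes the subgraph of T induced by X. -/
namespace TreeSplitAux

open SimpleGraph Set

set_option linter.unusedSectionVars false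

variable {V : Type*} [Fintype V]

lemma degIn_congr (G : SimpleGraph V) {A B : Set V} (w : V)
    (h : ∀ x, G.Adj w x → (x ∈ A ↔ x ∈ B)) : degIn G A w = degIn G B w := by
  unfold degIn
  congr 1
  ext x
  simp only [Set.mem_setOf_eq]
  exact ⟨fun ⟨hx, ha⟩ => ⟨(h x ha).1 hx, ha⟩, fun ⟨hx, ha⟩ => ⟨(h x ha).2 hx, ha⟩⟩

lemma degIn_add_compl (G : SimpleGraph V) (A : Set V) (w : V) :
    degIn G A w + degIn G Aᶜ w = degIn G Set.univ w := by
  unfold degIn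
  rw [← Set.ncard_union_eq ?_ (Set.toFinite _) (Set.toFinite _)]
  · congr 1; ext x; by_cases hx : x ∈ A <;> simp [hx]
  · rw [Set.disjoint_left]; rintro x ⟨hx, -⟩ ⟨hx', -⟩; exact hx' hx

/-- The `v`-side component (including `u`) after deleting all edges at `u`
except possibly `uv`. -/
def side (T : SimpleGraph V) (u v : V) : Set V :=
  ((T.deleteEdges {e : Sym2 V | u ∈ e ∧ v ∉ e}).connectedComponentMk v).supp

lemma mem_side_iff {T : SimpleGraph V} {u v w : V} :
    w ∈ side T u v ↔ (T.deleteEdges {e : Sym2 V | u ∈ e ∧ v ∉ e}).Reachable w v := by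
  simp [side, ConnectedComponent.mem_supp_iff, ConnectedComponent.eq]

lemma del_adj {T : SimpleGraph V} {u v a b : V} :
    (T.deleteEdges {e : Sym2 V | u ∈ e ∧ v ∉ e}).Adj a b ↔
      T.Adj a b ∧ ((u = a ∨ u = b) → (v = a ∨ v = b)) := by
  simp only [deleteEdges_adj, Set.mem_setOf_eq, Sym2.mem_iff]
  tauto

lemma mem_side_self {T : SimpleGraph V} {u v : V} : v ∈ side T u v :=
  mem_side_iff.2 (Reachable.refl v)

lemma mem_side_left {T : SimpleGraph V} {u v : V} (huv : T.Adj u v) : u ∈ side T u v := by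
  refine mem_side_iff.2 (Adj.reachable ?_)
  exact del_adj.2 ⟨huv, fun _ => Or.inr rfl⟩

lemma side_step {T : SimpleGraph V} {u v x y : V}
    (h : (T.deleteEdges {e : Sym2 V | u ∈ e ∧ v ∉ e}).Adj x y) (hx : x ∈ side T u v) :
    y ∈ side T u v :=
  mem_side_iff.2 (h.symm.reachable.trans (mem_side_iff.1 hx))

lemma walk_ind {G : SimpleGraph V} {P : V → Prop}
    (step : ∀ x y, G.Adj x y → P x → P y) :
    ∀ {a b : V}, G.Walk a b → P a → P b := by
  intro a b p
  induction p with
  | nil => exact id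
  | cons h' p ih => exact fun ha => ih (step _ _ h' ha)

lemma side_cover {T : SimpleGraph V} {u v : V} (hc : T.Connected) (huv : T.Adj u v)
    (w : V) : w ∈ side T u v ∨ w ∈ side T v u := by
  have hvu : T.Adj v u := huv.symm
  refine walk_ind (P := fun z => z ∈ side T u v ∨ z ∈ side T v u) ?_ ((hc.preconnected v w).some) (Or.inl mem_side_self)
  intro x y hxy hx
  by_cases h1 : (u = x ∨ u = y) ∧ ¬(v = x ∨ v = y)
  · -- edge deleted on the v side; present on the u side
    have hGu : (T.deleteEdges {e : Sym2 V | v ∈ e ∧ u ∉ e}).Adj x y :=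
      del_adj.2 ⟨hxy, fun hv => absurd hv h1.2⟩
    rcases h1.1 with h | h
    · exact Or.inr (side_step hGu (h ▸ mem_side_self))
    · exact Or.inl (h ▸ mem_side_left huv)
  · push_neg at h1
    have hGv : (T.deleteEdges {e : Sym2 V | u ∈ e ∧ v ∉ e}).Adj x y := del_adj.2 ⟨hxy, h1⟩
    rcases hx with hx | hx
    · exact Or.inl (side_step hGv hx)
    · by_cases h2 : (v = x ∨ v = y) ∧ ¬(u = x ∨ u = y)
      · rcases h2.1 with h | h
        · exact Or.inl (side_step hGv (h ▸ mem_side_self))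
        · exact Or.inl (h ▸ mem_side_self)
      · push_neg at h2
        have hGu : (T.deleteEdges {e : Sym2 V | v ∈ e ∧ u ∉ e}).Adj x y := del_adj.2 ⟨hxy, h2⟩
        exact Or.inr (side_step hGu hx)

lemma exists_walk_avoid {T : SimpleGraph V} {u v w : V} (hne : v ≠ u)
    (hw : w ∈ side T u v) (hwu : w ≠ u) :
    ∃ p : (T.deleteEdges {e : Sym2 V | u ∈ e ∧ v ∉ e}).Walk v w, u ∉ p.support := by
  classical
  set G := T.deleteEdges {e : Sym2 V | u ∈ e ∧ v ∉ e} with hG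
  obtain ⟨p0⟩ := (mem_side_iff.1 hw).symm
  refine ⟨p0.toPath.1, fun hu => ?_⟩
  have hpath : (p0.toPath.1 : G.Walk v w).IsPath := p0.toPath.2
  -- second vertex of dropUntil is v
  have hvtail : v ∈ ((p0.toPath.1).dropUntil u hu).support.tail := by
    have hq : ((p0.toPath.1).dropUntil u hu : G.Walk u w) = (p0.toPath.1).dropUntil u hu := rfl
    generalize hqq : (p0.toPath.1).dropUntil u hu = q
    cases q with
    | nil => exact absurd rfl (Ne.symm hwu)
    | @cons _ c _ h' q' =>
      have hc : c = v := by
        rcases del_adj.1 h' with ⟨-, himp⟩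
        rcases himp (Or.inl rfl) with h | h
        · exact absurd h hne
        · exact h.symm
      subst hc
      simp [Walk.support_cons]
  have hvtake : v ∈ ((p0.toPath.1).takeUntil u hu).support := Walk.start_mem_support _
  have hnodup := hpath.support_nodup
  rw [← Walk.take_spec (p0.toPath.1) hu, Walk.support_append, List.nodup_append] at hnodup
  exact hnodup.2.2 v hvtake v hvtail rfl

lemma side_inter {T : SimpleGraph V} (hT : T.IsTree) {u v w : V} (huv : T.Adj u v)
    (hw1 : w ∈ side T u v) (hw2 : w ∈ side T v u) : w = u ∨ w = v := by
  by_contra hcon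
  push_neg at hcon
  obtain ⟨p, hp⟩ := exists_walk_avoid huv.ne' hw1 hcon.1
  obtain ⟨q, hq⟩ := exists_walk_avoid huv.ne hw2 hcon.2
  -- transfer to T
  have hpe : ∀ e ∈ p.edges, e ∈ T.edgeSet := fun e he =>
    edgeSet_mono (deleteEdges_le _) (p.edges_subset_edgeSet he)
  have hqe : ∀ e ∈ q.edges, e ∈ T.edgeSet := fun e he =>
    edgeSet_mono (deleteEdges_le _) (q.edges_subset_edgeSet he)
  set pT := p.transfer T hpe with hpT
  set qT := q.transfer T hqe with hqT
  have hpuv : s(u, v) ∉ pT.edges := by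
    intro h
    rw [hpT, Walk.edges_transfer] at h
    exact hp (p.fst_mem_support_of_mem_edges h)
  have hquv : s(u, v) ∉ qT.edges := by
    intro h
    rw [hqT, Walk.edges_transfer] at h
    exact hq (q.snd_mem_support_of_mem_edges h)
  have hbr : T.IsBridge s(u, v) := (isAcyclic_iff_forall_adj_isBridge.1 hT.IsAcyclic) huv
  refine (isBridge_iff.1 hbr) ?_
  rw [reachable_delete_edges_iff_exists_walk]
  refine ⟨qT.append pT.reverse, ?_⟩
  rw [Walk.edges_append, List.mem_append]
  rintro (h | h)
  · exact hquv h
  · rw [Walk.edges_reverse, List.mem_reverse] at h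
    exact hpuv h


lemma adj_u_not_mem_side {T : SimpleGraph V} (hT : T.IsTree) {u v x : V} (huv : T.Adj u v)
    (hx : T.Adj u x) (hxv : x ≠ v) : x ∉ side T u v := by
  intro h
  have hx2 : x ∈ side T v u := by
    have hadj : (T.deleteEdges {e : Sym2 V | v ∈ e ∧ u ∉ e}).Adj u x :=
      del_adj.2 ⟨hx, fun _ => Or.inl rfl⟩
    exact side_step hadj mem_side_self
  rcases side_inter hT huv h hx2 with h' | h'
  · exact hx.ne' h'
  · exact hxv h'

lemma side_closed {T : SimpleGraph V} {u v w x : V} (huv : T.Adj u v)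
    (hw : w ∈ side T u v) (hwu : w ≠ u) (hx : T.Adj w x) : x ∈ side T u v := by
  by_cases hxu : x = u
  · subst hxu; exact mem_side_left huv
  · refine side_step ?_ hw
    refine del_adj.2 ⟨hx, fun h => ?_⟩
    rcases h with h | h
    · exact absurd h.symm hwu
    · exact absurd h.symm hxu

lemma mem_side_adj_u {T : SimpleGraph V} (hT : T.IsTree) {u v x : V} (huv : T.Adj u v)
    (hx : T.Adj u x) (hmem : x ∈ side T u v) : x = v := by
  by_contra h
  exact adj_u_not_mem_side hT huv hx h hmem

/-! ### defensive alliance machinery -/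

lemma DA_restrict {T : SimpleGraph V} {u v : V} (huv : T.Adj u v) {A : Set V}
    (hA : IsDefensiveAlliance T A) (hu : u ∉ A) :
    IsDefensiveAlliance T (A ∩ (side T u v \ {u})) := by
  intro w hw
  have key : ∀ x, T.Adj w x → x ∈ A → x ∈ A ∩ (side T u v \ {u}) := by
    intro x hadj hxA
    refine ⟨hxA, side_closed huv hw.2.1 hw.2.2 hadj, fun hxu => hu (hxu ▸ hxA)⟩
  have h1 : degIn T (A ∩ (side T u v \ {u})) w = degIn T A w :=
    degIn_congr T w (fun x hadj => ⟨fun hx => hx.1, key x hadj⟩)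
  have h2 : degIn T (A ∩ (side T u v \ {u}))ᶜ w = degIn T Aᶜ w := by
    refine degIn_congr T w (fun x hadj => ?_)
    simp only [Set.mem_compl_iff]
    exact ⟨fun hx hxA => hx (key x hadj hxA), fun hx hx' => hx hx'.1⟩
  rw [h1, h2]
  exact hA w hw.1

lemma degIn_induce (T : SimpleGraph V) (X : Set V) (B : Set X) {w : V} (hw : w ∈ X) :
    degIn (T.induce X) B ⟨w, hw⟩ = degIn T (Subtype.val '' B) w := by
  unfold degIn
  rw [← Set.ncard_image_of_injective _ (Subtype.val_injective (p := fun x => x ∈ X))]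
  congr 1
  ext x
  constructor
  · rintro ⟨⟨y, hy⟩, ⟨hyB, hadj⟩, rfl⟩
    exact ⟨⟨⟨y, hy⟩, hyB, rfl⟩, hadj⟩
  · rintro ⟨⟨⟨y, hy⟩, hyB, rfl⟩, hadj⟩
    exact ⟨⟨y, hy⟩, ⟨hyB, hadj⟩, rfl⟩

lemma degIn_induce_compl (T : SimpleGraph V) (X : Set V) (B : Set X) {w : V} (hw : w ∈ X)
    (hnb : ∀ x, T.Adj w x → x ∈ X) :
    degIn (T.induce X) Bᶜ ⟨w, hw⟩ = degIn T (Subtype.val '' B)ᶜ w := by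
  unfold degIn
  rw [← Set.ncard_image_of_injective _ (Subtype.val_injective (p := fun x => x ∈ X))]
  congr 1
  ext x
  constructor
  · rintro ⟨⟨y, hy⟩, ⟨hyB, hadj⟩, rfl⟩
    refine ⟨fun hmem => ?_, hadj⟩
    obtain ⟨z, hz, hzeq⟩ := hmem
    exact hyB (by rwa [Subtype.val_injective hzeq] at hz)
  · rintro ⟨hxnot, hadj⟩
    refine ⟨⟨x, hnb x hadj⟩, ⟨fun hmem => hxnot ⟨⟨x, hnb x hadj⟩, hmem, rfl⟩, hadj⟩, rfl⟩

lemma DA_transfer {T : SimpleGraph V} {u v : V} (huv : T.Adj u v) (B : Set ↥(side T u v))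
    (hB : u ∉ Subtype.val '' B) :
    IsDefensiveAlliance T (Subtype.val '' B) ↔
      IsDefensiveAlliance (T.induce (side T u v)) B := by
  constructor
  · intro h y hy
    obtain ⟨w, hw⟩ := y
    have hwu : w ≠ u := fun he => hB ⟨⟨w, hw⟩, hy, he⟩
    rw [degIn_induce T (side T u v) B hw, degIn_induce_compl T (side T u v) B hw
      (fun x hadj => side_closed huv hw hwu hadj)]
    exact h w ⟨⟨w, hw⟩, hy, rfl⟩
  · rintro h w ⟨⟨w', hw'⟩, hB', rfl⟩
    have hwu : w' ≠ u := fun he => hB ⟨⟨w', hw'⟩, hB', he⟩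
    rw [← degIn_induce T (side T u v) B hw', ← degIn_induce_compl T (side T u v) B hw'
      (fun x hadj => side_closed huv hw' hwu hadj)]
    exact h _ hB'


lemma degIn_pair_left {T : SimpleGraph V} {u v : V} (huv : T.Adj u v) :
    degIn T {u, v} u = 1 := by
  unfold degIn
  have : {x | x ∈ ({u, v} : Set V) ∧ T.Adj u x} = {v} := by
    ext x
    simp only [Set.mem_insert_iff, Set.mem_singleton_iff, Set.mem_setOf_eq]
    constructor
    · rintro ⟨h | h, hadj⟩
      · exact absurd (h ▸ hadj) (T.irrefl)
      · exact h
    · rintro rfl; exact ⟨Or.inr rfl, huv⟩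
  rw [this, Set.ncard_singleton]

lemma pair_DA {T : SimpleGraph V} {u v : V} (huv : T.Adj u v)
    (hdu : degIn T Set.univ u ≤ 3) (hdv : degIn T Set.univ v ≤ 3) :
    IsDefensiveAlliance T {u, v} := by
  have key : ∀ w w' : V, T.Adj w w' → degIn T Set.univ w ≤ 3 →
      degIn T ({w, w'} : Set V)ᶜ w ≤ degIn T {w, w'} w + 1 := by
    intro w w' hadj hd
    have h1 := degIn_pair_left hadj
    have h2 := degIn_add_compl T {w, w'} w
    omega
  intro x hx
  rw [Set.mem_insert_iff, Set.mem_singleton_iff] at hx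
  have hcomm : ({u, v} : Set V) = {v, u} := by ext; simp; tauto
  rcases hx with h | h
  · rw [h]; exact key u v huv hdu
  · rw [h, hcomm]; exact key v u huv.symm hdv

lemma singleton_not_DA {T : SimpleGraph V} {u : V} (hd : 2 ≤ degIn T Set.univ u) :
    ¬ IsDefensiveAlliance T {u} := by
  intro h
  have h1 : degIn T {u} u = 0 := by
    unfold degIn
    convert Set.ncard_empty V
    ext x
    simp only [Set.mem_singleton_iff, Set.mem_setOf_eq, Set.mem_empty_iff_false, iff_false]
    rintro ⟨rfl, hadj⟩
    exact T.irrefl hadj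
  have h2 := degIn_add_compl T {u} u
  have h3 := h u rfl
  omega

/-- `{u}` is a defensive alliance in the induced graph on `side T u v`. -/
lemma singleton_u_DA_induce {T : SimpleGraph V} (hT : T.IsTree) {u v : V} (huv : T.Adj u v) :
    IsDefensiveAlliance (T.induce (side T u v)) {⟨u, mem_side_left huv⟩} := by
  rintro y rfl
  have h1 : degIn (T.induce (side T u v)) {⟨u, mem_side_left huv⟩} ⟨u, mem_side_left huv⟩
      = degIn T {u} u := by
    rw [show ({⟨u, mem_side_left huv⟩} : Set ↥(side T u v)) =
      Subtype.val ⁻¹' {u} from by ext z; simp [Subtype.ext_iff]]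
    rw [degIn_induce T (side T u v) _ (mem_side_left huv)]
    refine degIn_congr T u (fun x hadj => ?_)
    constructor
    · rintro ⟨z, hz, rfl⟩; exact hz
    · rintro rfl; exact absurd hadj (T.irrefl)
  have h2 : degIn (T.induce (side T u v)) ({⟨u, mem_side_left huv⟩} : Set ↥(side T u v))ᶜ
      ⟨u, mem_side_left huv⟩ = 1 := by
    unfold degIn
    have : {y : ↥(side T u v) | y ∈ ({⟨u, mem_side_left huv⟩} : Set ↥(side T u v))ᶜ ∧
        (T.induce (side T u v)).Adj ⟨u, mem_side_left huv⟩ y} =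
        {⟨v, mem_side_self⟩} := by
      ext ⟨x, hx⟩
      simp only [Set.mem_setOf_eq, Set.mem_compl_iff, Set.mem_singleton_iff,
        Subtype.mk_eq_mk, comap_adj, Function.Embedding.coe_subtype]
      constructor
      · rintro ⟨hne, hadj⟩
        exact mem_side_adj_u hT huv hadj hx
      · rintro rfl
        exact ⟨huv.ne', huv⟩
    rw [this, Set.ncard_singleton]
  rw [h1, h2]
  have h3 : degIn T {u} u = 0 := by
    unfold degIn
    convert Set.ncard_empty V
    ext x
    simp only [Set.mem_singleton_iff, Set.mem_setOf_eq, Set.mem_empty_iff_false, iff_false]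
    rintro ⟨rfl, hadj⟩
    exact T.irrefl hadj
  omega


lemma image_preimage_side {X : Set V} (A : Set V) (hA : A ⊆ X) :
    Subtype.val '' ((Subtype.val ⁻¹' A : Set X)) = A := by
  rw [Subtype.image_preimage_coe]
  exact Set.inter_eq_right.2 hA

lemma GMDA_to_induce {T : SimpleGraph V} (hT : T.IsTree) {u v : V} (huv : T.Adj u v)
    {A : Set V} (hGM : IsGloballyMinimalDA T A) (hu : u ∉ A) (hA : A ⊆ side T u v) :
    ∃ B : Set ↥(side T u v),
      IsGloballyMinimalDA (T.induce (side T u v)) B ∧ Subtype.val '' B = A := by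
  obtain ⟨hne, hDA, hmin⟩ := hGM
  refine ⟨Subtype.val ⁻¹' A, ⟨?_, ?_, ?_⟩, image_preimage_side A hA⟩
  · obtain ⟨a, ha⟩ := hne
    exact ⟨⟨a, hA ha⟩, ha⟩
  · have := (DA_transfer huv (Subtype.val ⁻¹' A) ?_).1 ?_
    · exact this
    · rw [image_preimage_side A hA]; exact hu
    · rw [image_preimage_side A hA]; exact hDA
  · intro B' hB' hB'ne hB'DA
    have hsubA : Subtype.val '' B' ⊆ A := by
      intro x hx
      obtain ⟨y, hy, rfl⟩ := hx
      exact hB'.1 hy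
    have huB' : u ∉ Subtype.val '' B' := fun h => hu (hsubA h)
    have hDA' : IsDefensiveAlliance T (Subtype.val '' B') :=
      (DA_transfer huv B' huB').2 hB'DA
    have hne' : (Subtype.val '' B').Nonempty := hB'ne.image _
    have hss : Subtype.val '' B' ⊂ A := by
      refine ⟨hsubA, fun hAs => ?_⟩
      refine hB'.2 ?_
      intro y hy
      have : (y : V) ∈ Subtype.val '' B' := hAs (hy)
      obtain ⟨z, hz, hzeq⟩ := this
      rwa [Subtype.val_injective hzeq] at hz
    exact hmin _ hss hne' hDA'

lemma GMDA_of_induce {T : SimpleGraph V} (hT : T.IsTree) {u v : V} (huv : T.Adj u v)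
    {B : Set ↥(side T u v)} (hGM : IsGloballyMinimalDA (T.induce (side T u v)) B)
    (hne : Subtype.val '' B ≠ {u}) :
    IsGloballyMinimalDA T (Subtype.val '' B) := by
  obtain ⟨hBne, hBDA, hBmin⟩ := hGM
  have huB : u ∉ Subtype.val '' B := by
    rintro ⟨y, hy, hyeq⟩
    have hy' : y = ⟨u, mem_side_left huv⟩ := Subtype.ext hyeq
    subst hy'
    by_cases hss : {(⟨u, mem_side_left huv⟩ : ↥(side T u v))} ⊂ B
    · exact hBmin _ hss ⟨_, rfl⟩ (singleton_u_DA_induce hT huv)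
    · have hBeq : B = {⟨u, mem_side_left huv⟩} := by
        by_contra hne'
        exact hss ⟨Set.singleton_subset_iff.2 hy, fun h => hne' (subset_antisymm (h) (Set.singleton_subset_iff.2 hy))⟩
      apply hne
      rw [hBeq]
      ext x; simp
  refine ⟨hBne.image _, (DA_transfer huv B huB).2 hBDA, ?_⟩
  intro A' hA' hA'ne hA'DA
  have hA'sub : A' ⊆ Subtype.val '' B := hA'.1
  have hA'X : A' ⊆ side T u v := fun x hx => by
    obtain ⟨y, _, rfl⟩ := hA'sub hx; exact y.2
  have huA' : u ∉ A' := fun h => huB (hA'sub h)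
  have hval : Subtype.val '' ((Subtype.val ⁻¹' A' : Set ↥(side T u v))) = A' :=
    image_preimage_side A' hA'X
  have hDA' : IsDefensiveAlliance (T.induce (side T u v)) (Subtype.val ⁻¹' A') := by
    refine (DA_transfer huv _ ?_).1 ?_
    · rw [hval]; exact huA'
    · rw [hval]; exact hA'DA
  have hss : (Subtype.val ⁻¹' A' : Set ↥(side T u v)) ⊂ B := by
    constructor
    · intro y hy
      obtain ⟨z, hz, hzeq⟩ := hA'sub hy
      rwa [Subtype.val_injective hzeq] at hz
    · intro hsub
      refine hA'.2 ?_
      intro x hx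
      obtain ⟨y, hy, rfl⟩ := hx
      exact hsub hy
  have hne' : (Subtype.val ⁻¹' A' : Set ↥(side T u v)).Nonempty := by
    obtain ⟨a, ha⟩ := hA'ne
    exact ⟨⟨a, hA'X ha⟩, ha⟩
  exact hBmin _ hss hne' hDA'

lemma classify {T : SimpleGraph V} (hT : T.IsTree) {u v : V} (huv : T.Adj u v)
    (hdu : degIn T Set.univ u ≤ 3) (hdv : degIn T Set.univ v ≤ 3)
    {A : Set V} (hGM : IsGloballyMinimalDA T A) :
    A = {u, v} ∨ (u ∉ A ∧ A ⊆ side T u v) ∨ (v ∉ A ∧ A ⊆ side T v u) := by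
  obtain ⟨hne, hDA, hmin⟩ := hGM
  by_cases hu : u ∈ A
  · by_cases hv : v ∈ A
    · left
      have hsub : ({u, v} : Set V) ⊆ A := by
        intro x hx
        rw [Set.mem_insert_iff, Set.mem_singleton_iff] at hx
        rcases hx with rfl | rfl <;> assumption
      by_contra hcon
      exact hmin _ ⟨hsub, fun h => hcon (subset_antisymm (h) hsub)⟩
        ⟨u, Or.inl rfl⟩ (pair_DA huv hdu hdv)
    · -- u ∈ A, v ∉ A : A is contained in side T v u
      right; right
      have hC : IsDefensiveAlliance T (A ∩ (side T v u \ {v})) :=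
        DA_restrict huv.symm hDA hv
      have hCne : (A ∩ (side T v u \ {v})).Nonempty :=
        ⟨u, hu, mem_side_self, huv.ne⟩
      have hCeq : A ∩ (side T v u \ {v}) = A := by
        by_contra hcon
        exact hmin _ ⟨Set.inter_subset_left, fun h =>
          hcon (subset_antisymm Set.inter_subset_left h)⟩ hCne hC
      refine ⟨hv, ?_⟩
      rw [← hCeq]
      exact fun x hx => hx.2.1
  · -- u ∉ A
    by_cases hW : ∃ a ∈ A, a ∈ side T u v \ {u}
    · right; left
      have hC : IsDefensiveAlliance T (A ∩ (side T u v \ {u})) :=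
        DA_restrict huv hDA hu
      obtain ⟨a, ha1, ha2⟩ := hW
      have hCne : (A ∩ (side T u v \ {u})).Nonempty := ⟨a, ha1, ha2⟩
      have hCeq : A ∩ (side T u v \ {u}) = A := by
        by_contra hcon
        exact hmin _ ⟨Set.inter_subset_left, fun h =>
          hcon (subset_antisymm Set.inter_subset_left h)⟩ hCne hC
      refine ⟨hu, ?_⟩
      rw [← hCeq]
      exact fun x hx => hx.2.1
    · right; right
      push_neg at hW
      have hsub : A ⊆ side T v u := by
        intro a ha
        rcases side_cover hT.isConnected huv a with h | h
        · by_cases hau : a = u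
          · exact absurd (hau ▸ ha) hu
          · exact absurd ⟨h, hau⟩ (hW a ha)
        · exact h
      refine ⟨fun hv => ?_, hsub⟩
      exact hW v hv ⟨mem_side_self, huv.ne'⟩


lemma eq_singleton_of_ssubset_pair {u v : V} {B : Set V} (hss : B ⊂ ({u, v} : Set V))
    (hBne : B.Nonempty) : B = {u} ∨ B = {v} := by
  have hsub : B ⊆ {u, v} := hss.subset
  have hBne2 : B ≠ {u, v} := hss.ne
  by_cases hu : u ∈ B
  · by_cases hv : v ∈ B
    · exfalso
      refine hBne2 (subset_antisymm hsub ?_)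
      intro x hx
      rw [Set.mem_insert_iff, Set.mem_singleton_iff] at hx
      rcases hx with rfl | rfl <;> assumption
    · left
      refine subset_antisymm ?_ (Set.singleton_subset_iff.2 hu)
      intro x hx
      have hm := hsub hx
      rw [Set.mem_insert_iff, Set.mem_singleton_iff] at hm
      rcases hm with h | h
      · exact h
      · exact absurd (h ▸ hx) hv
  · right
    refine subset_antisymm ?_ ?_
    · intro x hx
      have hm := hsub hx
      rw [Set.mem_insert_iff, Set.mem_singleton_iff] at hm
      rcases hm with h | h
      · exact absurd (h ▸ hx) hu
      · exact h
    · obtain ⟨b, hb⟩ := hBne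
      have hm := hsub hb
      rw [Set.mem_insert_iff, Set.mem_singleton_iff] at hm
      rcases hm with h | h
      · exact absurd (h ▸ hb) hu
      · exact Set.singleton_subset_iff.2 (h ▸ hb)

end TreeSplitAux

open TreeSplitAux

/-- Splitting a finite tree at an edge `{u,v}` whose endpoints both
have degree 2 or 3: with `T_v = (V, E ∖ {e ∈ E : u ∈ e ∧ v ∉ e})`, `X_v` the
vertex set of the connected component of `T_v` containing `v` (and `X_u`
defined symmetrically), the globally minimal defensive alliances of `T` are
`(D_g(T[X_v]) ∪ D_g(T[X_u]) ∪ {{u,v}}) ∖ {{u}, {v}}`. -/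


theorem globallyMinimalDA_tree_split {V : Type*} [Fintype V]
    (T : SimpleGraph V) (hT : T.IsTree) (u v : V) (huv : T.Adj u v)
    (hdu : degIn T Set.univ u = 2 ∨ degIn T Set.univ u = 3)
    (hdv : degIn T Set.univ v = 2 ∨ degIn T Set.univ v = 3)
    (Xv Xu : Set V)
    (hXv : Xv = ((T.deleteEdges {e : Sym2 V | u ∈ e ∧ v ∉ e}).connectedComponentMk v).supp)
    (hXu : Xu = ((T.deleteEdges {e : Sym2 V | v ∈ e ∧ u ∉ e}).connectedComponentMk u).supp) :
    {A : Set V | IsGloballyMinimalDA T A} =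
      (((fun B : Set Xv => Subtype.val '' B) ''
          {B : Set Xv | IsGloballyMinimalDA (T.induce Xv) B}) ∪
       ((fun B : Set Xu => Subtype.val '' B) ''
          {B : Set Xu | IsGloballyMinimalDA (T.induce Xu) B}) ∪
       {({u, v} : Set V)}) \ {({u} : Set V), ({v} : Set V)} := by
  have hXv' : Xv = side T u v := hXv
  have hXu' : Xu = side T v u := hXu
  subst hXv' hXu'
  have hdu3 : degIn T Set.univ u ≤ 3 := by rcases hdu with h | h <;> omega
  have hdu2 : 2 ≤ degIn T Set.univ u := by rcases hdu with h | h <;> omega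
  have hdv3 : degIn T Set.univ v ≤ 3 := by rcases hdv with h | h <;> omega
  have hdv2 : 2 ≤ degIn T Set.univ v := by rcases hdv with h | h <;> omega
  have hAu : ¬ IsDefensiveAlliance T {u} := singleton_not_DA hdu2
  have hAv : ¬ IsDefensiveAlliance T {v} := singleton_not_DA hdv2
  ext A
  simp only [Set.mem_setOf_eq, Set.mem_diff, Set.mem_union, Set.mem_image,
    Set.mem_singleton_iff, Set.mem_insert_iff, not_or]
  constructor
  · intro hGM
    have hnsu : A ≠ {u} := by rintro rfl; exact hAu hGM.2.1
    have hnsv : A ≠ {v} := by rintro rfl; exact hAv hGM.2.1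
    refine ⟨?_, hnsu, hnsv⟩
    rcases classify hT huv hdu3 hdv3 hGM with h | ⟨hu, hsub⟩ | ⟨hv, hsub⟩
    · exact Or.inr h
    · obtain ⟨B, hB, hBeq⟩ := GMDA_to_induce hT huv hGM hu hsub
      exact Or.inl (Or.inl ⟨B, hB, hBeq⟩)
    · obtain ⟨B, hB, hBeq⟩ := GMDA_to_induce hT huv.symm hGM hv hsub
      exact Or.inl (Or.inr ⟨B, hB, hBeq⟩)
  · rintro ⟨h1, hnsu, hnsv⟩
    rcases h1 with (⟨B, hB, rfl⟩ | ⟨B, hB, rfl⟩) | rfl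
    · exact GMDA_of_induce hT huv hB hnsu
    · exact GMDA_of_induce hT huv.symm hB hnsv
    · refine ⟨⟨u, Or.inl rfl⟩, pair_DA huv hdu3 hdv3, ?_⟩
      intro B hss hBne hBDA
      rcases eq_singleton_of_ssubset_pair hss hBne with rfl | rfl
      · exact hAu hBDA
      · exact hAv hBDA
end

section
/- Let T = (V,E) be a finite tree and let I(T) = {v ∈ V : deg_V(v) ∈ {2,3}}. If |I(T)| ≥ |V|/2, then there exist two adjacent vertices of T that both belong to I(T). -/
/-- In a finite tree `T`, if `I(T) = {v : deg_V(v) ∈ {2,3}}`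
satisfies `|I(T)| ≥ |V|/2`, then some edge of `T` joins two vertices of
`I(T)`. -/
theorem tree_adjacent_low_degree {V : Type*} [Fintype V]
    (T : SimpleGraph V) (hT : T.IsTree)
    (h : Fintype.card V ≤ 2 * {v | degIn T Set.univ v = 2 ∨ degIn T Set.univ v = 3}.ncard) :
    ∃ a b : V, T.Adj a b ∧
      (degIn T Set.univ a = 2 ∨ degIn T Set.univ a = 3) ∧
      (degIn T Set.univ b = 2 ∨ degIn T Set.univ b = 3) := by
  classical
  -- degIn over univ is the degree
  have hdeg : ∀ v : V, degIn T Set.univ v = T.degree v := by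
    intro v
    have hset : {u | u ∈ (Set.univ : Set V) ∧ T.Adj v u} = ↑(T.neighborFinset v) := by
      ext u; simp
    rw [degIn, hset, Set.ncard_coe_finset, SimpleGraph.card_neighborFinset_eq_degree]
  by_contra hcon
  push_neg at hcon
  set I : Finset V := Finset.univ.filter (fun v => T.degree v = 2 ∨ T.degree v = 3) with hI
  have hIset : {v | degIn T Set.univ v = 2 ∨ degIn T Set.univ v = 3} = (I : Set V) := by
    ext v; simp [hI, hdeg v]
  have hInd : ∀ a ∈ I, ∀ b ∈ I, ¬ T.Adj a b := by
    intro a ha b hb hab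
    simp only [hI, Finset.mem_filter] at ha hb
    have h2 := hcon a b hab (by rw [hdeg a]; exact ha.2)
    rw [hdeg b] at h2
    tauto
  -- darts with head in I
  set D : Finset T.Dart := Finset.univ.filter (fun d => d.fst ∈ I) with hD
  have hDcard : D.card = ∑ v ∈ I, T.degree v := by
    rw [hD]
    rw [Finset.card_eq_sum_card_fiberwise (f := fun d : T.Dart => d.fst) (t := I)
      (s := Finset.univ.filter (fun d : T.Dart => d.fst ∈ I))
      (fun d hd => (Finset.mem_filter.mp hd).2)]
    refine Finset.sum_congr rfl fun v hv => ?_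
    rw [← SimpleGraph.dart_fst_fiber_card_eq_degree]
    congr 1
    ext d
    simp only [Finset.mem_filter, Finset.mem_univ, true_and]
    constructor
    · rintro ⟨_, h2⟩; exact h2
    · rintro rfl; exact ⟨hv, rfl⟩
  -- the edge map is injective on D
  have hinj : Set.InjOn (fun d : T.Dart => d.edge) D := by
    intro d1 h1 d2 h2 he
    simp only [hD, Finset.coe_filter, Set.mem_setOf_eq] at h1 h2
    rcases (SimpleGraph.dart_edge_eq_iff d1 d2).mp he with rfl | rfl
    · rfl
    · exact absurd d2.adj (hInd _ h2.2 _ h1.2)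
  have hDle : D.card ≤ T.edgeFinset.card :=
    Finset.card_le_card_of_injOn (fun d : T.Dart => d.edge)
      (fun d _ => SimpleGraph.mem_edgeFinset.mpr d.edge_mem) hinj
  have hsum : 2 * I.card ≤ ∑ v ∈ I, T.degree v := by
    calc 2 * I.card = ∑ _v ∈ I, 2 := by rw [Finset.sum_const, smul_eq_mul, Nat.mul_comm]
    _ ≤ ∑ v ∈ I, T.degree v := Finset.sum_le_sum (fun v hv => by
        rcases (Finset.mem_filter.mp hv).2 with h2 | h3 <;> omega)
  have hedge : T.edgeFinset.card + 1 = Fintype.card V := hT.card_edgeFinset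
  rw [hIset, Set.ncard_coe_finset] at h
  omega
end

section
/- Let k ≥ 1 and let T be the tree with vertex set {a,b,c} ∪ {v_1,…,v_k} and edges {a,b}, {b,c}, and {a,v_i} for 1 ≤ i ≤ k. For every subset A′ ⊆ {v_1,…,v_k} with |A′| = ⌈(k−2)/2⌉, the set A = {a,b} ∪ A′ is a locally minimal defensive alliance of T. -/
/-- The caterpillar tree with spine `a = Sum.inl 0`, `b = Sum.inl 1`,
`c = Sum.inl 2` and leaves `v_i = Sum.inr i`; edges `{a,b}`, `{b,c}` and
`{a, v_i}` for `1 ≤ i ≤ k`. -/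
def caterpillarTree (k : ℕ) : SimpleGraph (Fin 3 ⊕ Fin k) :=
  SimpleGraph.fromRel (fun x y =>
    (x = Sum.inl 0 ∧ y = Sum.inl 1) ∨
    (x = Sum.inl 1 ∧ y = Sum.inl 2) ∨
    (∃ i : Fin k, x = Sum.inl 0 ∧ y = Sum.inr i))

lemma cat_adj (k : ℕ) (x y : Fin 3 ⊕ Fin k) :
    (caterpillarTree k).Adj x y ↔
      (x = Sum.inl 0 ∧ y = Sum.inl 1) ∨ (x = Sum.inl 1 ∧ y = Sum.inl 0) ∨
      (x = Sum.inl 1 ∧ y = Sum.inl 2) ∨ (x = Sum.inl 2 ∧ y = Sum.inl 1) ∨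
      (∃ i, x = Sum.inl 0 ∧ y = Sum.inr i) ∨ (∃ i, x = Sum.inr i ∧ y = Sum.inl 0) := by
  simp only [caterpillarTree, SimpleGraph.fromRel_adj]
  constructor
  · rintro ⟨hne, (⟨rfl,rfl⟩|⟨rfl,rfl⟩|⟨i,rfl,rfl⟩)|(⟨rfl,rfl⟩|⟨rfl,rfl⟩|⟨i,rfl,rfl⟩)⟩ <;> simp
  · rintro (⟨rfl,rfl⟩|⟨rfl,rfl⟩|⟨rfl,rfl⟩|⟨rfl,rfl⟩|⟨i,rfl,rfl⟩|⟨i,rfl,rfl⟩) <;>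
      exact ⟨by simp, by simp⟩

lemma adj_a (k : ℕ) (u : Fin 3 ⊕ Fin k) :
    (caterpillarTree k).Adj (Sum.inl 0) u ↔ u = Sum.inl 1 ∨ ∃ i, u = Sum.inr i := by
  rw [cat_adj]
  constructor
  · rintro (⟨h,rfl⟩|⟨h,rfl⟩|⟨h,rfl⟩|⟨h,rfl⟩|⟨i,h,rfl⟩|⟨i,h,rfl⟩) <;> simp_all
  · rintro (rfl|⟨i,rfl⟩) <;> simp

lemma adj_b (k : ℕ) (u : Fin 3 ⊕ Fin k) :
    (caterpillarTree k).Adj (Sum.inl 1) u ↔ u = Sum.inl 0 ∨ u = Sum.inl 2 := by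
  rw [cat_adj]
  constructor
  · rintro (⟨h,rfl⟩|⟨h,rfl⟩|⟨h,rfl⟩|⟨h,rfl⟩|⟨i,h,rfl⟩|⟨i,h,rfl⟩) <;> simp_all
  · rintro (rfl|rfl) <;> simp

lemma adj_leaf (k : ℕ) (i : Fin k) (u : Fin 3 ⊕ Fin k) :
    (caterpillarTree k).Adj (Sum.inr i) u ↔ u = Sum.inl 0 := by
  rw [cat_adj]
  constructor
  · rintro (⟨h,rfl⟩|⟨h,rfl⟩|⟨h,rfl⟩|⟨h,rfl⟩|⟨j,h,rfl⟩|⟨j,h,rfl⟩) <;> simp_all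
  · rintro rfl; simp

section degs
variable {k : ℕ} (A' : Set (Fin k))

-- degree of a inside A
lemma deg_A_a :
    degIn (caterpillarTree k) ({Sum.inl 0, Sum.inl 1} ∪ (Sum.inr '' A')) (Sum.inl 0)
      = A'.ncard + 1 := by
  have h : {u | u ∈ ({Sum.inl 0, Sum.inl 1} ∪ (Sum.inr '' A') : Set (Fin 3 ⊕ Fin k))
      ∧ (caterpillarTree k).Adj (Sum.inl 0) u}
      = insert (Sum.inl 1) (Sum.inr '' A') := by
    ext u; simp [adj_a]; aesop
  rw [degIn, h, Set.ncard_insert_of_notMem (by simp) (Set.toFinite _),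
    Set.ncard_image_of_injective _ Sum.inr_injective]

lemma deg_Ac_a :
    degIn (caterpillarTree k) ({Sum.inl 0, Sum.inl 1} ∪ (Sum.inr '' A'))ᶜ (Sum.inl 0)
      = A'ᶜ.ncard := by
  have h : {u | u ∈ ({Sum.inl 0, Sum.inl 1} ∪ (Sum.inr '' A') : Set (Fin 3 ⊕ Fin k))ᶜ
      ∧ (caterpillarTree k).Adj (Sum.inl 0) u} = Sum.inr '' A'ᶜ := by
    ext u; simp [adj_a]; aesop
  rw [degIn, h, Set.ncard_image_of_injective _ Sum.inr_injective]

lemma deg_A_b :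
    degIn (caterpillarTree k) ({Sum.inl 0, Sum.inl 1} ∪ (Sum.inr '' A')) (Sum.inl 1)
      = 1 := by
  have h : {u | u ∈ ({Sum.inl 0, Sum.inl 1} ∪ (Sum.inr '' A') : Set (Fin 3 ⊕ Fin k))
      ∧ (caterpillarTree k).Adj (Sum.inl 1) u} = {Sum.inl 0} := by
    ext u; simp [adj_b]; aesop
  rw [degIn, h, Set.ncard_singleton]

lemma deg_Ac_b :
    degIn (caterpillarTree k) ({Sum.inl 0, Sum.inl 1} ∪ (Sum.inr '' A'))ᶜ (Sum.inl 1)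
      = 1 := by
  have h : {u | u ∈ ({Sum.inl 0, Sum.inl 1} ∪ (Sum.inr '' A') : Set (Fin 3 ⊕ Fin k))ᶜ
      ∧ (caterpillarTree k).Adj (Sum.inl 1) u} = {Sum.inl 2} := by
    ext u; simp [adj_b]; aesop
  rw [degIn, h, Set.ncard_singleton]

lemma deg_A_leaf (i : Fin k) :
    degIn (caterpillarTree k) ({Sum.inl 0, Sum.inl 1} ∪ (Sum.inr '' A')) (Sum.inr i)
      = 1 := by
  have h : {u | u ∈ ({Sum.inl 0, Sum.inl 1} ∪ (Sum.inr '' A') : Set (Fin 3 ⊕ Fin k))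
      ∧ (caterpillarTree k).Adj (Sum.inr i) u} = {Sum.inl 0} := by
    ext u; simp [adj_leaf]; aesop
  rw [degIn, h, Set.ncard_singleton]

lemma deg_Ac_leaf (i : Fin k) :
    degIn (caterpillarTree k) ({Sum.inl 0, Sum.inl 1} ∪ (Sum.inr '' A'))ᶜ (Sum.inr i)
      = 0 := by
  have h : {u | u ∈ ({Sum.inl 0, Sum.inl 1} ∪ (Sum.inr '' A') : Set (Fin 3 ⊕ Fin k))ᶜ
      ∧ (caterpillarTree k).Adj (Sum.inr i) u} = ∅ := by
    ext u; simp [adj_leaf]; aesop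
  rw [degIn, h, Set.ncard_empty]

-- removal of a
lemma deg_B1_b :
    degIn (caterpillarTree k)
      (({Sum.inl 0, Sum.inl 1} ∪ (Sum.inr '' A')) \ {Sum.inl 0}) (Sum.inl 1) = 0 := by
  have h : {u | u ∈ (({Sum.inl 0, Sum.inl 1} ∪ (Sum.inr '' A') : Set (Fin 3 ⊕ Fin k))
      \ {Sum.inl 0}) ∧ (caterpillarTree k).Adj (Sum.inl 1) u} = ∅ := by
    ext u; simp [adj_b]; aesop
  rw [degIn, h, Set.ncard_empty]

lemma deg_B1c_b :
    degIn (caterpillarTree k)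
      ((({Sum.inl 0, Sum.inl 1} ∪ (Sum.inr '' A')) \ {Sum.inl 0})ᶜ) (Sum.inl 1) = 2 := by
  have h : {u | u ∈ ((({Sum.inl 0, Sum.inl 1} ∪ (Sum.inr '' A') : Set (Fin 3 ⊕ Fin k))
      \ {Sum.inl 0})ᶜ) ∧ (caterpillarTree k).Adj (Sum.inl 1) u}
      = {Sum.inl 0, Sum.inl 2} := by
    ext u; simp [adj_b]; aesop
  rw [degIn, h, Set.ncard_pair (by simp)]

-- removal of b
lemma deg_B2_a :
    degIn (caterpillarTree k)
      (({Sum.inl 0, Sum.inl 1} ∪ (Sum.inr '' A')) \ {Sum.inl 1}) (Sum.inl 0)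
      = A'.ncard := by
  have h : {u | u ∈ (({Sum.inl 0, Sum.inl 1} ∪ (Sum.inr '' A') : Set (Fin 3 ⊕ Fin k))
      \ {Sum.inl 1}) ∧ (caterpillarTree k).Adj (Sum.inl 0) u} = Sum.inr '' A' := by
    ext u; simp [adj_a]; aesop
  rw [degIn, h, Set.ncard_image_of_injective _ Sum.inr_injective]

lemma deg_B2c_a :
    degIn (caterpillarTree k)
      ((({Sum.inl 0, Sum.inl 1} ∪ (Sum.inr '' A')) \ {Sum.inl 1})ᶜ) (Sum.inl 0)
      = A'ᶜ.ncard + 1 := by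
  have h : {u | u ∈ ((({Sum.inl 0, Sum.inl 1} ∪ (Sum.inr '' A') : Set (Fin 3 ⊕ Fin k))
      \ {Sum.inl 1})ᶜ) ∧ (caterpillarTree k).Adj (Sum.inl 0) u}
      = insert (Sum.inl 1) (Sum.inr '' A'ᶜ) := by
    ext u; simp [adj_a]; aesop
  rw [degIn, h, Set.ncard_insert_of_notMem (by simp) (Set.toFinite _),
    Set.ncard_image_of_injective _ Sum.inr_injective]

-- removal of a leaf i ∈ A'
lemma deg_B3_a (i : Fin k) :
    degIn (caterpillarTree k)
      (({Sum.inl 0, Sum.inl 1} ∪ (Sum.inr '' A')) \ {Sum.inr i}) (Sum.inl 0)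
      = (A' \ {i}).ncard + 1 := by
  have h : {u | u ∈ (({Sum.inl 0, Sum.inl 1} ∪ (Sum.inr '' A') : Set (Fin 3 ⊕ Fin k))
      \ {Sum.inr i}) ∧ (caterpillarTree k).Adj (Sum.inl 0) u}
      = insert (Sum.inl 1) (Sum.inr '' (A' \ {i})) := by
    ext u; simp [adj_a]; aesop
  rw [degIn, h, Set.ncard_insert_of_notMem (by simp) (Set.toFinite _),
    Set.ncard_image_of_injective _ Sum.inr_injective]

lemma deg_B3c_a (i : Fin k) :
    degIn (caterpillarTree k)
      ((({Sum.inl 0, Sum.inl 1} ∪ (Sum.inr '' A')) \ {Sum.inr i})ᶜ) (Sum.inl 0)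
      = (A' \ {i})ᶜ.ncard := by
  have h : {u | u ∈ ((({Sum.inl 0, Sum.inl 1} ∪ (Sum.inr '' A') : Set (Fin 3 ⊕ Fin k))
      \ {Sum.inr i})ᶜ) ∧ (caterpillarTree k).Adj (Sum.inl 0) u}
      = Sum.inr '' (A' \ {i})ᶜ := by
    ext u; simp [adj_a, Set.mem_diff]; aesop
  rw [degIn, h, Set.ncard_image_of_injective _ Sum.inr_injective]

end degs


/-- For `k ≥ 1` and every `A' ⊆ {v_1,…,v_k}` with
`|A'| = ⌈(k-2)/2⌉`, the set `{a,b} ∪ A'` is a locally minimal defensive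
alliance of the caterpillar tree. -/
theorem locallyMinimalDA_caterpillar (k : ℕ) (hk : 1 ≤ k)
    (A' : Set (Fin k)) (hcard : A'.ncard = (k - 2 + 1) / 2) :
    IsLocallyMinimalDA (caterpillarTree k)
      ({Sum.inl 0, Sum.inl 1} ∪ (Sum.inr '' A')) := by
  have hcompl : A'.ncard + A'ᶜ.ncard = k := by
    have := Set.ncard_add_ncard_compl A'
    simpa using this
  refine ⟨⟨Sum.inl 0, by simp⟩, ?_, ?_⟩
  · -- defensive alliance
    rintro (v | i) hv
    · have hv3 : v = 0 ∨ v = 1 ∨ v = 2 := by fin_omega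
      rcases hv3 with rfl | rfl | rfl
      · rw [deg_A_a, deg_Ac_a]; omega
      · rw [deg_A_b, deg_Ac_b]; omega
      · simp at hv
    · rw [deg_A_leaf, deg_Ac_leaf]; omega
  · -- locally minimal
    rintro (v | i) hv ⟨-, hDA⟩
    · have hv3 : v = 0 ∨ v = 1 ∨ v = 2 := by fin_omega
      rcases hv3 with rfl | rfl | rfl
      · -- remove a; b fails
        have hb : (Sum.inl 1 : Fin 3 ⊕ Fin k) ∈
            ({Sum.inl 0, Sum.inl 1} ∪ (Sum.inr '' A') : Set (Fin 3 ⊕ Fin k)) \ {Sum.inl 0} := by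
          simp
        have := hDA _ hb
        rw [deg_B1_b, deg_B1c_b] at this
        omega
      · -- remove b; a fails
        have ha : (Sum.inl 0 : Fin 3 ⊕ Fin k) ∈
            ({Sum.inl 0, Sum.inl 1} ∪ (Sum.inr '' A') : Set (Fin 3 ⊕ Fin k)) \ {Sum.inl 1} := by
          simp
        have := hDA _ ha
        rw [deg_B2_a, deg_B2c_a] at this
        omega
      · simp at hv
    · -- remove leaf i ∈ A'; a fails
      have hi : i ∈ A' := by
        rcases hv with hv | hv
        · simp at hv
        · simpa using hv
      have ha : (Sum.inl 0 : Fin 3 ⊕ Fin k) ∈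
          ({Sum.inl 0, Sum.inl 1} ∪ (Sum.inr '' A') : Set (Fin 3 ⊕ Fin k)) \ {Sum.inr i} := by
        simp
      have hkey := hDA _ ha
      rw [deg_B3_a, deg_B3c_a] at hkey
      have h1 : (A' \ {i}).ncard = A'.ncard - 1 :=
        Set.ncard_diff_singleton_of_mem hi
      have h2 : (A' \ {i}).ncard + (A' \ {i})ᶜ.ncard = k := by
        have := Set.ncard_add_ncard_compl (A' \ {i})
        simpa using this
      have h3 : 0 < A'.ncard := Set.ncard_pos (Set.toFinite _) |>.2 ⟨i, hi⟩
      omega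
end

section
/- Let k ≥ 1 and let T be the tree with vertex set {a,b,c} ∪ {v_1,…,v_k} and edges {a,b}, {b,c}, and {a,v_i} for 1 ≤ i ≤ k. Then T has at least (k+1) + binom(k, ⌈(k−2)/2⌉) distinct locally minimal defensive alliances. -/
namespace CatAux

variable {k : ℕ}

lemma adj_a (u : Fin 3 ⊕ Fin k) :
    (caterpillarTree k).Adj (Sum.inl 0) u ↔ u = Sum.inl 1 ∨ ∃ i, u = Sum.inr i := by
  simp [caterpillarTree, SimpleGraph.fromRel_adj]; aesop

lemma adj_b (u : Fin 3 ⊕ Fin k) :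
    (caterpillarTree k).Adj (Sum.inl 1) u ↔ u = Sum.inl 0 ∨ u = Sum.inl 2 := by
  simp [caterpillarTree, SimpleGraph.fromRel_adj]; aesop

lemma adj_c (u : Fin 3 ⊕ Fin k) :
    (caterpillarTree k).Adj (Sum.inl 2) u ↔ u = Sum.inl 1 := by
  simp [caterpillarTree, SimpleGraph.fromRel_adj]; aesop

lemma adj_leaf (i : Fin k) (u : Fin 3 ⊕ Fin k) :
    (caterpillarTree k).Adj (Sum.inr i) u ↔ u = Sum.inl 0 := by
  simp [caterpillarTree, SimpleGraph.fromRel_adj]; aesop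

lemma ncard_inr_image (T : Finset (Fin k)) :
    (Sum.inr '' (T : Set (Fin k)) : Set (Fin 3 ⊕ Fin k)).ncard = T.card := by
  rw [Set.ncard_image_of_injective _ Sum.inr_injective, Set.ncard_coe_finset]

lemma degIn_def (X : Set (Fin 3 ⊕ Fin k)) (v : Fin 3 ⊕ Fin k) :
    degIn (caterpillarTree k) X v = {u | u ∈ X ∧ (caterpillarTree k).Adj v u}.ncard := rfl

lemma lmda_c : IsLocallyMinimalDA (caterpillarTree k) {Sum.inl 2} := by
  refine ⟨⟨_, rfl⟩, ?_, ?_⟩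
  · intro v hv
    rcases hv with rfl
    have h1 : {u | u ∈ ({Sum.inl 2} : Set (Fin 3 ⊕ Fin k)) ∧ (caterpillarTree k).Adj (Sum.inl 2) u} = ∅ := by
      ext u; simp [adj_c]; rintro rfl; simp
    have h2 : {u | u ∈ ({Sum.inl 2} : Set (Fin 3 ⊕ Fin k))ᶜ ∧ (caterpillarTree k).Adj (Sum.inl 2) u} = {Sum.inl 1} := by
      ext u; simp only [Set.mem_setOf_eq, Set.mem_compl_iff, Set.mem_singleton_iff, adj_c]
      constructor
      · exact fun h => h.2
      · rintro rfl; exact ⟨by simp, rfl⟩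
    rw [degIn_def, degIn_def, h1, h2, Set.ncard_empty, Set.ncard_singleton]
  · intro v hv
    rcases hv with rfl
    rintro ⟨⟨x, hx⟩, -⟩
    simp at hx

lemma lmda_leaf (i : Fin k) : IsLocallyMinimalDA (caterpillarTree k) {Sum.inr i} := by
  refine ⟨⟨_, rfl⟩, ?_, ?_⟩
  · intro v hv
    rcases hv with rfl
    have h1 : {u | u ∈ ({Sum.inr i} : Set (Fin 3 ⊕ Fin k)) ∧ (caterpillarTree k).Adj (Sum.inr i) u} = ∅ := by
      ext u; simp [adj_leaf]; rintro rfl; simp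
    have h2 : {u | u ∈ ({Sum.inr i} : Set (Fin 3 ⊕ Fin k))ᶜ ∧ (caterpillarTree k).Adj (Sum.inr i) u} = {Sum.inl 0} := by
      ext u; simp only [Set.mem_setOf_eq, Set.mem_compl_iff, Set.mem_singleton_iff, adj_leaf]
      constructor
      · exact fun h => h.2
      · rintro rfl; exact ⟨by simp, rfl⟩
    rw [degIn_def, degIn_def, h1, h2, Set.ncard_empty, Set.ncard_singleton]
  · intro v hv
    rcases hv with rfl
    rintro ⟨⟨x, hx⟩, -⟩
    simp at hx

def AS (S : Finset (Fin k)) : Set (Fin 3 ⊕ Fin k) :=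
  insert (Sum.inl 0) (insert (Sum.inl 1) (Sum.inr '' (S : Set (Fin k))))

lemma mem_AS (S : Finset (Fin k)) (u : Fin 3 ⊕ Fin k) :
    u ∈ AS S ↔ u = Sum.inl 0 ∨ u = Sum.inl 1 ∨ ∃ i ∈ S, u = Sum.inr i := by
  simp [AS]; aesop

set_option maxHeartbeats 1000000 in
lemma lmda_AS (hk : 1 ≤ k) (S : Finset (Fin k)) (hS : S.card = (k - 2 + 1) / 2) :
    IsLocallyMinimalDA (caterpillarTree k) (AS S) := by
  have hSk : S.card ≤ k := by
    simpa using Finset.card_le_univ S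
  -- degree computations at a for AS S
  have dAa : {u | u ∈ AS S ∧ (caterpillarTree k).Adj (Sum.inl 0) u}
      = insert (Sum.inl 1) (Sum.inr '' (S : Set (Fin k))) := by
    ext u; simp [adj_a, mem_AS]; aesop
  have dAa' : {u | u ∈ (AS S)ᶜ ∧ (caterpillarTree k).Adj (Sum.inl 0) u}
      = Sum.inr '' ((Sᶜ : Finset (Fin k)) : Set (Fin k)) := by
    ext u; simp [adj_a, mem_AS]; aesop
  have nAa : degIn (caterpillarTree k) (AS S) (Sum.inl 0) = S.card + 1 := by
    rw [degIn_def, dAa, Set.ncard_insert_of_notMem (by simp), ncard_inr_image]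
  have nAa' : degIn (caterpillarTree k) (AS S)ᶜ (Sum.inl 0) = k - S.card := by
    rw [degIn_def, dAa', ncard_inr_image, Finset.card_compl, Fintype.card_fin]
  refine ⟨⟨Sum.inl 0, by simp [mem_AS]⟩, ?_, ?_⟩
  · intro v hv
    rw [mem_AS] at hv
    rcases hv with rfl | rfl | ⟨j, hj, rfl⟩
    · rw [nAa, nAa']; omega
    · have h1 : {u | u ∈ AS S ∧ (caterpillarTree k).Adj (Sum.inl 1) u} = {Sum.inl 0} := by
        ext u; simp [adj_b, mem_AS]; aesop
      have h2 : {u | u ∈ (AS S)ᶜ ∧ (caterpillarTree k).Adj (Sum.inl 1) u} = {Sum.inl 2} := by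
        ext u; simp [adj_b, mem_AS]; aesop
      rw [degIn_def, degIn_def, h1, h2, Set.ncard_singleton, Set.ncard_singleton]
      omega
    · have h1 : {u | u ∈ AS S ∧ (caterpillarTree k).Adj (Sum.inr j) u} = {Sum.inl 0} := by
        ext u; simp [adj_leaf, mem_AS]; aesop
      have h2 : {u | u ∈ (AS S)ᶜ ∧ (caterpillarTree k).Adj (Sum.inr j) u} = ∅ := by
        ext u; simp [adj_leaf, mem_AS]; tauto
      rw [degIn_def, degIn_def, h1, h2, Set.ncard_singleton, Set.ncard_empty]
      omega
  · intro v hv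
    rw [mem_AS] at hv
    rintro ⟨-, hDA⟩
    rcases hv with rfl | rfl | ⟨j, hj, rfl⟩
    · -- remove a, vertex b violates
      have hb : Sum.inl 1 ∈ AS S \ {Sum.inl (0 : Fin 3)} := by simp [mem_AS]
      have := hDA _ hb
      have h1 : {u | u ∈ AS S \ {Sum.inl (0 : Fin 3)} ∧ (caterpillarTree k).Adj (Sum.inl 1) u} = ∅ := by
        ext u; simp [adj_b, mem_AS]; aesop
      have h2 : {u | u ∈ (AS S \ {Sum.inl (0 : Fin 3)})ᶜ ∧ (caterpillarTree k).Adj (Sum.inl 1) u}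
          = {Sum.inl 0, Sum.inl 2} := by
        ext u; simp [adj_b, mem_AS]; aesop
      rw [degIn_def, degIn_def, h1, h2, Set.ncard_empty,
        Set.ncard_pair (by simp)] at this
      omega
    · -- remove b, vertex a violates
      have ha : Sum.inl 0 ∈ AS S \ {Sum.inl (1 : Fin 3)} := by simp [mem_AS]
      have := hDA _ ha
      have h1 : {u | u ∈ AS S \ {Sum.inl (1 : Fin 3)} ∧ (caterpillarTree k).Adj (Sum.inl 0) u}
          = Sum.inr '' (S : Set (Fin k)) := by
        ext u; simp [adj_a, mem_AS]; aesop
      have h2 : {u | u ∈ (AS S \ {Sum.inl (1 : Fin 3)})ᶜ ∧ (caterpillarTree k).Adj (Sum.inl 0) u}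
          = insert (Sum.inl 1) (Sum.inr '' ((Sᶜ : Finset (Fin k)) : Set (Fin k))) := by
        ext u; simp [adj_a, mem_AS]; aesop
      rw [degIn_def, degIn_def, h1, h2, ncard_inr_image,
        Set.ncard_insert_of_notMem (by simp), ncard_inr_image,
        Finset.card_compl, Fintype.card_fin] at this
      omega
    · -- remove leaf j, vertex a violates
      have hm1 : 1 ≤ S.card := Finset.card_pos.mpr ⟨j, hj⟩
      have ha : Sum.inl 0 ∈ AS S \ {Sum.inr j} := by simp [mem_AS]
      have := hDA _ ha
      have h1 : {u | u ∈ AS S \ {Sum.inr j} ∧ (caterpillarTree k).Adj (Sum.inl 0) u}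
          = insert (Sum.inl 1) (Sum.inr '' ((S.erase j : Finset (Fin k)) : Set (Fin k))) := by
        ext u; simp [adj_a, mem_AS]; aesop
      have h2 : {u | u ∈ (AS S \ {Sum.inr j})ᶜ ∧ (caterpillarTree k).Adj (Sum.inl 0) u}
          = Sum.inr '' (((S.erase j)ᶜ : Finset (Fin k)) : Set (Fin k)) := by
        ext u; simp [adj_a, mem_AS]
        constructor
        · rintro ⟨h, rfl | ⟨i, rfl⟩⟩
          · exact absurd (h (Or.inr (Or.inl rfl))) (by simp)
          · by_cases hi : i ∈ S
            · exact Or.inl (h (Or.inr (Or.inr ⟨i, hi, rfl⟩))).symm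
            · exact Or.inr ⟨i, hi, rfl⟩
        · rintro (rfl | ⟨a, ha, rfl⟩)
          · exact ⟨fun _ => rfl, Or.inr ⟨j, rfl⟩⟩
          · refine ⟨?_, Or.inr ⟨a, rfl⟩⟩
            rintro (h | h | ⟨i, hi, h⟩)
            · simp_all
            · simp_all
            · rw [show i = a from by simpa using h.symm] at hi
              exact absurd hi ha
      rw [degIn_def, degIn_def, h1, h2, Set.ncard_insert_of_notMem (by simp),
        ncard_inr_image, ncard_inr_image, Finset.card_compl, Fintype.card_fin,
        Finset.card_erase_of_mem hj] at this
      omega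

def idxSet (m : ℕ) : Option (Fin k) ⊕ {S : Finset (Fin k) // S.card = m} → Set (Fin 3 ⊕ Fin k)
  | .inl none => {Sum.inl 2}
  | .inl (some i) => {Sum.inr i}
  | .inr S => AS S.1

lemma idxSet_lmda (hk : 1 ≤ k) (x : Option (Fin k) ⊕ {S : Finset (Fin k) // S.card = (k - 2 + 1) / 2}) :
    IsLocallyMinimalDA (caterpillarTree k) (idxSet ((k - 2 + 1) / 2) x) := by
  rcases x with (_ | i) | ⟨S, hS⟩
  · exact lmda_c
  · exact lmda_leaf i
  · exact lmda_AS hk S hS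

lemma idxSet_inj (m : ℕ) : Function.Injective (idxSet (k := k) m) := by
  rintro ((_ | i) | ⟨S, hS⟩) ((_ | j) | ⟨T, hT⟩) h <;>
    simp only [idxSet] at h
  · rfl
  · exfalso
    have h0 : (Sum.inl 2 : Fin 3 ⊕ Fin k) ∈ ({Sum.inl 2} : Set (Fin 3 ⊕ Fin k)) := rfl
    rw [h] at h0; simp at h0
  · exfalso
    have h0 : (Sum.inl 0 : Fin 3 ⊕ Fin k) ∈ AS T := by simp [mem_AS]
    rw [← h] at h0; simp at h0
  · exfalso
    have h0 : (Sum.inr i : Fin 3 ⊕ Fin k) ∈ ({Sum.inr i} : Set (Fin 3 ⊕ Fin k)) := rfl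
    rw [h] at h0; simp at h0
  · have h0 : (Sum.inr i : Fin 3 ⊕ Fin k) ∈ ({Sum.inr i} : Set (Fin 3 ⊕ Fin k)) := rfl
    rw [h] at h0; simp at h0
    simp [h0]
  · exfalso
    have h0 : (Sum.inl 0 : Fin 3 ⊕ Fin k) ∈ AS T := by simp [mem_AS]
    rw [← h] at h0; simp at h0
  · exfalso
    have h0 : (Sum.inl 0 : Fin 3 ⊕ Fin k) ∈ AS S := by simp [mem_AS]
    rw [h] at h0; simp at h0
  · exfalso
    have h0 : (Sum.inl 0 : Fin 3 ⊕ Fin k) ∈ AS S := by simp [mem_AS]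
    rw [h] at h0; simp at h0
  · have hST : S = T := by
      ext j
      have h1 : (Sum.inr j ∈ AS S) ↔ (Sum.inr j ∈ AS T) := by rw [h]
      simpa [mem_AS] using h1
    simp [hST]

end CatAux

/-- For `k ≥ 1`, the caterpillar tree has at least
`(k+1) + binom(k, ⌈(k-2)/2⌉)` distinct locally minimal defensive alliances. -/
theorem le_card_locallyMinimalDA_caterpillar (k : ℕ) (hk : 1 ≤ k) :
    (k + 1) + Nat.choose k ((k - 2 + 1) / 2) ≤
      Nat.card {A : Set (Fin 3 ⊕ Fin k) //
        IsLocallyMinimalDA (caterpillarTree k) A} := by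
  classical
  have hinj : Function.Injective
      (fun x : Option (Fin k) ⊕ {S : Finset (Fin k) // S.card = (k - 2 + 1) / 2} =>
        (⟨CatAux.idxSet ((k - 2 + 1) / 2) x, CatAux.idxSet_lmda hk x⟩ :
          {A : Set (Fin 3 ⊕ Fin k) // IsLocallyMinimalDA (caterpillarTree k) A})) := by
    intro x y hxy
    exact CatAux.idxSet_inj _ (congrArg Subtype.val hxy)
  have hcard := Nat.card_le_card_of_injective _ hinj
  have hdom : Nat.card (Option (Fin k) ⊕ {S : Finset (Fin k) // S.card = (k - 2 + 1) / 2})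
      = (k + 1) + Nat.choose k ((k - 2 + 1) / 2) := by
    rw [Nat.card_sum, Nat.card_eq_fintype_card, Nat.card_eq_fintype_card,
      Fintype.card_option, Fintype.card_fin, Fintype.card_finset_len, Fintype.card_fin]
  rw [hdom] at hcard
  exact hcard
end

section
/- Define the sequence f by f_1 = 0, f_2 = 1, f_3 = 2 and f_n = f_{n−1} + f_{n−3} + 1 for n ≥ 4. For every n ≥ 3, the number of locally minimal defensive alliances of the path P_n equals f_{n−2} + 2. -/
namespace PathAux

open scoped Classical

/-- image of a set of vertices in ℕ -/
def S2N {n : ℕ} (A : Set (Fin n)) : Set ℕ := Fin.val '' A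

lemma mem_S2N {n : ℕ} {A : Set (Fin n)} {i : ℕ} :
    i ∈ S2N A ↔ ∃ h : i < n, (⟨i, h⟩ : Fin n) ∈ A := by
  constructor
  · rintro ⟨u, hu, rfl⟩; exact ⟨u.isLt, by simpa using hu⟩
  · rintro ⟨h, hm⟩; exact ⟨⟨i, h⟩, hm, rfl⟩

lemma S2N_lt {n : ℕ} {A : Set (Fin n)} {i : ℕ} (h : i ∈ S2N A) : i < n := by
  obtain ⟨h, -⟩ := mem_S2N.1 h; exact h

lemma mem_S2N_val {n : ℕ} {A : Set (Fin n)} {v : Fin n} :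
    (v : ℕ) ∈ S2N A ↔ v ∈ A := by
  constructor
  · rintro ⟨u, hu, he⟩; rwa [show u = v from Fin.ext he] at hu
  · intro h; exact ⟨v, h, rfl⟩

lemma S2N_compl {n : ℕ} (A : Set (Fin n)) {i : ℕ} :
    i ∈ S2N Aᶜ ↔ i < n ∧ i ∉ S2N A := by
  simp only [mem_S2N, Set.mem_compl_iff]
  constructor
  · rintro ⟨h, hm⟩; exact ⟨h, fun ⟨h', hm'⟩ => hm hm'⟩
  · rintro ⟨h, hm⟩; exact ⟨h, fun hm' => hm ⟨h, hm'⟩⟩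

lemma S2N_diff {n : ℕ} (A : Set (Fin n)) (v : Fin n) :
    S2N (A \ {v}) = S2N A \ {(v : ℕ)} := by
  unfold S2N
  rw [Set.image_diff Fin.val_injective, Set.image_singleton]

/-- defensive alliance condition on ℕ-level sets, for paths -/
def NDA (n : ℕ) (B : Set ℕ) : Prop :=
  ∀ i ∈ B, 0 < i → i + 2 ≤ n → (i - 1 ∈ B ∨ i + 1 ∈ B)

lemma degIn_path {n : ℕ} (X : Set (Fin n)) (v : Fin n) :
    degIn (SimpleGraph.pathGraph n) X v =
      (if (v : ℕ) + 1 ∈ S2N X then 1 else 0) +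
      (if 0 < (v : ℕ) ∧ (v : ℕ) - 1 ∈ S2N X then 1 else 0) := by
  classical
  have hset : {u | u ∈ X ∧ (SimpleGraph.pathGraph n).Adj v u} =
      {u : Fin n | u ∈ X ∧ (v : ℕ) + 1 = (u : ℕ)} ∪
      {u : Fin n | u ∈ X ∧ (u : ℕ) + 1 = (v : ℕ)} := by
    ext u
    simp only [Set.mem_setOf_eq, Set.mem_union, SimpleGraph.pathGraph_adj]
    tauto
  have hPsub : ({u : Fin n | u ∈ X ∧ (v : ℕ) + 1 = (u : ℕ)}).Subsingleton := by
    rintro a ⟨-, ha⟩ b ⟨-, hb⟩; exact Fin.ext (by omega)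
  have hQsub : ({u : Fin n | u ∈ X ∧ (u : ℕ) + 1 = (v : ℕ)}).Subsingleton := by
    rintro a ⟨-, ha⟩ b ⟨-, hb⟩; exact Fin.ext (by omega)
  have hdisj : Disjoint {u : Fin n | u ∈ X ∧ (v : ℕ) + 1 = (u : ℕ)}
      {u : Fin n | u ∈ X ∧ (u : ℕ) + 1 = (v : ℕ)} := by
    rw [Set.disjoint_left]
    rintro a ⟨-, ha⟩ ⟨-, hb⟩; omega
  have hP : ({u : Fin n | u ∈ X ∧ (v : ℕ) + 1 = (u : ℕ)}).ncard =
      if (v : ℕ) + 1 ∈ S2N X then 1 else 0 := by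
    split_ifs with h
    · obtain ⟨hlt, hmem⟩ := mem_S2N.1 h
      have : {u : Fin n | u ∈ X ∧ (v : ℕ) + 1 = (u : ℕ)} = {⟨(v : ℕ) + 1, hlt⟩} := by
        ext u
        constructor
        · rintro ⟨hu, he⟩; exact Fin.ext (by simpa using he.symm)
        · rintro rfl; exact ⟨hmem, by simp⟩
      rw [this, Set.ncard_singleton]
    · have : {u : Fin n | u ∈ X ∧ (v : ℕ) + 1 = (u : ℕ)} = ∅ := by
        ext u
        simp only [Set.mem_setOf_eq, Set.mem_empty_iff_false, iff_false]
        rintro ⟨hu, he⟩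
        have heq : ((⟨(v : ℕ) + 1, by omega⟩ : Fin n)) = u := Fin.ext (by simpa using he)
        exact h (mem_S2N.2 ⟨by omega, heq ▸ hu⟩)
      rw [this, Set.ncard_empty]
  have hQ : ({u : Fin n | u ∈ X ∧ (u : ℕ) + 1 = (v : ℕ)}).ncard =
      if 0 < (v : ℕ) ∧ (v : ℕ) - 1 ∈ S2N X then 1 else 0 := by
    split_ifs with h
    · obtain ⟨hpos, hmm⟩ := h
      obtain ⟨hlt, hmem⟩ := mem_S2N.1 hmm
      have : {u : Fin n | u ∈ X ∧ (u : ℕ) + 1 = (v : ℕ)} = {⟨(v : ℕ) - 1, hlt⟩} := by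
        ext u
        constructor
        · rintro ⟨hu, he⟩; exact Fin.ext (by simp only [Fin.val_mk]; omega)
        · rintro rfl; exact ⟨hmem, by simp only [Fin.val_mk]; omega⟩
      rw [this, Set.ncard_singleton]
    · have : {u : Fin n | u ∈ X ∧ (u : ℕ) + 1 = (v : ℕ)} = ∅ := by
        ext u
        simp only [Set.mem_setOf_eq, Set.mem_empty_iff_false, iff_false]
        rintro ⟨hu, he⟩
        have heq : ((⟨(v : ℕ) - 1, by omega⟩ : Fin n)) = u := Fin.ext (by simp only [Fin.val_mk]; omega)
        exact h ⟨by omega, mem_S2N.2 ⟨by omega, heq ▸ hu⟩⟩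
      rw [this, Set.ncard_empty]
  rw [degIn, hset, Set.ncard_union_eq hdisj hPsub.finite hQsub.finite, hP, hQ]

lemma degIn_path_compl {n : ℕ} (A : Set (Fin n)) (v : Fin n) :
    degIn (SimpleGraph.pathGraph n) Aᶜ v =
      (if (v : ℕ) + 1 < n ∧ (v : ℕ) + 1 ∉ S2N A then 1 else 0) +
      (if 0 < (v : ℕ) ∧ (v : ℕ) - 1 ∉ S2N A then 1 else 0) := by
  have hlt := v.isLt
  rw [degIn_path]
  congr 1
  · exact if_congr (S2N_compl A) rfl rfl
  · refine if_congr ?_ rfl rfl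
    rw [S2N_compl]
    constructor
    · rintro ⟨hp, -, hm⟩; exact ⟨hp, hm⟩
    · rintro ⟨hp, hm⟩; exact ⟨hp, by omega, hm⟩

lemma da_cond_iff {n : ℕ} (A : Set (Fin n)) (v : Fin n) :
    (degIn (SimpleGraph.pathGraph n) A v + 1 ≥ degIn (SimpleGraph.pathGraph n) Aᶜ v) ↔
      (0 < (v : ℕ) → (v : ℕ) + 2 ≤ n → ((v : ℕ) - 1 ∈ S2N A ∨ (v : ℕ) + 1 ∈ S2N A)) := by
  have hlt := v.isLt
  rw [degIn_path, degIn_path_compl]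
  rcases em ((v : ℕ) + 1 ∈ S2N A) with h1 | h1 <;>
    rcases em ((v : ℕ) - 1 ∈ S2N A) with h0 | h0 <;>
    rcases em (0 < (v : ℕ)) with hp | hp <;>
    rcases em ((v : ℕ) + 1 < n) with he | he <;>
    (try simp [h1, h0, hp, he]) <;> omega

lemma da_iff {n : ℕ} (A : Set (Fin n)) :
    IsDefensiveAlliance (SimpleGraph.pathGraph n) A ↔ NDA n (S2N A) := by
  constructor
  · intro h i hi hpos hend
    obtain ⟨hin, hmem⟩ := mem_S2N.1 hi
    exact (da_cond_iff A ⟨i, hin⟩).1 (h _ hmem) hpos hend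
  · intro h v hv
    exact (da_cond_iff A v).2 (fun hp he => h _ (mem_S2N_val.2 hv) hp he)

lemma lmda_iff {n : ℕ} (A : Set (Fin n)) :
    IsLocallyMinimalDA (SimpleGraph.pathGraph n) A ↔
      ((S2N A).Nonempty ∧ NDA n (S2N A) ∧
        ∀ i ∈ S2N A, ¬((S2N A \ {i}).Nonempty ∧ NDA n (S2N A \ {i}))) := by
  unfold IsLocallyMinimalDA
  rw [da_iff]
  refine and_congr (Set.image_nonempty.symm) (and_congr Iff.rfl ?_)
  constructor
  · intro h i hi
    obtain ⟨hin, hmem⟩ := mem_S2N.1 hi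
    have hmin := h ⟨i, hin⟩ hmem
    have hd : S2N (A \ {(⟨i, hin⟩ : Fin n)}) = S2N A \ {i} := by
      simpa using S2N_diff A ⟨i, hin⟩
    rw [← hd]
    rintro ⟨h1, h2⟩
    exact hmin ⟨Set.image_nonempty.1 h1, (da_iff _).2 h2⟩
  · intro h v hv
    have := h (v : ℕ) (mem_S2N_val.2 hv)
    rw [← S2N_diff] at this
    rintro ⟨h1, h2⟩
    exact this ⟨Set.image_nonempty.2 h1, (da_iff _).1 h2⟩

-- appended to a.lean inside namespace PathAux (NLM layer)

def gap3 (S : Finset ℕ) : Prop := ∀ i ∈ S, ∀ j ∈ S, i < j → i + 3 ≤ j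

instance : DecidablePred gap3 := fun S => by unfold gap3; infer_instance

def Sparse (n : ℕ) (S : Finset ℕ) : Prop := (∀ i ∈ S, 1 ≤ i ∧ i + 3 ≤ n) ∧ gap3 S

def domN (S : Finset ℕ) : Set ℕ := {i | i ∈ S ∨ ∃ j ∈ S, i = j + 1}

/-- locally minimal defensive alliance, ℕ-level -/
def NLM (n : ℕ) (B : Set ℕ) : Prop :=
  B.Nonempty ∧ NDA n B ∧ ∀ i ∈ B, ¬((B \ {i}).Nonempty ∧ NDA n (B \ {i}))

lemma mem_domN {S : Finset ℕ} {i : ℕ} :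
    i ∈ domN S ↔ i ∈ S ∨ ∃ j ∈ S, i = j + 1 := Iff.rfl

lemma not_mem_domN {S : Finset ℕ} {i : ℕ}
    (h1 : i ∉ S) (h2 : ∀ j ∈ S, i ≠ j + 1) : i ∉ domN S := by
  rintro (h | ⟨j, hj, rfl⟩)
  · exact h1 h
  · exact h2 j hj rfl

lemma natChar_bwd {n : ℕ} (hn : 3 ≤ n) (S : Finset ℕ)
    (hS : Sparse n S) (hSne : S.Nonempty) : NLM n (domN S) := by
  obtain ⟨hbd, hgap⟩ := hS
  refine ⟨?_, ?_, ?_⟩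
  · obtain ⟨j, hj⟩ := hSne
    exact ⟨j, Or.inl hj⟩
  · rintro i (hi | ⟨j, hj, rfl⟩) hp he
    · exact Or.inr (Or.inr ⟨i, hi, rfl⟩)
    · exact Or.inl (by rw [Nat.add_sub_cancel]; exact Or.inl hj)
  · rintro i hi ⟨-, hda⟩
    rcases hi with hiS | ⟨j, hj, rfl⟩
    · -- i ∈ S : witness i+1
      have h1 : (1 : ℕ) ≤ i := (hbd i hiS).1
      have h2 : i + 3 ≤ n := (hbd i hiS).2
      have hw : i + 1 ∈ domN S \ {i} := ⟨Or.inr ⟨i, hiS, rfl⟩, by simp⟩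
      have := hda (i + 1) hw (by omega) (by omega)
      have hL : i + 1 - 1 ∉ domN S \ {i} := by
        simp only [Set.mem_diff, Set.mem_singleton_iff]
        rintro ⟨-, hne⟩; omega
      have hR : i + 1 + 1 ∉ domN S := by
        apply not_mem_domN
        · intro hc
          have := hgap i hiS (i + 2) hc (by omega); omega
        · intro j hj hc
          have h1j := (hbd j hj).1
          rcases Nat.lt_trichotomy i j with h | h | h
          · have := hgap i hiS j hj h; omega
          · omega
          · have := hgap j hj i hiS h; omega
      rcases this with h | h
      · exact hL h
      · exact hR h.1
    · -- i = j+1, j ∈ S : witness j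
      have h1 : (1 : ℕ) ≤ j := (hbd j hj).1
      have h2 : j + 3 ≤ n := (hbd j hj).2
      have hw : j ∈ domN S \ {j + 1} := ⟨Or.inl hj, by simp⟩
      have := hda j hw (by omega) (by omega)
      have hL : j - 1 ∉ domN S := by
        apply not_mem_domN
        · intro hc
          have := hgap (j - 1) hc j hj (by omega); omega
        · intro k hk hc
          have h1k := (hbd k hk).1
          rcases Nat.lt_trichotomy k j with h | h | h
          · have := hgap k hk j hj h; omega
          · omega
          · have := hgap j hj k hk h; omega
      rcases this with h | h
      · exact hL h.1
      · exact h.2 rfl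

theorem natChar {n : ℕ} (hn : 3 ≤ n) (B : Set ℕ) (hB : ∀ i ∈ B, i < n) :
    NLM n B ↔
      (B = {0} ∨ B = {(n - 1 : ℕ)} ∨
        ∃ S : Finset ℕ, Sparse n S ∧ S.Nonempty ∧ B = domN S) := by
  classical
  constructor
  · rintro ⟨hne, hnda, hmin⟩
    by_cases htwo : ∃ a ∈ B, ∃ b ∈ B, a ≠ b
    · -- at least two elements
      obtain ⟨a, ha, b, hb, hab⟩ := htwo
      -- 0 ∉ B
      have h0 : 0 ∉ B := by
        intro h0m
        by_cases h1m : 1 ∈ B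
        · by_cases h2m : 2 ∈ B
          · apply hmin 0 h0m
            refine ⟨⟨1, h1m, by simp⟩, ?_⟩
            rintro i ⟨hiB, hi0⟩ hp he
            simp only [Set.mem_singleton_iff] at hi0
            by_cases hi1 : i = 1
            · subst hi1
              exact Or.inr ⟨h2m, by simp⟩
            · rcases hnda i hiB hp he with hL | hR
              · exact Or.inl ⟨hL, by simp; omega⟩
              · exact Or.inr ⟨hR, by simp⟩
          · apply hmin 1 h1m
            refine ⟨⟨0, h0m, by simp⟩, ?_⟩
            rintro i ⟨hiB, hi1⟩ hp he
            simp only [Set.mem_singleton_iff] at hi1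
            rcases hnda i hiB hp he with hL | hR
            · by_cases hc : i = 2
              · exact absurd (hc ▸ hiB) h2m
              · exact Or.inl ⟨hL, by simp; omega⟩
            · exact Or.inr ⟨hR, by simp; omega⟩
        · apply hmin 0 h0m
          have hbne : ∃ c ∈ B, c ≠ 0 := by
            by_cases hc : a = 0
            · exact ⟨b, hb, by omega⟩
            · exact ⟨a, ha, hc⟩
          obtain ⟨c, hc, hc0⟩ := hbne
          refine ⟨⟨c, hc, by simpa using hc0⟩, ?_⟩
          rintro i ⟨hiB, hi0⟩ hp he
          simp only [Set.mem_singleton_iff] at hi0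
          rcases hnda i hiB hp he with hL | hR
          · by_cases hc1 : i = 1
            · exact absurd (hc1 ▸ hiB) h1m
            · exact Or.inl ⟨hL, by simp; omega⟩
          · exact Or.inr ⟨hR, by simp⟩
      -- n-1 ∉ B
      have hl : (n - 1 : ℕ) ∉ B := by
        set m := n - 1 with hm
        intro hmm
        by_cases hm1 : m - 1 ∈ B
        · by_cases hm2 : m - 2 ∈ B
          · apply hmin m hmm
            refine ⟨⟨m - 1, hm1, by simp; omega⟩, ?_⟩
            rintro i ⟨hiB, him⟩ hp he
            simp only [Set.mem_singleton_iff] at him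
            by_cases hi1 : i = m - 1
            · refine Or.inl ⟨?_, by simp; omega⟩
              have : i - 1 = m - 2 := by omega
              rw [this]; exact hm2
            · rcases hnda i hiB hp he with hL | hR
              · exact Or.inl ⟨hL, by simp; omega⟩
              · refine Or.inr ⟨hR, by simp; omega⟩
          · apply hmin (m - 1) hm1
            refine ⟨⟨m, hmm, by simp; omega⟩, ?_⟩
            rintro i ⟨hiB, him⟩ hp he
            simp only [Set.mem_singleton_iff] at him
            by_cases hi : i = m
            · exfalso; omega
            · rcases hnda i hiB hp he with hL | hR
              · refine Or.inl ⟨hL, by simp; omega⟩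
              · refine Or.inr ⟨hR, ?_⟩
                simp only [Set.mem_singleton_iff]
                intro hc
                exact hm2 (by rwa [show i = m - 2 by omega] at hiB)
        · apply hmin m hmm
          have hbne : ∃ c ∈ B, c ≠ m := by
            by_cases hc : a = m
            · exact ⟨b, hb, by omega⟩
            · exact ⟨a, ha, hc⟩
          obtain ⟨c, hc, hcm⟩ := hbne
          refine ⟨⟨c, hc, by simpa using hcm⟩, ?_⟩
          rintro i ⟨hiB, him⟩ hp he
          simp only [Set.mem_singleton_iff] at him
          rcases hnda i hiB hp he with hL | hR
          · exact Or.inl ⟨hL, by simp; omega⟩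
          · refine Or.inr ⟨hR, ?_⟩
            simp only [Set.mem_singleton_iff]
            intro hc'
            exact hm1 (by rwa [show i = m - 1 by omega] at hiB)
      -- no three consecutive
      have hcons : ∀ i, ¬(i ∈ B ∧ i + 1 ∈ B ∧ i + 2 ∈ B) := by
        rintro i ⟨hi0, hi1, hi2⟩
        have hex : ∃ k, k ∈ B ∧ ∀ j, k ≤ j → j ≤ i → j ∈ B :=
          ⟨i, hi0, fun j h1 h2 => by rwa [Nat.le_antisymm h2 h1]⟩
        set A := Nat.find hex with hA
        obtain ⟨haB, haint⟩ := Nat.find_spec hex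
        have hale : A ≤ i := Nat.find_min' hex ⟨hi0, fun j h1 h2 => by rwa [Nat.le_antisymm h2 h1]⟩
        have ha0 : A ≠ 0 := fun h => h0 (h ▸ haB)
        have haprev : A - 1 ∉ B := by
          intro hc
          refine Nat.find_min hex (m := A - 1) (by omega) ⟨hc, fun j h1 h2 => ?_⟩
          by_cases hj : j = A - 1
          · rwa [hj]
          · exact haint j (by omega) h2
        have hmem : ∀ j, A ≤ j → j ≤ i + 2 → j ∈ B := by
          intro j h1 h2
          by_cases hj1 : j ≤ i
          · exact haint j h1 hj1
          · by_cases hj2 : j = i + 1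
            · rwa [hj2]
            · rwa [show j = i + 2 by omega]
        apply hmin A haB
        refine ⟨⟨A + 1, hmem (A + 1) (by omega) (by omega), by simp⟩, ?_⟩
        rintro w ⟨hwB, hwa⟩ hp he
        simp only [Set.mem_singleton_iff] at hwa
        by_cases hw : w = A + 1
        · subst hw
          exact Or.inr ⟨hmem (A + 2) (by omega) (by omega), by simp; omega⟩
        · rcases hnda w hwB hp he with hL | hR
          · exact Or.inl ⟨hL, by simp; omega⟩
          · refine Or.inr ⟨hR, ?_⟩
            simp only [Set.mem_singleton_iff]
            intro hc
            exact haprev (by rwa [show w = A - 1 by omega] at hwB)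
      -- every element has a neighbor
      have hnbr : ∀ i ∈ B, (i - 1 ∈ B ∨ i + 1 ∈ B) := by
        intro i hi
        have hi0 : i ≠ 0 := fun h => h0 (h ▸ hi)
        have hin : i < n := hB i hi
        have hil : i ≠ n - 1 := fun h => hl (h ▸ hi)
        exact hnda i hi (by omega) (by omega)
      -- the finset of left ends
      have hBfin : B.Finite := Set.Finite.subset (Set.finite_Iio n) (fun i hi => hB i hi)
      have hSfin : {i | i ∈ B ∧ i - 1 ∉ B}.Finite := hBfin.subset (fun i hi => hi.1)
      set S := hSfin.toFinset with hSdef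
      have hmemS : ∀ i : ℕ, i ∈ S ↔ (i ∈ B ∧ i - 1 ∉ B) := by
        intro i; rw [hSdef, Set.Finite.mem_toFinset]; rfl
      have hnext : ∀ i ∈ S, i + 1 ∈ B := by
        intro i hi
        obtain ⟨hiB, hiprev⟩ := (hmemS i).1 hi
        rcases hnbr i hiB with h | h
        · exact absurd h hiprev
        · exact h
      refine Or.inr (Or.inr ⟨S, ⟨?_, ?_⟩, ?_, ?_⟩)
      · -- bounds
        intro i hi
        obtain ⟨hiB, hiprev⟩ := (hmemS i).1 hi
        have hi0 : i ≠ 0 := fun h => h0 (h ▸ hiB)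
        have h1 : i + 1 ∈ B := hnext i hi
        have h2 : i + 1 < n := hB _ h1
        have h3 : i + 1 ≠ n - 1 := fun h => hl (h ▸ h1)
        omega
      · -- gap3
        intro i hi j hj hij
        obtain ⟨hiB, hiprev⟩ := (hmemS i).1 hi
        obtain ⟨hjB, hjprev⟩ := (hmemS j).1 hj
        have h1 : i + 1 ∈ B := hnext i hi
        by_contra hc
        have : j = i + 1 ∨ j = i + 2 := by omega
        rcases this with h | h
        · exact hjprev (by rwa [show j - 1 = i by omega])
        · exact hjprev (by rwa [show j - 1 = i + 1 by omega])
      · -- nonempty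
        obtain ⟨c, hc⟩ := hne
        have hex2 : ∃ k, k ∈ B := ⟨c, hc⟩
        refine ⟨Nat.find hex2, (hmemS _).2 ⟨Nat.find_spec hex2, ?_⟩⟩
        intro hcon
        have h00 : Nat.find hex2 ≠ 0 := fun h => h0 (h ▸ Nat.find_spec hex2)
        exact Nat.find_min hex2 (m := Nat.find hex2 - 1) (by omega) hcon
      · -- B = domN S
        ext i
        constructor
        · intro hiB
          by_cases hprev : i - 1 ∈ B
          · have hi2 : 2 ≤ i := by
              have : i - 1 ≠ 0 := fun h => h0 (h ▸ hprev)
              have : i ≠ 0 := fun h => h0 (h ▸ hiB)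
              omega
            have hpp : i - 2 ∉ B := by
              intro hc
              exact hcons (i - 2) ⟨hc, by rwa [show i - 2 + 1 = i - 1 by omega],
                by rwa [show i - 2 + 2 = i by omega]⟩
            refine Or.inr ⟨i - 1, (hmemS _).2 ⟨hprev, by rwa [show i - 1 - 1 = i - 2 by omega]⟩, by omega⟩
          · exact Or.inl ((hmemS _).2 ⟨hiB, hprev⟩)
        · rintro (h | ⟨j, hj, rfl⟩)
          · exact ((hmemS _).1 h).1
          · exact hnext j hj
    · -- singleton case
      push_neg at htwo
      obtain ⟨c, hc⟩ := hne
      have hBc : B = {c} := by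
        ext x
        simp only [Set.mem_singleton_iff]
        exact ⟨fun hx => htwo x hx c hc, fun hx => hx ▸ hc⟩
      have hcn : c < n := hB c hc
      by_cases hp : 0 < c
      · by_cases he : c + 2 ≤ n
        · exfalso
          rcases hnda c hc hp he with h | h
          · have := htwo _ h c hc; omega
          · have := htwo _ h c hc; omega
        · refine Or.inr (Or.inl ?_)
          rw [hBc, show c = n - 1 by omega]
      · exact Or.inl (by rw [hBc, show c = 0 by omega])
  · rintro (rfl | rfl | ⟨S, hS, hSne, rfl⟩)
    · refine ⟨⟨0, rfl⟩, ?_, ?_⟩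
      · rintro i rfl hp he; omega
      · rintro i rfl ⟨⟨x, hx1, hx2⟩, -⟩
        simp only [Set.mem_singleton_iff] at hx1 hx2
        exact hx2 hx1
    · refine ⟨⟨n - 1, rfl⟩, ?_, ?_⟩
      · rintro i rfl hp he; omega
      · rintro i rfl ⟨⟨x, hx1, hx2⟩, -⟩
        simp only [Set.mem_singleton_iff] at hx1 hx2
        exact hx2 hx1
    · exact natChar_bwd hn S hS hSne

lemma gap3_mono {S T : Finset ℕ} (h : S ⊆ T) (hT : gap3 T) : gap3 S :=
  fun i hi j hj hij => hT i (h hi) j (h hj) hij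

/-- number of gap-3 subsets of `Icc 1 m` -/
def cnt (m : ℕ) : ℕ := ((Finset.Icc 1 m).powerset.filter gap3).card

lemma cnt_zero : cnt 0 = 1 := by decide
lemma cnt_one : cnt 1 = 2 := by decide
lemma cnt_two : cnt 2 = 3 := by decide

lemma cnt_rec (m : ℕ) (hm : 3 ≤ m) : cnt m = cnt (m - 1) + cnt (m - 3) := by
  classical
  unfold cnt
  rw [← Finset.card_filter_add_card_filter_not (p := fun S : Finset ℕ => m ∈ S)
    (s := (Finset.Icc 1 m).powerset.filter gap3)]
  rw [Nat.add_comm]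
  congr 1
  · -- m ∉ S part
    congr 1
    ext S
    simp only [Finset.mem_filter, Finset.mem_powerset]
    constructor
    · rintro ⟨⟨hsub, hg⟩, hm'⟩
      refine ⟨fun i hi => ?_, hg⟩
      have := hsub hi
      simp only [Finset.mem_Icc] at this ⊢
      have : i ≠ m := fun h => hm' (h ▸ hi)
      omega
    · rintro ⟨hsub, hg⟩
      refine ⟨⟨fun i hi => ?_, hg⟩, fun hc => ?_⟩
      · have := hsub hi
        simp only [Finset.mem_Icc] at this ⊢
        omega
      · have := hsub hc
        simp only [Finset.mem_Icc] at this
        omega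
  · -- m ∈ S part : bijection with gap-3 subsets of Icc 1 (m-3)
    apply Finset.card_bij (fun S _ => S.erase m)
    · rintro S hS
      simp only [Finset.mem_filter, Finset.mem_powerset] at hS ⊢
      obtain ⟨⟨hsub, hg⟩, hmS⟩ := hS
      refine ⟨fun i hi => ?_, gap3_mono (Finset.erase_subset _ _) hg⟩
      rw [Finset.mem_erase] at hi
      obtain ⟨hne, hiS⟩ := hi
      have h1 := hsub hiS
      simp only [Finset.mem_Icc] at h1 ⊢
      have := hg i hiS m hmS (by omega)
      omega
    · rintro S1 hS1 S2 hS2 heq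
      simp only [Finset.mem_filter, Finset.mem_powerset] at hS1 hS2
      rw [← Finset.insert_erase hS1.2, ← Finset.insert_erase hS2.2, heq]
    · rintro T hT
      simp only [Finset.mem_filter, Finset.mem_powerset] at hT
      obtain ⟨hsub, hg⟩ := hT
      have hmT : m ∉ T := by
        intro hc
        have := hsub hc
        simp only [Finset.mem_Icc] at this
        omega
      refine ⟨insert m T, ?_, ?_⟩
      · simp only [Finset.mem_filter, Finset.mem_powerset]
        refine ⟨⟨fun i hi => ?_, ?_⟩, Finset.mem_insert_self _ _⟩
        · rcases Finset.mem_insert.1 hi with rfl | hiT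
          · simp only [Finset.mem_Icc]; omega
          · have := hsub hiT
            simp only [Finset.mem_Icc] at this ⊢
            omega
        · intro i hi j hj hij
          rcases Finset.mem_insert.1 hi with rfl | hiT <;>
            rcases Finset.mem_insert.1 hj with rfl | hjT
          · omega
          · have := hsub hjT
            simp only [Finset.mem_Icc] at this
            omega
          · have := hsub hiT
            simp only [Finset.mem_Icc] at this
            omega
          · exact hg i hiT j hjT hij
      · exact Finset.erase_insert hmT

lemma cnt_eq_f (f : ℕ → ℕ)
    (h1 : f 1 = 0) (h2 : f 2 = 1) (h3 : f 3 = 2)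
    (hrec : ∀ n, 4 ≤ n → f n = f (n - 1) + f (n - 3) + 1) :
    ∀ m, cnt m = f (m + 1) + 1 := by
  intro m
  induction m using Nat.strong_induction_on with
  | _ m ih =>
    by_cases hm : 3 ≤ m
    · rw [cnt_rec m hm, ih (m - 1) (by omega), ih (m - 3) (by omega),
        hrec (m + 1) (by omega)]
      rw [show m + 1 - 1 = m from rfl, show m + 1 - 3 = m - 3 + 1 by omega,
        show m - 1 + 1 = m by omega]
      ring
    · interval_cases m
      · rw [cnt_zero, h1]
      · rw [cnt_one, h2]
      · rw [cnt_two, h3]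

/-! ### lifting ℕ-sets back to `Fin n` -/

def liftN (n : ℕ) (T : Set ℕ) : Set (Fin n) := {v | (v : ℕ) ∈ T}

lemma S2N_liftN {n : ℕ} {T : Set ℕ} (hT : ∀ i ∈ T, i < n) : S2N (liftN n T) = T := by
  ext i
  rw [mem_S2N]
  constructor
  · rintro ⟨h, hm⟩; exact hm
  · intro hi; exact ⟨hT i hi, hi⟩

lemma eq_liftN {n : ℕ} (A : Set (Fin n)) : A = liftN n (S2N A) := by
  ext v; exact (mem_S2N_val (A := A) (v := v)).symm

lemma S2N_eq_iff {n : ℕ} {A : Set (Fin n)} {T : Set ℕ} (hT : ∀ i ∈ T, i < n) :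
    S2N A = T ↔ A = liftN n T := by
  constructor
  · intro h; rw [eq_liftN A, h]
  · rintro rfl; exact S2N_liftN hT

lemma domN_lt {n : ℕ} {S : Finset ℕ} (hS : Sparse n S) : ∀ i ∈ domN S, i < n := by
  rintro i (h | ⟨j, hj, rfl⟩)
  · have := hS.1 i h; omega
  · have := hS.1 j hj; omega

lemma domN_inj {n : ℕ} {S1 S2 : Finset ℕ} (h1 : Sparse n S1) (h2 : Sparse n S2)
    (he : domN S1 = domN S2) : S1 ⊆ S2 := by
  intro i hi
  have hd : i ∈ domN S2 := he ▸ Or.inl hi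
  rcases hd with h | ⟨j, hj, rfl⟩
  · exact h
  · exfalso
    have hj' : j ∈ domN S1 := he.symm ▸ Or.inl hj
    rcases hj' with h | ⟨k, hk, rfl⟩
    · have := h1.2 j h (j + 1) hi (by omega); omega
    · have := h1.2 k hk (k + 1 + 1) hi (by omega); omega

lemma setOf_lmda {n : ℕ} (hn : 3 ≤ n) :
    {A : Set (Fin n) | IsLocallyMinimalDA (SimpleGraph.pathGraph n) A} =
      insert (liftN n {0}) (insert (liftN n {(n - 1 : ℕ)})
        ((fun S : Finset ℕ => liftN n (domN S)) '' {S | Sparse n S ∧ S.Nonempty})) := by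
  have h0n : (0 : ℕ) < n := by omega
  ext A
  rw [Set.mem_setOf_eq, lmda_iff]
  have hchar := natChar hn (S2N A) (fun i hi => S2N_lt hi)
  rw [show ((S2N A).Nonempty ∧ NDA n (S2N A) ∧
      ∀ i ∈ S2N A, ¬((S2N A \ {i}).Nonempty ∧ NDA n (S2N A \ {i}))) = NLM n (S2N A) from rfl,
    hchar]
  simp only [Set.mem_insert_iff, Set.mem_image, Set.mem_setOf_eq]
  constructor
  · rintro (h | h | ⟨S, hS, hSne, h⟩)
    · exact Or.inl ((S2N_eq_iff (by intro i hi; simp only [Set.mem_singleton_iff] at hi; omega)).1 h)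
    · exact Or.inr (Or.inl ((S2N_eq_iff
        (by intro i hi; simp only [Set.mem_singleton_iff] at hi; omega)).1 h))
    · exact Or.inr (Or.inr ⟨S, ⟨hS, hSne⟩,
        ((S2N_eq_iff (domN_lt hS)).1 h).symm⟩)
  · rintro (h | h | ⟨S, ⟨hS, hSne⟩, h⟩)
    · exact Or.inl ((S2N_eq_iff
        (by intro i hi; simp only [Set.mem_singleton_iff] at hi; omega)).2 h)
    · exact Or.inr (Or.inl ((S2N_eq_iff
        (by intro i hi; simp only [Set.mem_singleton_iff] at hi; omega)).2 h))
    · exact Or.inr (Or.inr ⟨S, hS, hSne, ((S2N_eq_iff (domN_lt hS)).2 h.symm)⟩)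

end PathAux

open PathAux

/-- With `f_1 = 0`, `f_2 = 1`, `f_3 = 2` and
`f_n = f_{n-1} + f_{n-3} + 1` for `n ≥ 4`, the path `P_n` (for `n ≥ 3`) has
exactly `f_{n-2} + 2` locally minimal defensive alliances. -/
theorem card_locallyMinimalDA_pathGraph (f : ℕ → ℕ)
    (h1 : f 1 = 0) (h2 : f 2 = 1) (h3 : f 3 = 2)
    (hrec : ∀ n, 4 ≤ n → f n = f (n - 1) + f (n - 3) + 1)
    (n : ℕ) (hn : 3 ≤ n) :
    Nat.card {A : Set (Fin n) // IsLocallyMinimalDA (SimpleGraph.pathGraph n) A} =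
      f (n - 2) + 2 := by
  classical
  have hc1 : Nat.card {A : Set (Fin n) // IsLocallyMinimalDA (SimpleGraph.pathGraph n) A}
      = {A : Set (Fin n) | IsLocallyMinimalDA (SimpleGraph.pathGraph n) A}.ncard :=
    Nat.card_coe_set_eq _
  rw [hc1, setOf_lmda hn]
  set good : Finset (Finset ℕ) :=
    (Finset.Icc 1 n).powerset.filter (fun S => Sparse n S ∧ S.Nonempty) with hgooddef
  have hgood : {S : Finset ℕ | Sparse n S ∧ S.Nonempty} = ↑good := by
    ext S
    simp only [hgooddef, Finset.coe_filter, Set.mem_setOf_eq, Finset.mem_powerset]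
    constructor
    · rintro ⟨hS, hne⟩
      refine ⟨fun i hi => ?_, hS, hne⟩
      have := hS.1 i hi
      simp only [Finset.mem_Icc]; omega
    · rintro ⟨-, hS, hne⟩; exact ⟨hS, hne⟩
  have hEfin : ((fun S : Finset ℕ => liftN n (domN S)) ''
      {S | Sparse n S ∧ S.Nonempty}).Finite := by
    rw [hgood]; exact good.finite_toSet.image _
  have hbd0 : ∀ i ∈ ({0} : Set ℕ), i < n := by
    intro i hi; simp only [Set.mem_singleton_iff] at hi; omega
  have hbd1 : ∀ i ∈ ({(n - 1 : ℕ)} : Set ℕ), i < n := by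
    intro i hi; simp only [Set.mem_singleton_iff] at hi; omega
  have h01 : liftN n ({0} : Set ℕ) ≠ liftN n ({(n - 1 : ℕ)} : Set ℕ) := by
    intro h
    have h' : S2N (liftN n ({0} : Set ℕ)) = S2N (liftN n ({(n - 1 : ℕ)} : Set ℕ)) := by rw [h]
    rw [S2N_liftN hbd0, S2N_liftN hbd1] at h'
    have : (0 : ℕ) ∈ ({(n - 1 : ℕ)} : Set ℕ) := h' ▸ rfl
    simp only [Set.mem_singleton_iff] at this
    omega
  have hne0 : ∀ S : Finset ℕ, Sparse n S → S.Nonempty →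
      liftN n (domN S) ≠ liftN n ({0} : Set ℕ) := by
    intro S hS hne h
    obtain ⟨j, hj⟩ := hne
    have h' : S2N (liftN n (domN S)) = S2N (liftN n ({0} : Set ℕ)) := by rw [h]
    rw [S2N_liftN (domN_lt hS), S2N_liftN hbd0] at h'
    have hjm : j ∈ ({0} : Set ℕ) := h' ▸ (Or.inl hj : j ∈ domN S)
    have := hS.1 j hj
    simp only [Set.mem_singleton_iff] at hjm
    omega
  have hne1 : ∀ S : Finset ℕ, Sparse n S → S.Nonempty →
      liftN n (domN S) ≠ liftN n ({(n - 1 : ℕ)} : Set ℕ) := by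
    intro S hS hne h
    obtain ⟨j, hj⟩ := hne
    have h' : S2N (liftN n (domN S)) = S2N (liftN n ({(n - 1 : ℕ)} : Set ℕ)) := by rw [h]
    rw [S2N_liftN (domN_lt hS), S2N_liftN hbd1] at h'
    have hjm : j ∈ ({(n - 1 : ℕ)} : Set ℕ) := h' ▸ (Or.inl hj : j ∈ domN S)
    have hjm1 : j + 1 ∈ ({(n - 1 : ℕ)} : Set ℕ) := h' ▸ (Or.inr ⟨j, hj, rfl⟩ : j + 1 ∈ domN S)
    simp only [Set.mem_singleton_iff] at hjm hjm1
    omega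
  have hnm1 : liftN n ({0} : Set ℕ) ∉ insert (liftN n ({(n - 1 : ℕ)} : Set ℕ))
      ((fun S : Finset ℕ => liftN n (domN S)) '' {S | Sparse n S ∧ S.Nonempty}) := by
    simp only [Set.mem_insert_iff, Set.mem_image, Set.mem_setOf_eq]
    rintro (h | ⟨S, ⟨hS, hne⟩, h⟩)
    · exact h01 h
    · exact hne0 S hS hne h
  have hnm2 : liftN n ({(n - 1 : ℕ)} : Set ℕ) ∉
      ((fun S : Finset ℕ => liftN n (domN S)) '' {S | Sparse n S ∧ S.Nonempty}) := by
    rintro ⟨S, ⟨hS, hne⟩, h⟩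
    exact hne1 S hS hne h
  rw [Set.ncard_insert_of_notMem hnm1 (Set.Finite.insert _ hEfin),
    Set.ncard_insert_of_notMem hnm2 hEfin]
  have hinj : Set.InjOn (fun S : Finset ℕ => liftN n (domN S))
      {S | Sparse n S ∧ S.Nonempty} := by
    rintro S1 ⟨hS1, -⟩ S2 ⟨hS2, -⟩ h
    have hd : domN S1 = domN S2 := by
      have h' := congrArg S2N h
      rwa [S2N_liftN (domN_lt hS1), S2N_liftN (domN_lt hS2)] at h'
    exact Finset.Subset.antisymm (domN_inj hS1 hS2 hd) (domN_inj hS2 hS1 hd.symm)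
  rw [Set.ncard_image_of_injOn hinj, hgood, Set.ncard_coe_finset]
  have hkey : good.card + 1 = cnt (n - 3) := by
    have hsplit : (Finset.Icc 1 (n - 3)).powerset.filter gap3 = insert ∅ good := by
      ext S
      simp only [Finset.mem_insert, Finset.mem_filter, Finset.mem_powerset, hgooddef]
      constructor
      · rintro ⟨hsub, hg⟩
        by_cases hSe : S = ∅
        · exact Or.inl hSe
        · refine Or.inr ⟨fun i hi => ?_, ⟨fun i hi => ?_, hg⟩,
            Finset.nonempty_iff_ne_empty.2 hSe⟩
          · have := hsub hi; simp only [Finset.mem_Icc] at this ⊢; omega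
          · have := hsub hi; simp only [Finset.mem_Icc] at this; omega
      · rintro (rfl | ⟨hsub, ⟨hbd, hg⟩, hne⟩)
        · exact ⟨Finset.empty_subset _, fun i hi => absurd hi (Finset.notMem_empty i)⟩
        · refine ⟨fun i hi => ?_, hg⟩
          have := hbd i hi; simp only [Finset.mem_Icc]; omega
    have hniE : (∅ : Finset ℕ) ∉ good := by
      simp only [hgooddef, Finset.mem_filter]
      rintro ⟨-, -, hne⟩
      exact absurd hne (by simp)
    rw [cnt, hsplit, Finset.card_insert_of_notMem hniE]
  have hfv := cnt_eq_f f h1 h2 h3 hrec (n - 3)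
  rw [show n - 3 + 1 = n - 2 by omega] at hfv
  omega
end

section
/- Let A be a locally minimal defensive alliance of the path P_n. Then A contains no three consecutive vertices; that is, there is no index i with 1 ≤ i ≤ n−2 such that v_i, v_{i+1}, v_{i+2} ∈ A. Equivalently, every connected component of the subgraph of P_n induced by A has at most 2 vertices. -/
/-- A locally minimal defensive alliance of the path `P_n`
contains no three consecutive vertices. -/
theorem locallyMinimalDA_path_no_three_consecutive (n : ℕ) (A : Set (Fin n))
    (hA : IsLocallyMinimalDA (SimpleGraph.pathGraph n) A) :
    ∀ i j l : Fin n, (j : ℕ) = (i : ℕ) + 1 → (l : ℕ) = (i : ℕ) + 2 →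
      ¬ (i ∈ A ∧ j ∈ A ∧ l ∈ A) := by
  classical
  rintro i j l hj hl ⟨hiA, hjA, hlA⟩
  obtain ⟨-, hDA, hmin⟩ := hA
  have hn : (i : ℕ) + 2 < n := hl ▸ l.isLt
  -- Q m : the run from m to i is all in A
  set Q : ℕ → Prop := fun m => ∀ k (hk : k < n), m ≤ k → k ≤ (i : ℕ) →
      (⟨k, hk⟩ : Fin n) ∈ A with hQ
  have hQi : Q (i : ℕ) := by
    intro k hk h1 h2
    have : k = (i : ℕ) := le_antisymm h2 h1
    subst this
    simpa using hiA
  have hex : ∃ m, Q m := ⟨_, hQi⟩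
  set a := Nat.find hex with ha
  have hQa : Q a := Nat.find_spec hex
  have hai : a ≤ (i : ℕ) := Nat.find_le hQi
  have han : a < n := by omega
  set va : Fin n := ⟨a, han⟩ with hva
  -- everything from a to i+2 is in A
  have hrun : ∀ k (hk : k < n), a ≤ k → k ≤ (i : ℕ) + 2 → (⟨k, hk⟩ : Fin n) ∈ A := by
    intro k hk h1 h2
    rcases lt_or_ge k ((i : ℕ) + 1) with h | h
    · exact hQa k hk h1 (by omega)
    rcases lt_or_ge k ((i : ℕ) + 2) with h' | h'
    · have : (⟨k, hk⟩ : Fin n) = j := Fin.ext (by simp; omega)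
      rw [this]; exact hjA
    · have : (⟨k, hk⟩ : Fin n) = l := Fin.ext (by simp; omega)
      rw [this]; exact hlA
  -- the vertex just before a is not in A
  have hprev : ∀ u : Fin n, (u : ℕ) + 1 = a → u ∉ A := by
    intro u hu huA
    have hQu : Q (u : ℕ) := by
      intro k hk h1 h2
      rcases lt_or_ge k a with h | h
      · have : k = (u : ℕ) := by omega
        subst this
        simpa using huA
      · exact hQa k hk h h2
    have := Nat.find_le (h := hex) hQu
    omega
  have hvaA : va ∈ A := hrun a han le_rfl (by omega)
  refine hmin va hvaA ⟨⟨⟨a + 1, by omega⟩, hrun _ _ (by omega) (by omega),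
    by simp [hva, Fin.ext_iff]⟩, ?_⟩
  intro v hv
  obtain ⟨hvA, hvne⟩ := hv
  simp only [Set.mem_singleton_iff] at hvne
  by_cases h1 : (v : ℕ) + 1 = a
  · exact absurd hvA (hprev v h1)
  by_cases h2 : (v : ℕ) = a + 1
  · -- special case: v is right neighbor of removed vertex
    have hvc : a + 2 < n := by omega
    set vc : Fin n := ⟨a + 2, hvc⟩ with hvcd
    have hvcA : vc ∈ A \ {va} := by
      refine ⟨hrun _ _ (by omega) (by omega), by simp [hvcd, hva, Fin.ext_iff]⟩
    have hadjc : (SimpleGraph.pathGraph n).Adj v vc := by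
      rw [SimpleGraph.pathGraph_adj]; left; simp [hvcd]; omega
    have hge : 1 ≤ degIn (SimpleGraph.pathGraph n) (A \ {va}) v := by
      have hsub : {vc} ⊆ {u | u ∈ A \ {va} ∧ (SimpleGraph.pathGraph n).Adj v u} := by
        intro u hu
        simp only [Set.mem_singleton_iff] at hu
        subst hu
        exact ⟨hvcA, hadjc⟩
      calc 1 = ({vc} : Set (Fin n)).ncard := (Set.ncard_singleton vc).symm
        _ ≤ _ := Set.ncard_le_ncard hsub (Set.toFinite _)
    have hle : degIn (SimpleGraph.pathGraph n) (A \ {va})ᶜ v ≤ 1 := by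
      have hsub : {u | u ∈ (A \ {va})ᶜ ∧ (SimpleGraph.pathGraph n).Adj v u} ⊆ {va} := by
        rintro u ⟨huc, hadj⟩
        rw [SimpleGraph.pathGraph_adj] at hadj
        rcases hadj with h | h
        · exfalso
          have : u = vc := Fin.ext (by simp [hvcd]; omega)
          subst this
          exact huc hvcA
        · have : u = va := Fin.ext (by simp [hva]; omega)
          simpa using this
      calc degIn (SimpleGraph.pathGraph n) (A \ {va})ᶜ v
          ≤ ({va} : Set (Fin n)).ncard := Set.ncard_le_ncard hsub (Set.toFinite _)
        _ = 1 := Set.ncard_singleton va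
    omega
  · -- v is not adjacent to va
    have hnadj : ∀ u : Fin n, (SimpleGraph.pathGraph n).Adj v u → u ≠ va := by
      intro u hadj hu
      subst hu
      rw [SimpleGraph.pathGraph_adj] at hadj
      simp [hva] at hadj
      omega
    have e1 : {u | u ∈ A \ {va} ∧ (SimpleGraph.pathGraph n).Adj v u}
        = {u | u ∈ A ∧ (SimpleGraph.pathGraph n).Adj v u} := by
      ext u
      simp only [Set.mem_setOf_eq, Set.mem_diff, Set.mem_singleton_iff]
      exact ⟨fun ⟨⟨h, _⟩, h2⟩ => ⟨h, h2⟩, fun ⟨h, h2⟩ => ⟨⟨h, hnadj u h2⟩, h2⟩⟩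
    have e2 : {u | u ∈ (A \ {va})ᶜ ∧ (SimpleGraph.pathGraph n).Adj v u}
        = {u | u ∈ Aᶜ ∧ (SimpleGraph.pathGraph n).Adj v u} := by
      ext u
      simp only [Set.mem_setOf_eq, Set.mem_compl_iff, Set.mem_diff,
        Set.mem_singleton_iff, not_and, not_not]
      constructor
      · rintro ⟨h, h2⟩
        refine ⟨fun huA => absurd (h huA) (hnadj u h2), h2⟩
      · rintro ⟨h, h2⟩
        exact ⟨fun huA => absurd huA h, h2⟩
    have := hDA v hvA
    unfold degIn at this ⊢
    rw [e1, e2]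
    exact this
end

section
/- Let n ≥ 2 and let A be a locally minimal defensive alliance of the path P_n. If v_1 ∈ A then A = {v_1}, and if v_n ∈ A then A = {v_n}. -/
section Aux

open SimpleGraph

lemma degIn_diff_of_not_adj {V : Type*} (G : SimpleGraph V) (A : Set V) (v w : V)
    (h : ¬ G.Adj w v) : degIn G (A \ {v}) w = degIn G A w := by
  unfold degIn
  congr 1
  ext u
  simp only [Set.mem_setOf_eq, Set.mem_diff, Set.mem_singleton_iff]
  constructor
  · rintro ⟨⟨hu, _⟩, ha⟩; exact ⟨hu, ha⟩
  · rintro ⟨hu, ha⟩; exact ⟨⟨hu, fun e => h (e ▸ ha)⟩, ha⟩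

lemma degIn_compl_diff_of_not_adj {V : Type*} (G : SimpleGraph V) (A : Set V) (v w : V)
    (h : ¬ G.Adj w v) : degIn G (A \ {v})ᶜ w = degIn G Aᶜ w := by
  unfold degIn
  congr 1
  ext u
  simp only [Set.mem_setOf_eq, Set.mem_compl_iff, Set.mem_diff, Set.mem_singleton_iff,
    not_and, not_not]
  constructor
  · rintro ⟨hu, ha⟩
    refine ⟨fun huA => ?_, ha⟩
    exact absurd ((hu huA) ▸ ha) h
  · rintro ⟨hu, ha⟩
    exact ⟨fun huA => absurd huA hu, ha⟩

lemma one_le_degIn {V : Type*} [Finite V] (G : SimpleGraph V) (X : Set V) (v u : V)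
    (hu : u ∈ X) (ha : G.Adj v u) : 1 ≤ degIn G X v :=
  (Set.ncard_pos (Set.toFinite _)).mpr ⟨u, hu, ha⟩

lemma degIn_path_le_two {n : ℕ} (X : Set (Fin n)) (v : Fin n) :
    degIn (SimpleGraph.pathGraph n) X v ≤ 2 := by
  classical
  set a : Fin n := if h : v.val + 1 < n then ⟨v.val + 1, h⟩ else v with ha
  set b : Fin n := if h : 1 ≤ v.val then ⟨v.val - 1, by omega⟩ else v with hb
  have hsub : {u | u ∈ X ∧ (SimpleGraph.pathGraph n).Adj v u} ⊆ {a, b} := by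
    rintro u ⟨_, hadj⟩
    rw [SimpleGraph.pathGraph_adj] at hadj
    rcases hadj with h1 | h1
    · left
      have hlt : v.val + 1 < n := h1 ▸ u.isLt
      have haa : a = ⟨v.val + 1, hlt⟩ := by rw [ha, dif_pos hlt]
      rw [haa]
      exact Fin.ext (show u.val = v.val + 1 by omega)
    · right
      have h2 : 1 ≤ v.val := by omega
      have hbb : b = ⟨v.val - 1, by omega⟩ := by rw [hb, dif_pos h2]
      rw [hbb]
      exact Fin.ext (show u.val = v.val - 1 by omega)
  calc degIn (SimpleGraph.pathGraph n) X v ≤ ({a, b} : Set (Fin n)).ncard :=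
        Set.ncard_le_ncard hsub (Set.toFinite _)
    _ ≤ ({b} : Set (Fin n)).ncard + 1 := Set.ncard_insert_le _ _
    _ = 2 := by rw [Set.ncard_singleton]

lemma degIn_path_zero_le_one {n : ℕ} (hn : 2 ≤ n) (X : Set (Fin n)) (w : Fin n)
    (hw0 : w.val = 0) : degIn (SimpleGraph.pathGraph n) X w ≤ 1 := by
  have hsub : {u | u ∈ X ∧ (SimpleGraph.pathGraph n).Adj w u}
      ⊆ {(⟨1, by omega⟩ : Fin n)} := by
    rintro u ⟨_, hadj⟩
    rw [SimpleGraph.pathGraph_adj] at hadj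
    exact Fin.ext (show u.val = 1 by omega)
  calc degIn (SimpleGraph.pathGraph n) X w
      ≤ ({(⟨1, by omega⟩ : Fin n)} : Set (Fin n)).ncard :=
        Set.ncard_le_ncard hsub (Set.toFinite _)
    _ = 1 := Set.ncard_singleton _

lemma endpoint_case (n : ℕ) (hn : 2 ≤ n) (A : Set (Fin n))
    (hA : IsLocallyMinimalDA (SimpleGraph.pathGraph n) A)
    (h0 : (⟨0, Nat.lt_of_lt_of_le Nat.two_pos hn⟩ : Fin n) ∈ A) :
    A = {(⟨0, Nat.lt_of_lt_of_le Nat.two_pos hn⟩ : Fin n)} := by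
  classical
  obtain ⟨-, hda, hmin⟩ := hA
  by_contra hne
  have hA'ne : (A \ {(⟨0, by omega⟩ : Fin n)}).Nonempty := by
    rcases Set.eq_empty_or_nonempty (A \ {(⟨0, by omega⟩ : Fin n)}) with he | h
    · exact absurd (Set.eq_singleton_iff_unique_mem.mpr ⟨h0, fun x hx => by
        by_contra hxne
        exact Set.eq_empty_iff_forall_notMem.mp he x ⟨hx, hxne⟩⟩) hne
    · exact h
  have hQex : ∃ i, n ≤ i + 1 ∨ ∃ h : i + 1 < n, (⟨i + 1, h⟩ : Fin n) ∉ A :=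
    ⟨n - 1, Or.inl (by omega)⟩
  set k := Nat.find hQex with hkdef
  have hk := Nat.find_spec hQex
  rw [← hkdef] at hk
  have hkmin : ∀ j < k, ¬ (n ≤ j + 1 ∨ ∃ h : j + 1 < n, (⟨j + 1, h⟩ : Fin n) ∉ A) :=
    fun j hj => Nat.find_min hQex hj
  have hkle : k ≤ n - 1 := Nat.find_min' hQex (Or.inl (by omega))
  have hklt : k < n := by omega
  clear_value k
  have hpre : ∀ j, j ≤ k → ∀ hjn : j < n, (⟨j, hjn⟩ : Fin n) ∈ A := by
    intro j hj hjn
    cases j with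
    | zero => exact h0
    | succ m =>
      have hm := hkmin m (by omega)
      push_neg at hm
      exact hm.2 (by omega)
  rcases Nat.eq_zero_or_pos k with hk0 | hk1
  · -- k = 0 : remove v₁ itself
    have hcontra := hmin ⟨0, by omega⟩ h0
    rw [not_and] at hcontra
    have hnda := hcontra hA'ne
    unfold IsDefensiveAlliance at hnda
    push_neg at hnda
    obtain ⟨w, hw, hwlt⟩ := hnda
    rcases Classical.em ((SimpleGraph.pathGraph n).Adj w ⟨0, by omega⟩) with hadj | hadj
    · rw [SimpleGraph.pathGraph_adj] at hadj
      have hadj' : w.val + 1 = 0 ∨ 0 + 1 = w.val := hadj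
      have hw1 : w.val = 1 := by omega
      rcases hk with h1 | ⟨h1, h2⟩
      · omega
      · refine h2 ?_
        rw [show (⟨k + 1, h1⟩ : Fin n) = w from Fin.ext (show k + 1 = w.val by omega)]
        exact hw.1
    · rw [degIn_diff_of_not_adj _ _ _ _ hadj, degIn_compl_diff_of_not_adj _ _ _ _ hadj] at hwlt
      exact absurd (hda w hw.1) (by omega)
  · -- k ≥ 1 : remove ⟨k⟩
    set v : Fin n := ⟨k, hklt⟩ with hv
    have hvA : v ∈ A := hpre k le_rfl hklt
    have hne0v : (⟨0, by omega⟩ : Fin n) ≠ v := by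
      intro hEq
      have h00 : (0 : ℕ) = k := congrArg Fin.val hEq
      omega
    have hA2ne : (A \ {v}).Nonempty := ⟨⟨0, by omega⟩, h0, hne0v⟩
    have hcontra := hmin v hvA
    rw [not_and] at hcontra
    have hnda := hcontra hA2ne
    unfold IsDefensiveAlliance at hnda
    push_neg at hnda
    obtain ⟨w, hw, hwlt⟩ := hnda
    rcases Classical.em ((SimpleGraph.pathGraph n).Adj w v) with hadj | hadj
    · rw [SimpleGraph.pathGraph_adj] at hadj
      have hadj' : w.val + 1 = k ∨ k + 1 = w.val := hadj
      rcases hadj' with h1 | h1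
      · -- w = ⟨k-1⟩
        rcases Nat.eq_or_lt_of_le hk1 with hk1' | hk2
        · -- k = 1 : w is the endpoint v₁
          have hle := degIn_path_zero_le_one hn (A \ {v})ᶜ w (show w.val = 0 by omega)
          omega
        · -- k ≥ 2 : w is internal with neighbor ⟨k-2⟩ ∈ A \ {v}
          have hu : (⟨k - 2, by omega⟩ : Fin n) ∈ A := hpre (k - 2) (by omega) (by omega)
          have hunev : (⟨k - 2, by omega⟩ : Fin n) ≠ v := by
            intro hEq
            have h00 : k - 2 = k := congrArg Fin.val hEq
            omega
          have hu' : (⟨k - 2, by omega⟩ : Fin n) ∈ A \ {v} := ⟨hu, hunev⟩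
          have hadj2 : (SimpleGraph.pathGraph n).Adj w ⟨k - 2, by omega⟩ := by
            rw [SimpleGraph.pathGraph_adj]
            right
            show k - 2 + 1 = w.val
            omega
          have h1le := one_le_degIn _ _ _ _ hu' hadj2
          have h2le := degIn_path_le_two (A \ {v})ᶜ w
          omega
      · -- w = ⟨k+1⟩, contradicting the choice of k
        have hkn : k + 1 < n := by have := w.isLt; omega
        rcases hk with hh | ⟨hh, hh2⟩
        · omega
        · refine hh2 ?_
          rw [show (⟨k + 1, hh⟩ : Fin n) = w from Fin.ext (show k + 1 = w.val by omega)]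
          exact hw.1
    · rw [degIn_diff_of_not_adj _ _ _ _ hadj, degIn_compl_diff_of_not_adj _ _ _ _ hadj] at hwlt
      exact absurd (hda w hw.1) (by omega)

lemma rev_adj {n : ℕ} (u v : Fin n) :
    (SimpleGraph.pathGraph n).Adj u.rev v.rev ↔ (SimpleGraph.pathGraph n).Adj u v := by
  have hu := u.isLt
  have hv := v.isLt
  rw [SimpleGraph.pathGraph_adj, SimpleGraph.pathGraph_adj, Fin.val_rev, Fin.val_rev]
  omega

lemma degIn_rev {n : ℕ} (X : Set (Fin n)) (v : Fin n) :
    degIn (SimpleGraph.pathGraph n) (Fin.rev '' X) v.rev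
      = degIn (SimpleGraph.pathGraph n) X v := by
  unfold degIn
  rw [show {u | u ∈ Fin.rev '' X ∧ (SimpleGraph.pathGraph n).Adj v.rev u}
      = Fin.rev '' {u | u ∈ X ∧ (SimpleGraph.pathGraph n).Adj v u} from ?_,
    Set.ncard_image_of_injective _ Fin.rev_injective]
  ext u
  simp only [Set.mem_image, Set.mem_setOf_eq]
  constructor
  · rintro ⟨⟨x, hx, rfl⟩, hadj⟩
    exact ⟨x, ⟨hx, (rev_adj _ _).mp hadj⟩, rfl⟩
  · rintro ⟨x, ⟨hx, hadj⟩, rfl⟩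
    exact ⟨⟨x, hx, rfl⟩, (rev_adj _ _).mpr hadj⟩

lemma degIn_rev_compl {n : ℕ} (X : Set (Fin n)) (v : Fin n) :
    degIn (SimpleGraph.pathGraph n) (Fin.rev '' X)ᶜ v.rev
      = degIn (SimpleGraph.pathGraph n) Xᶜ v := by
  rw [← Set.image_compl_eq (Function.Involutive.bijective Fin.rev_rev)]
  exact degIn_rev Xᶜ v

lemma lmda_rev {n : ℕ} (A : Set (Fin n))
    (h : IsLocallyMinimalDA (SimpleGraph.pathGraph n) A) :
    IsLocallyMinimalDA (SimpleGraph.pathGraph n) (Fin.rev '' A) := by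
  obtain ⟨hne, hda, hmin⟩ := h
  refine ⟨hne.image _, ?_, ?_⟩
  · rintro v ⟨u, hu, rfl⟩
    rw [degIn_rev, degIn_rev_compl]
    exact hda u hu
  · rintro v ⟨u, hu, rfl⟩ ⟨h'ne, h'da⟩
    have hdiff : Fin.rev '' A \ {u.rev} = Fin.rev '' (A \ {u}) := by
      rw [Set.image_diff Fin.rev_injective, Set.image_singleton]
    rw [hdiff] at h'ne h'da
    refine hmin u hu ⟨Set.image_nonempty.mp h'ne, ?_⟩
    intro w hw
    have := h'da w.rev ⟨w, hw, rfl⟩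
    rwa [degIn_rev, degIn_rev_compl] at this

end Aux

/-- For `n ≥ 2`, if a locally minimal defensive alliance `A` of
the path `P_n` contains the endpoint `v_1` then `A = {v_1}`, and if it
contains `v_n` then `A = {v_n}`. -/
theorem locallyMinimalDA_path_endpoints (n : ℕ) (hn : 2 ≤ n) (A : Set (Fin n))
    (hA : IsLocallyMinimalDA (SimpleGraph.pathGraph n) A) :
    ((⟨0, by omega⟩ : Fin n) ∈ A → A = {(⟨0, by omega⟩ : Fin n)}) ∧
    ((⟨n - 1, by omega⟩ : Fin n) ∈ A → A = {(⟨n - 1, by omega⟩ : Fin n)}) := by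
  constructor
  · exact endpoint_case n hn A hA
  · intro hlast
    have hrev : Fin.rev (⟨n - 1, by omega⟩ : Fin n) = ⟨0, by omega⟩ := by
      apply Fin.ext
      rw [Fin.val_rev]
      show n - (n - 1 + 1) = 0
      omega
    have h0 : (⟨0, by omega⟩ : Fin n) ∈ Fin.rev '' A := ⟨_, hlast, hrev⟩
    have hsing := endpoint_case n hn (Fin.rev '' A) (lmda_rev A hA) h0
    have hAeq : A = Fin.rev '' (Fin.rev '' A) := by
      rw [← Set.image_comp]
      simp [Function.comp, Fin.rev_rev]
    have hrev0 : Fin.rev (⟨0, by omega⟩ : Fin n) = ⟨n - 1, by omega⟩ := by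
      apply Fin.ext
      rw [Fin.val_rev]
    rw [hAeq, hsing, Set.image_singleton, hrev0]
end

section
/- Let A be a locally minimal defensive alliance of the path P_n with v_1 ∉ A and v_n ∉ A. Then every vertex of A has exactly one neighbor in A; that is, deg_A(v) = 1 for all v ∈ A. -/
open scoped Classical

lemma degIn_congr {V : Type*} (G : SimpleGraph V) {X Y : Set V} (u : V)
    (h : ∀ x, G.Adj u x → (x ∈ X ↔ x ∈ Y)) : degIn G X u = degIn G Y u := by
  unfold degIn
  congr 1
  ext x
  simp only [Set.mem_setOf_eq]
  exact and_congr_left fun ha => h x ha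

lemma degIn_interior {n : ℕ} (X : Set (Fin n)) (v : Fin n) (h0 : 0 < v.val)
    (h1 : v.val + 1 < n) :
    degIn (SimpleGraph.pathGraph n) X v =
      (if (⟨v.val - 1, by omega⟩ : Fin n) ∈ X then 1 else 0)
      + (if (⟨v.val + 1, h1⟩ : Fin n) ∈ X then 1 else 0) := by
  set p : Fin n := ⟨v.val - 1, by omega⟩ with hpdef
  set s : Fin n := ⟨v.val + 1, h1⟩ with hsdef
  have hps : p ≠ s := by
    intro h
    have h' := congrArg Fin.val h
    simp only [hpdef, hsdef] at h'
    omega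
  have hset : {u | u ∈ X ∧ (SimpleGraph.pathGraph n).Adj v u}
      = {u | u ∈ X ∧ (u = p ∨ u = s)} := by
    ext u
    simp only [Set.mem_setOf_eq, SimpleGraph.pathGraph_adj, Fin.ext_iff, hpdef, hsdef]
    constructor
    · rintro ⟨hx, h⟩; exact ⟨hx, by omega⟩
    · rintro ⟨hx, h⟩; exact ⟨hx, by omega⟩
  unfold degIn
  rw [hset]
  by_cases hp : p ∈ X <;> by_cases hs : s ∈ X
  · have : {u | u ∈ X ∧ (u = p ∨ u = s)} = {p, s} := by
      ext u
      constructor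
      · rintro ⟨_, h⟩; exact h
      · rintro (rfl | rfl)
        · exact ⟨hp, Or.inl rfl⟩
        · exact ⟨hs, Or.inr rfl⟩
    rw [this, Set.ncard_pair hps, if_pos hp, if_pos hs]
  · have : {u | u ∈ X ∧ (u = p ∨ u = s)} = {p} := by
      ext u
      constructor
      · rintro ⟨hx, rfl | rfl⟩
        · rfl
        · exact absurd hx hs
      · rintro rfl; exact ⟨hp, Or.inl rfl⟩
    rw [this, Set.ncard_singleton, if_pos hp, if_neg hs]
  · have : {u | u ∈ X ∧ (u = p ∨ u = s)} = {s} := by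
      ext u
      constructor
      · rintro ⟨hx, rfl | rfl⟩
        · exact absurd hx hp
        · rfl
      · rintro rfl; exact ⟨hs, Or.inr rfl⟩
    rw [this, Set.ncard_singleton, if_neg hp, if_pos hs]
  · have : {u | u ∈ X ∧ (u = p ∨ u = s)} = ∅ := by
      ext u
      simp only [Set.mem_empty_iff_false, iff_false]
      rintro ⟨hx, rfl | rfl⟩
      · exact hp hx
      · exact hs hx
    rw [this, Set.ncard_empty, if_neg hp, if_neg hs]

/-- If a locally minimal defensive alliance `A` of the path
`P_n` contains neither endpoint, then every vertex of `A` has exactly one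
neighbor in `A`. -/
theorem locallyMinimalDA_path_degree_one (n : ℕ) (hn : 1 ≤ n) (A : Set (Fin n))
    (hA : IsLocallyMinimalDA (SimpleGraph.pathGraph n) A)
    (h1 : (⟨0, by omega⟩ : Fin n) ∉ A) (h2 : (⟨n - 1, by omega⟩ : Fin n) ∉ A) :
    ∀ v ∈ A, degIn (SimpleGraph.pathGraph n) A v = 1 := by
  classical
  obtain ⟨hne, hDA, hloc⟩ := hA
  have hint : ∀ u ∈ A, 0 < u.val ∧ u.val + 1 < n := by
    intro u hu
    have hun : u.val < n := u.isLt
    constructor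
    · by_contra h
      have : u = (⟨0, by omega⟩ : Fin n) := by
        apply Fin.ext; simp; omega
      exact h1 (this ▸ hu)
    · by_contra h
      have : u = (⟨n - 1, by omega⟩ : Fin n) := by
        apply Fin.ext; simp; omega
      exact h2 (this ▸ hu)
  intro v hv
  obtain ⟨hv0, hv1⟩ := hint v hv
  have hdeg := degIn_interior A v hv0 hv1
  have hdegc := degIn_interior Aᶜ v hv0 hv1
  have hall := hDA v hv
  set p : Fin n := ⟨v.val - 1, by omega⟩ with hpdef
  set s : Fin n := ⟨v.val + 1, hv1⟩ with hsdef
  by_cases hp : p ∈ A <;> by_cases hs : s ∈ A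
  · -- Both neighbors in A: contradiction with local minimality.
    exfalso
    set P : ℕ → Prop := fun k => ∃ h : k < n, k < v.val ∧ (⟨k, h⟩ : Fin n) ∉ A with hPdef
    have hP0 : P 0 := ⟨by omega, hv0, h1⟩
    set t : ℕ := Nat.findGreatest P v.val with htdef
    obtain ⟨htn, htv, htA⟩ := Nat.findGreatest_spec (Nat.zero_le _) hP0
    have hmax : ∀ k (hk : k < n), t < k → k < v.val → (⟨k, hk⟩ : Fin n) ∈ A := by
      intro k hk h1k h2k
      by_contra h
      exact Nat.findGreatest_is_greatest h1k (le_of_lt h2k) ⟨hk, h2k, h⟩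
    have hblk : ∀ k (hk : k < n), t < k → k ≤ v.val → (⟨k, hk⟩ : Fin n) ∈ A := by
      intro k hk h1k h2k
      rcases lt_or_eq_of_le h2k with h | h
      · exact hmax k hk h1k h
      · have : (⟨k, hk⟩ : Fin n) = v := Fin.ext h
        exact this ▸ hv
    have htv2 : t + 1 < v.val := by
      rcases Nat.lt_or_ge (t + 1) v.val with h | h
      · exact h
      · exfalso
        have hpe : (⟨t, htn⟩ : Fin n) = p := Fin.ext (show t = v.val - 1 by omega)
        exact htA (hpe ▸ hp)
    set w : Fin n := ⟨t + 1, by omega⟩ with hwdef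
    have hwA : w ∈ A := hmax (t + 1) (by omega) (lt_add_one t) htv2
    have hw1A : (⟨t + 2, by omega⟩ : Fin n) ∈ A := hblk (t + 2) (by omega) (by omega) (by omega)
    refine hloc w hwA ⟨⟨v, hv, ?_⟩, ?_⟩
    · simp only [Set.mem_singleton_iff, hwdef, Fin.ext_iff]
      omega
    · -- A \ {w} is a defensive alliance
      intro u hu
      obtain ⟨huA, hune⟩ := hu
      have hunev : u.val ≠ t + 1 := by
        intro h
        exact hune (by simp only [Set.mem_singleton_iff, hwdef, Fin.ext_iff]; exact h)
      obtain ⟨hu0, hu1⟩ := hint u huA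
      have hut : u.val ≠ t := by
        intro h
        have : u = (⟨t, htn⟩ : Fin n) := Fin.ext h
        exact htA (this ▸ huA)
      by_cases hcase : u.val = t + 2
      · -- u = w + 1
        have hL : (⟨u.val - 1, by omega⟩ : Fin n) = w := Fin.ext (by simp [hwdef]; omega)
        have hLnotin : (⟨u.val - 1, by omega⟩ : Fin n) ∉ A \ {w} := by
          rw [hL]; simp
        have hRA : (⟨u.val + 1, hu1⟩ : Fin n) ∈ A := by
          rcases Nat.lt_or_ge v.val (u.val + 1) with h | h
          · -- then v.val = t + 2 = u.val, so right neighbor is s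
            have hve : v.val = u.val := by omega
            have : (⟨u.val + 1, hu1⟩ : Fin n) = s := Fin.ext (by simp [hsdef]; omega)
            exact this ▸ hs
          · exact hblk (u.val + 1) hu1 (by omega) h
        have hRin : (⟨u.val + 1, hu1⟩ : Fin n) ∈ A \ {w} := by
          refine ⟨hRA, ?_⟩
          simp only [Set.mem_singleton_iff, hwdef, Fin.ext_iff]
          omega
        rw [degIn_interior (A \ {w}) u hu0 hu1, degIn_interior (A \ {w})ᶜ u hu0 hu1]
        rw [if_neg hLnotin, if_pos hRin]
        simp only [Set.mem_compl_iff]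
        rw [if_pos hLnotin, if_neg (fun h => h hRin)]
        omega
      · -- w is not a neighbor of u
        have e1 : degIn (SimpleGraph.pathGraph n) (A \ {w}) u
            = degIn (SimpleGraph.pathGraph n) A u := by
          apply degIn_congr
          intro x hx
          rw [SimpleGraph.pathGraph_adj] at hx
          have hxw : x ≠ w := by
            intro h
            rw [h] at hx
            simp only [hwdef] at hx
            omega
          simp [Set.mem_diff, Set.mem_singleton_iff, hxw]
        have e2 : degIn (SimpleGraph.pathGraph n) (A \ {w})ᶜ u
            = degIn (SimpleGraph.pathGraph n) Aᶜ u := by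
          apply degIn_congr
          intro x hx
          rw [SimpleGraph.pathGraph_adj] at hx
          have hxw : x ≠ w := by
            intro h
            rw [h] at hx
            simp only [hwdef] at hx
            omega
          simp [Set.mem_diff, Set.mem_singleton_iff, hxw]
        rw [e1, e2]
        exact hDA u huA
  · rw [hdeg, if_pos hp, if_neg hs]
  · rw [hdeg, if_neg hp, if_pos hs]
  · exfalso
    rw [hdeg, hdegc, if_neg hp, if_neg hs] at hall
    simp only [Set.mem_compl_iff] at hall
    rw [if_pos hp, if_pos hs] at hall
    omega
end
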